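/- arXiv:1904.12432 — 5 statements merged into one kernel-verified Lean document; each statement's English description precedes it below -/
import Mathlib

section
/- Let N be a rooted binary phylogenetic X-network and let S be a subset of A(N). Then the arc-induced subgraph N[S] is a support tree of N if and only if S is an admissible arc-set of N. -/
/-- A finite simple directed graph, given by a finite vertex set and a finite
set of arcs (ordered pairs of vertices) whose endpoints lie in the vertex set. -/
structure Dgraph (V : Type*) where
  verts : Finset V
  arcs : Finset (V × V)
  tail_mem : ∀ a ∈ arcs, a.1 ∈ verts
  head_mem : ∀ a ∈ arcs, a.2 ∈ verts

namespace Dgraph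

variable {V : Type*}

/-- The in-degree of a vertex. -/
def indeg [DecidableEq V] (G : Dgraph V) (v : V) : ℕ :=
  (G.arcs.filter fun a => a.2 = v).card

/-- The out-degree of a vertex. -/
def outdeg [DecidableEq V] (G : Dgraph V) (v : V) : ℕ :=
  (G.arcs.filter fun a => a.1 = v).card

/-- A leaf is a vertex of in-degree 1 and out-degree 0. -/
def IsLeaf [DecidableEq V] (G : Dgraph V) (v : V) : Prop :=
  v ∈ G.verts ∧ G.indeg v = 1 ∧ G.outdeg v = 0

/-- A directed graph is acyclic if it has no directed cycle. -/
def Acyclic (G : Dgraph V) : Prop :=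
  ∀ v : V, ¬ Relation.TransGen (fun u w => (u, w) ∈ G.arcs) v v

def IsSubgraph (H G : Dgraph V) : Prop :=
  H.verts ⊆ G.verts ∧ H.arcs ⊆ G.arcs

/-- The subgraph induced by a set of arcs: its vertices are all endpoints of those arcs. -/
def ofArcs [DecidableEq V] (A : Finset (V × V)) : Dgraph V where
  verts := A.image Prod.fst ∪ A.image Prod.snd
  arcs := A
  tail_mem := fun a ha => Finset.mem_union_left _ (Finset.mem_image_of_mem _ ha)
  head_mem := fun a ha => Finset.mem_union_right _ (Finset.mem_image_of_mem _ ha)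

/-- A rooted binary phylogenetic `X`-network: a finite simple directed acyclic graph
with a unique root of in-degree 0 and out-degree 1 or 2, whose leaf set is the
nonempty finite set `X`, and all of whose other vertices have
`{in-degree, out-degree} = {1, 2}`. -/
def IsRBPN [DecidableEq V] (N : Dgraph V) (X : Finset V) : Prop :=
  N.Acyclic ∧ X.Nonempty ∧ X ⊆ N.verts ∧
  ∃ ρ ∈ N.verts,
    N.indeg ρ = 0 ∧ (N.outdeg ρ = 1 ∨ N.outdeg ρ = 2) ∧
    (∀ v ∈ N.verts, N.indeg v = 0 → v = ρ) ∧
    (∀ v ∈ N.verts, (N.IsLeaf v ↔ v ∈ X)) ∧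
    (∀ v ∈ N.verts, v ∉ X → v ≠ ρ →
      (N.indeg v = 1 ∧ N.outdeg v = 2) ∨ (N.indeg v = 2 ∧ N.outdeg v = 1))

/-- A rooted binary phylogenetic `X`-tree: a rooted binary phylogenetic `X`-network
with no vertex of in-degree 2. -/
def IsRBPT [DecidableEq V] (T : Dgraph V) (X : Finset V) : Prop :=
  IsRBPN T X ∧ ∀ v ∈ T.verts, T.indeg v ≠ 2

/-- `H` is obtained from `G` by inserting one new (subdividing) vertex into one arc. -/
def SubdivideArc [DecidableEq V] (G H : Dgraph V) : Prop :=
  ∃ u v w : V, (u, v) ∈ G.arcs ∧ w ∉ G.verts ∧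
    H.verts = insert w G.verts ∧
    H.arcs = insert (u, w) (insert (w, v) (G.arcs.erase (u, v)))

/-- `IsSubdivisionOf T τ` : `τ` is obtained from `T` by inserting zero or more
subdividing vertices into arcs. -/
inductive IsSubdivisionOf [DecidableEq V] : Dgraph V → Dgraph V → Prop
  | refl (G : Dgraph V) : IsSubdivisionOf G G
  | step {G H K : Dgraph V} : IsSubdivisionOf G H → SubdivideArc H K → IsSubdivisionOf G K

/-- A support tree of `N`: a spanning subgraph of `N` that can be obtained from some
rooted binary phylogenetic `X`-tree by inserting zero or more vertices into each arc. -/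
def IsSupportTree [DecidableEq V] (N : Dgraph V) (X : Finset V) (τ : Dgraph V) : Prop :=
  τ.verts = N.verts ∧ τ.arcs ⊆ N.arcs ∧
  ∃ T : Dgraph V, IsRBPT T X ∧ IsSubdivisionOf T τ

/-- `N` is tree-based if it has a support tree. -/
def IsTreeBased [DecidableEq V] (N : Dgraph V) (X : Finset V) : Prop :=
  ∃ τ : Dgraph V, IsSupportTree N X τ

/-- `S` is an admissible arc-set of `G`. -/
def IsAdmissible [DecidableEq V] (G : Dgraph V) (S : Finset (V × V)) : Prop :=
  S ⊆ G.arcs ∧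
  (∀ a ∈ G.arcs, (G.indeg a.2 = 1 ∨ G.outdeg a.1 = 1) → a ∈ S) ∧
  (∀ a₁ ∈ G.arcs, ∀ a₂ ∈ G.arcs, a₁ ≠ a₂ → a₁.2 = a₂.2 →
    ((a₁ ∈ S ∧ a₂ ∉ S) ∨ (a₁ ∉ S ∧ a₂ ∈ S))) ∧
  (∀ a₁ ∈ G.arcs, ∀ a₂ ∈ G.arcs, a₁ ≠ a₂ → a₁.1 = a₂.1 → (a₁ ∈ S ∨ a₂ ∈ S))

end Dgraph


set_option linter.unusedSectionVars false

namespace Stmt0Aux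
open Dgraph

variable {V : Type*} [DecidableEq V]

section Aux

lemma transGen_lift {r s : V → V → Prop} (h : ∀ x y, r x y → Relation.TransGen s x y)
    {a b : V} (hab : Relation.TransGen r a b) : Relation.TransGen s a b := by
  induction hab with
  | single h' => exact h _ _ h'
  | tail _ h' ih => exact ih.trans (h _ _ h')

variable {A : Finset (V × V)} {u v w : V}

/-- head-count at `x ≠ w` unchanged by subdividing `(u,v)` through fresh `w`. -/
lemma head_card_eq (huv : (u, v) ∈ A) (hw1 : ∀ a ∈ A, a.1 ≠ w)
    (hvw : v ≠ w) {x : V} (hx : x ≠ w) :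
    ((insert (u, w) (insert (w, v) (A.erase (u, v)))).filter fun a => a.2 = x).card
      = (A.filter fun a => a.2 = x).card := by
  rw [Finset.filter_insert, Finset.filter_insert, Finset.filter_erase]
  simp only [hx.symm, if_false]
  by_cases hxv : x = v
  · subst hxv
    simp only [if_true]
    have hwv : (w, x) ∉ (A.filter fun a => a.2 = x).erase (u, x) := by
      intro h
      exact hw1 _ (Finset.mem_of_mem_filter _ (Finset.mem_of_mem_erase h)) rfl
    have hm : (u, x) ∈ A.filter (fun a => a.2 = x) := Finset.mem_filter.2 ⟨huv, rfl⟩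
    rw [Finset.card_insert_of_notMem hwv, Finset.card_erase_of_mem hm]
    have : 0 < (A.filter fun a => a.2 = x).card := Finset.card_pos.2 ⟨_, hm⟩
    omega
  · simp only [Ne.symm hxv, if_false]
    rw [Finset.erase_eq_of_notMem]
    intro h
    exact hxv ((Finset.mem_filter.1 h).2).symm

lemma head_card_w (hw2 : ∀ a ∈ A, a.2 ≠ w) (hvw : v ≠ w) :
    ((insert (u, w) (insert (w, v) (A.erase (u, v)))).filter fun a => a.2 = w).card = 1 := by
  rw [Finset.filter_insert, Finset.filter_insert, Finset.filter_erase]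
  simp only [if_true, hvw, if_false]
  have h0 : (A.filter fun a => a.2 = w) = ∅ := by
    rw [Finset.filter_eq_empty_iff]; exact fun a ha => hw2 a ha
  rw [h0]
  simp

/-- tail-count at `x ≠ w` unchanged. -/
lemma tail_card_eq (huv : (u, v) ∈ A) (hw2 : ∀ a ∈ A, a.2 ≠ w)
    (huw : u ≠ w) {x : V} (hx : x ≠ w) :
    ((insert (u, w) (insert (w, v) (A.erase (u, v)))).filter fun a => a.1 = x).card
      = (A.filter fun a => a.1 = x).card := by
  rw [Finset.filter_insert, Finset.filter_insert, Finset.filter_erase]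
  simp only [Ne.symm hx, if_false]
  by_cases hxu : x = u
  · subst hxu
    simp only [if_true]
    have hwu : (x, w) ∉ (A.filter fun a => a.1 = x).erase (x, v) := by
      intro h
      exact hw2 _ (Finset.mem_of_mem_filter _ (Finset.mem_of_mem_erase h)) rfl
    have hm : (x, v) ∈ A.filter (fun a => a.1 = x) := Finset.mem_filter.2 ⟨huv, rfl⟩
    rw [Finset.card_insert_of_notMem hwu, Finset.card_erase_of_mem hm]
    have : 0 < (A.filter fun a => a.1 = x).card := Finset.card_pos.2 ⟨_, hm⟩
    omega
  · simp only [Ne.symm hxu, if_false]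
    rw [Finset.erase_eq_of_notMem]
    intro h
    exact hxu ((Finset.mem_filter.1 h).2).symm

lemma tail_card_w (hw1 : ∀ a ∈ A, a.1 ≠ w) (huw : u ≠ w) :
    ((insert (u, w) (insert (w, v) (A.erase (u, v)))).filter fun a => a.1 = w).card = 1 := by
  rw [Finset.filter_insert, Finset.filter_insert, Finset.filter_erase]
  simp only [huw, if_false, if_true]
  have h0 : (A.filter fun a => a.1 = w) = ∅ := by
    rw [Finset.filter_eq_empty_iff]; exact fun a ha => hw1 a ha
  rw [h0]
  simp


end Aux

section Shape

variable {X : Finset V} {r : V}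

/-- The structural properties of subdivisions of RBPTs needed for the forward direction. -/
def Shape (X : Finset V) (r : V) (G : Dgraph V) : Prop :=
  r ∈ G.verts ∧ G.indeg r = 0 ∧ (∀ x ∈ G.verts, x ≠ r → G.indeg x = 1) ∧
    (∀ x ∈ G.verts, G.outdeg x = 0 → x ∈ X)

lemma shape_of_rbpt {T : Dgraph V} (h : IsRBPT T X) : ∃ r, Shape X r T := by
  obtain ⟨⟨hac, hXne, hXsub, ρ, hρv, hρin, hρout, huniq, hleaf, hint⟩, hdeg2⟩ := h
  refine ⟨ρ, hρv, hρin, ?_, ?_⟩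
  · intro x hx hxr
    by_cases hxX : x ∈ X
    · exact (((hleaf x hx).2 hxX).2).1
    · rcases hint x hx hxX hxr with ⟨h1, _⟩ | ⟨h2, _⟩
      · exact h1
      · exact absurd h2 (hdeg2 x hx)
  · intro x hx hout
    by_contra hxX
    have hxr : x ≠ ρ := by
      rintro rfl
      rcases hρout with h | h <;> omega
    rcases hint x hx hxX hxr with ⟨_, h1⟩ | ⟨_, h1⟩ <;> omega

lemma shape_subdivideArc {G H : Dgraph V} (h : SubdivideArc G H) (hs : Shape X r G) :
    Shape X r H := by
  obtain ⟨u, v, w, huv, hwG, hverts, harcs⟩ := h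
  obtain ⟨hr, hrin, hin, hout⟩ := hs
  have hw1 : ∀ a ∈ G.arcs, a.1 ≠ w := fun a ha he => hwG (he ▸ G.tail_mem a ha)
  have hw2 : ∀ a ∈ G.arcs, a.2 ≠ w := fun a ha he => hwG (he ▸ G.head_mem a ha)
  have huw : u ≠ w := hw1 _ huv
  have hvw : v ≠ w := hw2 _ huv
  have hrw : r ≠ w := fun he => hwG (he ▸ hr)
  have hIn : ∀ x : V, x ≠ w → H.indeg x = G.indeg x := by
    intro x hx
    show (H.arcs.filter fun a => a.2 = x).card = _
    rw [harcs]
    exact head_card_eq huv hw1 hvw hx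
  have hOut : ∀ x : V, x ≠ w → H.outdeg x = G.outdeg x := by
    intro x hx
    show (H.arcs.filter fun a => a.1 = x).card = _
    rw [harcs]
    exact tail_card_eq huv hw2 huw hx
  have hInw : H.indeg w = 1 := by
    show (H.arcs.filter fun a => a.2 = w).card = 1
    rw [harcs]; exact head_card_w hw2 hvw
  have hOutw : H.outdeg w = 1 := by
    show (H.arcs.filter fun a => a.1 = w).card = 1
    rw [harcs]; exact tail_card_w hw1 huw
  refine ⟨by rw [hverts]; exact Finset.mem_insert_of_mem hr, by rw [hIn r hrw]; exact hrin,
    ?_, ?_⟩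
  · intro x hx hxr
    rw [hverts, Finset.mem_insert] at hx
    rcases hx with rfl | hx
    · exact hInw
    · have hxw : x ≠ w := fun he => hwG (he ▸ hx)
      rw [hIn x hxw]; exact hin x hx hxr
  · intro x hx h0
    rw [hverts, Finset.mem_insert] at hx
    rcases hx with rfl | hx
    · rw [hOutw] at h0; omega
    · have hxw : x ≠ w := fun he => hwG (he ▸ hx)
      rw [hOut x hxw] at h0; exact hout x hx h0

lemma shape_subdivision {T G : Dgraph V} (h : IsSubdivisionOf T G) (hs : Shape X r T) :
    Shape X r G := by
  induction h with
  | refl => exact hs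
  | step _ hstep ih => exact shape_subdivideArc hstep ih

end Shape

section Forward

variable {N : Dgraph V} {X : Finset V} {S : Finset (V × V)}

lemma filter_mono {p : V × V → Prop} [DecidablePred p] (h : S ⊆ N.arcs) :
    S.filter p ⊆ N.arcs.filter p := fun a ha => by
  rw [Finset.mem_filter] at ha ⊢; exact ⟨h ha.1, ha.2⟩

lemma forward (hN : IsRBPN N X) (hS : S ⊆ N.arcs)
    (h : IsSupportTree N X (Dgraph.ofArcs S)) : IsAdmissible N S := by
  obtain ⟨hV, hSarcs, T, hT, hsub⟩ := h
  obtain ⟨r, hshape0⟩ := shape_of_rbpt hT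
  obtain ⟨hrv, hrin, hin, hout⟩ := shape_subdivision hsub hshape0
  obtain ⟨hac, hXne, hXsub, ρ, hρv, hρin, hρout, huniq, hleaf, hint⟩ := hN
  have hmemV : ∀ x, x ∈ (Dgraph.ofArcs S).verts ↔ x ∈ N.verts := fun x => by rw [hV]
  have hρS : (Dgraph.ofArcs S).indeg ρ = 0 := by
    have h1 : (S.filter fun a => a.2 = ρ).card ≤ N.indeg ρ :=
      Finset.card_le_card (filter_mono hS)
    have : (Dgraph.ofArcs S).indeg ρ = (S.filter fun a => a.2 = ρ).card := rfl
    omega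
  have hrρ : r = ρ := by
    by_contra hne
    have := hin ρ ((hmemV ρ).2 hρv) (fun h => hne h.symm)
    omega
  subst hrρ
  -- the in-arcs of S at any non-root vertex of N form a singleton
  have hindeg1 : ∀ x ∈ N.verts, x ≠ r → (S.filter fun a => a.2 = x).card = 1 :=
    fun x hx hxr => hin x ((hmemV x).2 hx) hxr
  have houtS : ∀ x ∈ N.verts, x ∉ X → (S.filter fun a => a.1 = x).Nonempty := by
    intro x hx hxX
    rw [Finset.nonempty_iff_ne_empty]
    intro hemp
    have : (Dgraph.ofArcs S).outdeg x = 0 := by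
      show (S.filter fun a => a.1 = x).card = 0
      rw [hemp, Finset.card_empty]
    exact hxX (hout x ((hmemV x).2 hx) this)
  refine ⟨hS, ?_, ?_, ?_⟩
  · -- forced arcs
    rintro a ha (h1 | h1)
    · -- in-degree of head is 1
      obtain ⟨b, hb⟩ := Finset.card_eq_one.1 h1
      have hab : a ∈ N.arcs.filter fun c => c.2 = a.2 := Finset.mem_filter.2 ⟨ha, rfl⟩
      rw [hb, Finset.mem_singleton] at hab
      have haρ : a.2 ≠ r := by
        rintro he
        rw [← he] at hρin
        omega
      have hne : (S.filter fun c => c.2 = a.2).Nonempty :=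
        Finset.card_pos.1 (by rw [hindeg1 a.2 (N.head_mem a ha) haρ]; omega)
      obtain ⟨c, hc⟩ := hne
      have hcb : c ∈ N.arcs.filter fun d => d.2 = a.2 := filter_mono hS hc
      rw [hb, Finset.mem_singleton] at hcb
      have : c = a := hcb.trans hab.symm
      exact this ▸ (Finset.mem_filter.1 hc).1
    · -- out-degree of tail is 1
      obtain ⟨b, hb⟩ := Finset.card_eq_one.1 h1
      have hab : a ∈ N.arcs.filter fun c => c.1 = a.1 := Finset.mem_filter.2 ⟨ha, rfl⟩
      rw [hb, Finset.mem_singleton] at hab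
      have haX : a.1 ∉ X := by
        intro hmem
        have hl := (hleaf a.1 (N.tail_mem a ha)).2 hmem
        have := hl.2.2
        omega
      obtain ⟨c, hc⟩ := houtS a.1 (N.tail_mem a ha) haX
      have hcb : c ∈ N.arcs.filter fun d => d.1 = a.1 := filter_mono hS hc
      rw [hb, Finset.mem_singleton] at hcb
      have : c = a := hcb.trans hab.symm
      exact this ▸ (Finset.mem_filter.1 hc).1
  · -- two arcs with the same head: exactly one in S
    intro a₁ h₁ a₂ h₂ hne hhead
    have hm₁ : a₁ ∈ N.arcs.filter fun c => c.2 = a₁.2 := Finset.mem_filter.2 ⟨h₁, rfl⟩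
    have hm₂ : a₂ ∈ N.arcs.filter fun c => c.2 = a₁.2 :=
      Finset.mem_filter.2 ⟨h₂, hhead.symm⟩
    have hvV : a₁.2 ∈ N.verts := N.head_mem a₁ h₁
    have h2le : 2 ≤ N.indeg a₁.2 := by
      have h' := Finset.one_lt_card.2 ⟨a₁, hm₁, a₂, hm₂, hne⟩
      have hdef : N.indeg a₁.2 = (N.arcs.filter fun c => c.2 = a₁.2).card := rfl
      omega
    have hvρ : a₁.2 ≠ r := by
      rintro he
      rw [← he] at hρin
      omega
    have hvX : a₁.2 ∉ X := by
      intro hmem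
      have := ((hleaf _ hvV).2 hmem).2.1
      omega
    have hdeg2 : N.indeg a₁.2 = 2 := by
      rcases hint _ hvV hvX hvρ with ⟨hd, _⟩ | ⟨hd, _⟩ <;> omega
    have hsub2 : insert a₁ {a₂} ⊆ N.arcs.filter fun c => c.2 = a₁.2 := by
      intro c hc
      rcases Finset.mem_insert.1 hc with rfl | hc
      · exact hm₁
      · exact Finset.mem_singleton.1 hc ▸ hm₂
    have hcard2 : (insert a₁ {a₂} : Finset (V × V)).card = 2 := Finset.card_pair hne
    have hfeq : (insert a₁ {a₂} : Finset (V × V)) = N.arcs.filter fun c => c.2 = a₁.2 :=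
      Finset.eq_of_subset_of_card_le hsub2 (by rw [hcard2]; exact le_of_eq hdeg2)
    obtain ⟨c, hc⟩ := Finset.card_eq_one.1 (hindeg1 a₁.2 hvV hvρ)
    have hcS : c ∈ S ∧ c.2 = a₁.2 := Finset.mem_filter.1 (by rw [hc]; exact Finset.mem_singleton_self c)
    by_cases hA : a₁ ∈ S
    · left
      refine ⟨hA, fun hB => ?_⟩
      have e₁ : a₁ = c := by
        have : a₁ ∈ S.filter fun d => d.2 = a₁.2 := Finset.mem_filter.2 ⟨hA, rfl⟩
        rwa [hc, Finset.mem_singleton] at this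
      have e₂ : a₂ = c := by
        have : a₂ ∈ S.filter fun d => d.2 = a₁.2 := Finset.mem_filter.2 ⟨hB, hhead.symm⟩
        rwa [hc, Finset.mem_singleton] at this
      exact hne (e₁.trans e₂.symm)
    · right
      refine ⟨hA, ?_⟩
      have hcm : c ∈ (insert a₁ {a₂} : Finset (V × V)) := by
        rw [hfeq]
        exact filter_mono hS (by rw [hc]; exact Finset.mem_singleton_self c)
      rcases Finset.mem_insert.1 hcm with rfl | hcm
      · exact absurd hcS.1 hA
      · exact (Finset.mem_singleton.1 hcm) ▸ hcS.1
  · -- two arcs with the same tail: at least one in S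
    intro a₁ h₁ a₂ h₂ hne htail
    have hm₁ : a₁ ∈ N.arcs.filter fun c => c.1 = a₁.1 := Finset.mem_filter.2 ⟨h₁, rfl⟩
    have hm₂ : a₂ ∈ N.arcs.filter fun c => c.1 = a₁.1 :=
      Finset.mem_filter.2 ⟨h₂, htail.symm⟩
    have huV : a₁.1 ∈ N.verts := N.tail_mem a₁ h₁
    have h2le : 2 ≤ N.outdeg a₁.1 := by
      have h' := Finset.one_lt_card.2 ⟨a₁, hm₁, a₂, hm₂, hne⟩
      have hdef : N.outdeg a₁.1 = (N.arcs.filter fun c => c.1 = a₁.1).card := rfl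
      omega
    have huX : a₁.1 ∉ X := by
      intro hmem
      have := ((hleaf _ huV).2 hmem).2.2
      omega
    have hdeg2 : N.outdeg a₁.1 = 2 := by
      by_cases huρ : a₁.1 = r
      · rw [huρ]; rcases hρout with hd | hd <;> (rw [huρ] at h2le; omega)
      · rcases hint _ huV huX huρ with ⟨_, hd⟩ | ⟨_, hd⟩ <;> omega
    have hsub2 : insert a₁ {a₂} ⊆ N.arcs.filter fun c => c.1 = a₁.1 := by
      intro c hc
      rcases Finset.mem_insert.1 hc with rfl | hc
      · exact hm₁
      · exact Finset.mem_singleton.1 hc ▸ hm₂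
    have hcard2 : (insert a₁ {a₂} : Finset (V × V)).card = 2 := Finset.card_pair hne
    have hfeq : (insert a₁ {a₂} : Finset (V × V)) = N.arcs.filter fun c => c.1 = a₁.1 :=
      Finset.eq_of_subset_of_card_le hsub2 (by rw [hcard2]; exact le_of_eq hdeg2)
    obtain ⟨c, hc⟩ := houtS a₁.1 huV huX
    have hcm : c ∈ (insert a₁ {a₂} : Finset (V × V)) := by
      rw [hfeq]; exact filter_mono hS hc
    rcases Finset.mem_insert.1 hcm with rfl | hcm
    · exact Or.inl (Finset.mem_filter.1 hc).1
    · exact Or.inr ((Finset.mem_singleton.1 hcm) ▸ (Finset.mem_filter.1 hc).1)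

end Forward

section Backward

variable {X : Finset V} {ρ : V}

/-- Structural properties sufficient for being a subdivision of an RBPT. -/
def Good (X : Finset V) (ρ : V) (G : Dgraph V) : Prop :=
  G.Acyclic ∧ X.Nonempty ∧ X ⊆ G.verts ∧ ρ ∈ G.verts ∧ ρ ∉ X ∧ G.indeg ρ = 0 ∧
  (G.outdeg ρ = 1 ∨ G.outdeg ρ = 2) ∧
  (∀ x ∈ G.verts, x ≠ ρ → G.indeg x = 1) ∧
  (∀ x ∈ X, G.outdeg x = 0) ∧
  (∀ x ∈ G.verts, x ∉ X → x ≠ ρ → G.outdeg x = 1 ∨ G.outdeg x = 2)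

lemma good_to_rbpt :
    ∀ (n : ℕ) (G : Dgraph V),
      (G.verts.filter fun x => G.indeg x = 1 ∧ G.outdeg x = 1).card = n →
      Good X ρ G → ∃ T, IsRBPT T X ∧ IsSubdivisionOf T G := by
  intro n
  induction n with
  | zero =>
    intro G hcard hG
    obtain ⟨hac, hXne, hXsub, hρV, hρX, hρin, hρout, hindeg, houtX, hinternal⟩ := hG
    have hno : ∀ x ∈ G.verts, ¬(G.indeg x = 1 ∧ G.outdeg x = 1) := by
      intro x hx hcontra
      have : x ∈ G.verts.filter fun y => G.indeg y = 1 ∧ G.outdeg y = 1 :=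
        Finset.mem_filter.2 ⟨hx, hcontra⟩
      rw [Finset.card_eq_zero.1 hcard] at this
      exact absurd this (Finset.notMem_empty x)
    refine ⟨G, ⟨⟨hac, hXne, hXsub, ρ, hρV, hρin, hρout, ?_, ?_, ?_⟩, ?_⟩,
      IsSubdivisionOf.refl G⟩
    · intro x hx hx0
      by_contra hne
      have := hindeg x hx hne
      omega
    · intro x hx
      constructor
      · rintro ⟨_, hi, ho⟩
        by_contra hxX
        have hxρ : x ≠ ρ := by rintro rfl; omega
        rcases hinternal x hx hxX hxρ with h | h <;> omega
      · intro hxX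
        have hxρ : x ≠ ρ := by rintro rfl; exact hρX hxX
        exact ⟨hx, hindeg x hx hxρ, houtX x hxX⟩
    · intro x hx hxX hxρ
      have hi := hindeg x hx hxρ
      rcases hinternal x hx hxX hxρ with h | h
      · exact absurd ⟨hi, h⟩ (hno x hx)
      · exact Or.inl ⟨hi, h⟩
    · intro x hx
      by_cases hxρ : x = ρ
      · rw [hxρ, hρin]; omega
      · rw [hindeg x hx hxρ]; omega
  | succ n ih =>
    intro G hcard hG
    obtain ⟨hac, hXne, hXsub, hρV, hρX, hρin, hρout, hindeg, houtX, hinternal⟩ := hG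
    have hne : (G.verts.filter fun x => G.indeg x = 1 ∧ G.outdeg x = 1).Nonempty :=
      Finset.card_pos.1 (by omega)
    obtain ⟨w, hw⟩ := hne
    obtain ⟨hwV, hwin, hwout⟩ := Finset.mem_filter.1 hw
    have hwρ : w ≠ ρ := by rintro rfl; omega
    have hwX : w ∉ X := fun h => by have := houtX w h; omega
    -- the unique in-arc (u, w)
    have hwin' : (G.arcs.filter fun a => a.2 = w).card = 1 := hwin
    obtain ⟨p, hp⟩ := Finset.card_eq_one.1 hwin'
    have hpmem : p ∈ G.arcs ∧ p.2 = w := by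
      have : p ∈ G.arcs.filter fun a => a.2 = w := by
        rw [hp]; exact Finset.mem_singleton_self p
      exact Finset.mem_filter.1 this
    set u := p.1 with hu
    have huw_mem : (u, w) ∈ G.arcs := by
      have : (p.1, p.2) ∈ G.arcs := by rw [Prod.mk.eta]; exact hpmem.1
      rwa [hpmem.2] at this
    have hpuw : p = (u, w) := by rw [← hpmem.2, hu, Prod.mk.eta]
    -- the unique out-arc (w, v)
    have hwout' : (G.arcs.filter fun a => a.1 = w).card = 1 := hwout
    obtain ⟨q, hq⟩ := Finset.card_eq_one.1 hwout'
    have hqmem : q ∈ G.arcs ∧ q.1 = w := by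
      have : q ∈ G.arcs.filter fun a => a.1 = w := by
        rw [hq]; exact Finset.mem_singleton_self q
      exact Finset.mem_filter.1 this
    set v := q.2 with hv
    have hwv_mem : (w, v) ∈ G.arcs := by
      have : (q.1, q.2) ∈ G.arcs := by rw [Prod.mk.eta]; exact hqmem.1
      rwa [hqmem.2] at this
    have hqwv : q = (w, v) := by rw [← hqmem.2, hv, Prod.mk.eta]
    have huV : u ∈ G.verts := G.tail_mem (u, w) huw_mem
    have hvV : v ∈ G.verts := G.head_mem (w, v) hwv_mem
    have huw : u ≠ w := by
      rintro rfl
      exact hac u (Relation.TransGen.single huw_mem)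
    have hvw : v ≠ w := by
      rintro rfl
      exact hac v (Relation.TransGen.single hwv_mem)
    have huv : u ≠ v := by
      intro he
      apply hac u
      have hT : Relation.TransGen (fun a b => (a, b) ∈ G.arcs) u v :=
        Relation.TransGen.head huw_mem (Relation.TransGen.single hwv_mem)
      rwa [← he] at hT
    have hvρ : v ≠ ρ := by
      rintro rfl
      have : (w, v) ∈ G.arcs.filter fun a => a.2 = v := Finset.mem_filter.2 ⟨hwv_mem, rfl⟩
      have h1 : 0 < (G.arcs.filter fun a => a.2 = v).card := Finset.card_pos.2 ⟨_, this⟩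
      have h0 : (G.arcs.filter fun a => a.2 = v).card = 0 := hρin
      omega
    have huv_not : (u, v) ∉ G.arcs := by
      intro hmem
      have hv1 : (G.arcs.filter fun a => a.2 = v).card = 1 := hindeg v hvV hvρ
      obtain ⟨c, hc⟩ := Finset.card_eq_one.1 hv1
      have e1 : (u, v) = c := by
        have : (u, v) ∈ G.arcs.filter fun a => a.2 = v := Finset.mem_filter.2 ⟨hmem, rfl⟩
        rwa [hc, Finset.mem_singleton] at this
      have e2 : (w, v) = c := by
        have : (w, v) ∈ G.arcs.filter fun a => a.2 = v :=
          Finset.mem_filter.2 ⟨hwv_mem, rfl⟩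
        rwa [hc, Finset.mem_singleton] at this
      have : u = w := congrArg Prod.fst (e1.trans e2.symm)
      exact huw this
    -- the suppressed graph
    have htail_w : ∀ a ∈ G.arcs, a.1 = w → a = (w, v) := by
      intro a ha haw
      have : a ∈ G.arcs.filter fun b => b.1 = w := Finset.mem_filter.2 ⟨ha, haw⟩
      rw [hq, Finset.mem_singleton] at this
      rw [this, hqwv]
    have hhead_w : ∀ a ∈ G.arcs, a.2 = w → a = (u, w) := by
      intro a ha haw
      have : a ∈ G.arcs.filter fun b => b.2 = w := Finset.mem_filter.2 ⟨ha, haw⟩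
      rw [hp, Finset.mem_singleton] at this
      rw [this, hpuw]
    set G' : Dgraph V :=
      { verts := G.verts.erase w
        arcs := insert (u, v) ((G.arcs.erase (u, w)).erase (w, v))
        tail_mem := by
          intro a ha
          rcases Finset.mem_insert.1 ha with rfl | ha
          · exact Finset.mem_erase.2 ⟨huw, huV⟩
          · have hne2 : a ≠ (w, v) := Finset.ne_of_mem_erase ha
            have ha2 : a ∈ G.arcs := Finset.mem_of_mem_erase (Finset.mem_of_mem_erase ha)
            refine Finset.mem_erase.2 ⟨?_, G.tail_mem a ha2⟩
            intro haw
            exact hne2 (htail_w a ha2 haw)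
        head_mem := by
          intro a ha
          rcases Finset.mem_insert.1 ha with rfl | ha
          · exact Finset.mem_erase.2 ⟨hvw, hvV⟩
          · have hne1 : a ≠ (u, w) := Finset.ne_of_mem_erase (Finset.mem_of_mem_erase ha)
            have ha2 : a ∈ G.arcs := Finset.mem_of_mem_erase (Finset.mem_of_mem_erase ha)
            refine Finset.mem_erase.2 ⟨?_, G.head_mem a ha2⟩
            intro haw
            exact hne1 (hhead_w a ha2 haw) } with hG'
    have harcseq : G.arcs = insert (u, w) (insert (w, v) (G'.arcs.erase (u, v))) := by
      have h1 : G'.arcs.erase (u, v) = (G.arcs.erase (u, w)).erase (w, v) := by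
        apply Finset.erase_insert
        intro hmem
        exact huv_not (Finset.mem_of_mem_erase (Finset.mem_of_mem_erase hmem))
      rw [h1]
      have h2 : (w, v) ∈ G.arcs.erase (u, w) := by
        refine Finset.mem_erase.2 ⟨?_, hwv_mem⟩
        intro he
        exact huw (congrArg Prod.fst he).symm
      rw [Finset.insert_erase h2, Finset.insert_erase huw_mem]
    have hwG' : w ∉ G'.verts := Finset.notMem_erase w G.verts
    have hw1' : ∀ a ∈ G'.arcs, a.1 ≠ w := fun a ha he => hwG' (he ▸ G'.tail_mem a ha)
    have hw2' : ∀ a ∈ G'.arcs, a.2 ≠ w := fun a ha he => hwG' (he ▸ G'.head_mem a ha)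
    have huvG' : (u, v) ∈ G'.arcs := Finset.mem_insert_self _ _
    have hsubdiv : SubdivideArc G' G :=
      ⟨u, v, w, huvG', hwG', (Finset.insert_erase hwV).symm, harcseq⟩
    have hIn : ∀ x : V, x ≠ w → G'.indeg x = G.indeg x := by
      intro x hx
      show _ = (G.arcs.filter fun a => a.2 = x).card
      conv_rhs => rw [harcseq]
      exact (head_card_eq huvG' hw1' hvw hx).symm
    have hOut : ∀ x : V, x ≠ w → G'.outdeg x = G.outdeg x := by
      intro x hx
      show _ = (G.arcs.filter fun a => a.1 = x).card
      conv_rhs => rw [harcseq]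
      exact (tail_card_eq huvG' hw2' huw hx).symm
    have hgood' : Good X ρ G' := by
      refine ⟨?_, hXne, ?_, Finset.mem_erase.2 ⟨Ne.symm hwρ, hρV⟩, hρX, ?_, ?_, ?_, ?_, ?_⟩
      · intro x hx
        apply hac x
        refine transGen_lift ?_ hx
        rintro a b hab
        rcases Finset.mem_insert.1 hab with he | hab
        · have ha : a = u := congrArg Prod.fst he
          have hb : b = v := congrArg Prod.snd he
          subst ha; subst hb
          exact Relation.TransGen.head huw_mem (Relation.TransGen.single hwv_mem)
        · exact Relation.TransGen.single
            (Finset.mem_of_mem_erase (Finset.mem_of_mem_erase hab))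
      · intro x hx
        exact Finset.mem_erase.2 ⟨fun he => hwX (he ▸ hx), hXsub hx⟩
      · rw [hIn ρ (Ne.symm hwρ)]; exact hρin
      · rw [hOut ρ (Ne.symm hwρ)]; exact hρout
      · intro x hx hxρ
        obtain ⟨hxw, hxV⟩ := Finset.mem_erase.1 hx
        rw [hIn x hxw]; exact hindeg x hxV hxρ
      · intro x hx
        have hxw : x ≠ w := fun he => hwX (he ▸ hx)
        rw [hOut x hxw]; exact houtX x hx
      · intro x hx hxX hxρ
        obtain ⟨hxw, hxV⟩ := Finset.mem_erase.1 hx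
        rw [hOut x hxw]; exact hinternal x hxV hxX hxρ
    have hcount : (G'.verts.filter fun x => G'.indeg x = 1 ∧ G'.outdeg x = 1).card = n := by
      have hfilt : (G'.verts.filter fun x => G'.indeg x = 1 ∧ G'.outdeg x = 1)
          = (G.verts.filter fun x => G.indeg x = 1 ∧ G.outdeg x = 1).erase w := by
        ext x
        simp only [Finset.mem_filter, show G'.verts = G.verts.erase w from rfl, Finset.mem_erase]
        constructor
        · rintro ⟨⟨hxw, hxV⟩, hdeg⟩
          rw [hIn x hxw, hOut x hxw] at hdeg
          exact ⟨hxw, hxV, hdeg⟩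
        · rintro ⟨hxw, hxV, hdeg⟩
          rw [← hIn x hxw, ← hOut x hxw] at hdeg
          exact ⟨⟨hxw, hxV⟩, hdeg⟩
      rw [hfilt, Finset.card_erase_of_mem hw, hcard]
      omega
    obtain ⟨T, hT, hTsub⟩ := ih G' hcount hgood'
    exact ⟨T, hT, IsSubdivisionOf.step hTsub hsubdiv⟩

end Backward

section Final

variable {N : Dgraph V} {X : Finset V} {S : Finset (V × V)}

lemma card_filter_one {p : V × V → Prop} [DecidablePred p] {a : V × V}
    (ha : a ∈ S.filter p) (hsub : S.filter p ⊆ {a}) : (S.filter p).card = 1 :=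
  Finset.card_eq_one.2 ⟨a, subset_antisymm hsub (Finset.singleton_subset_iff.2 ha)⟩

lemma backward (hN : IsRBPN N X) (hS : S ⊆ N.arcs) (hA : IsAdmissible N S) :
    IsSupportTree N X (Dgraph.ofArcs S) := by
  obtain ⟨hac, hXne, hXsub, ρ, hρV, hρin, hρout, huniq, hleaf, hint⟩ := hN
  obtain ⟨-, h1, h2, h3⟩ := hA
  have hρX : ρ ∉ X := by
    intro h
    have := ((hleaf ρ hρV).2 h).2.1
    omega
  -- in-arc counts in S
  have hin1 : ∀ x ∈ N.verts, x ≠ ρ → (S.filter fun a => a.2 = x).card = 1 := by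
    intro x hx hxρ
    have hdN : N.indeg x = 1 ∨ N.indeg x = 2 := by
      by_cases hxX : x ∈ X
      · exact Or.inl ((hleaf x hx).2 hxX).2.1
      · rcases hint x hx hxX hxρ with ⟨h, _⟩ | ⟨h, _⟩
        · exact Or.inl h
        · exact Or.inr h
    rcases hdN with hd | hd
    · obtain ⟨a, ha⟩ := Finset.card_eq_one.1 (hd : (N.arcs.filter fun c => c.2 = x).card = 1)
      have haarc : a ∈ N.arcs ∧ a.2 = x := by
        have : a ∈ N.arcs.filter fun c => c.2 = x := by
          rw [ha]; exact Finset.mem_singleton_self a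
        exact Finset.mem_filter.1 this
      have haS : a ∈ S := by
        refine h1 a haarc.1 (Or.inl ?_)
        rw [haarc.2]; exact hd
      refine card_filter_one (Finset.mem_filter.2 ⟨haS, haarc.2⟩) ?_
      intro c hc
      rw [← ha]
      exact filter_mono hS hc
    · obtain ⟨a, b, hab, hfe⟩ :=
        Finset.card_eq_two.1 (hd : (N.arcs.filter fun c => c.2 = x).card = 2)
      have haarc : a ∈ N.arcs ∧ a.2 = x := by
        have : a ∈ N.arcs.filter fun c => c.2 = x := by
          rw [hfe]; exact Finset.mem_insert_self a {b}
        exact Finset.mem_filter.1 this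
      have hbarc : b ∈ N.arcs ∧ b.2 = x := by
        have : b ∈ N.arcs.filter fun c => c.2 = x := by
          rw [hfe]; exact Finset.mem_insert_of_mem (Finset.mem_singleton_self b)
        exact Finset.mem_filter.1 this
      have hmemNS : ∀ c ∈ S.filter fun d => d.2 = x, c = a ∨ c = b := by
        intro c hc
        have : c ∈ N.arcs.filter fun d => d.2 = x := filter_mono hS hc
        rw [hfe, Finset.mem_insert, Finset.mem_singleton] at this
        exact this
      rcases h2 a haarc.1 b hbarc.1 hab (haarc.2.trans hbarc.2.symm) with
        ⟨haS, hbS⟩ | ⟨haS, hbS⟩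
      · refine card_filter_one (Finset.mem_filter.2 ⟨haS, haarc.2⟩) ?_
        intro c hc
        rw [Finset.mem_singleton]
        rcases hmemNS c hc with rfl | rfl
        · rfl
        · exact absurd (Finset.mem_filter.1 hc).1 hbS
      · refine card_filter_one (Finset.mem_filter.2 ⟨hbS, hbarc.2⟩) ?_
        intro c hc
        rw [Finset.mem_singleton]
        rcases hmemNS c hc with rfl | rfl
        · exact absurd (Finset.mem_filter.1 hc).1 haS
        · rfl
  -- out-arc counts in S
  have hout0 : ∀ x ∈ X, (S.filter fun a => a.1 = x).card = 0 := by
    intro x hx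
    have hd : N.outdeg x = 0 := ((hleaf x (hXsub hx)).2 hx).2.2
    have hsub : (S.filter fun a => a.1 = x) ⊆ N.arcs.filter fun a => a.1 = x :=
      filter_mono hS
    have := Finset.card_le_card hsub
    have hd' : (N.arcs.filter fun a => a.1 = x).card = 0 := hd
    omega
  have hout12 : ∀ x ∈ N.verts, x ∉ X →
      (S.filter fun a => a.1 = x).card = 1 ∨ (S.filter fun a => a.1 = x).card = 2 := by
    intro x hx hxX
    have hdN : N.outdeg x = 1 ∨ N.outdeg x = 2 := by
      by_cases hxρ : x = ρ
      · rw [hxρ]; exact hρout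
      · rcases hint x hx hxX hxρ with ⟨_, h⟩ | ⟨_, h⟩
        · exact Or.inr h
        · exact Or.inl h
    rcases hdN with hd | hd
    · obtain ⟨a, ha⟩ := Finset.card_eq_one.1 (hd : (N.arcs.filter fun c => c.1 = x).card = 1)
      have haarc : a ∈ N.arcs ∧ a.1 = x := by
        have : a ∈ N.arcs.filter fun c => c.1 = x := by
          rw [ha]; exact Finset.mem_singleton_self a
        exact Finset.mem_filter.1 this
      have haS : a ∈ S := by
        refine h1 a haarc.1 (Or.inr ?_)
        rw [haarc.2]; exact hd
      refine Or.inl (card_filter_one (Finset.mem_filter.2 ⟨haS, haarc.2⟩) ?_)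
      intro c hc
      rw [← ha]
      exact filter_mono hS hc
    · obtain ⟨a, b, hab, hfe⟩ :=
        Finset.card_eq_two.1 (hd : (N.arcs.filter fun c => c.1 = x).card = 2)
      have haarc : a ∈ N.arcs ∧ a.1 = x := by
        have : a ∈ N.arcs.filter fun c => c.1 = x := by
          rw [hfe]; exact Finset.mem_insert_self a {b}
        exact Finset.mem_filter.1 this
      have hbarc : b ∈ N.arcs ∧ b.1 = x := by
        have : b ∈ N.arcs.filter fun c => c.1 = x := by
          rw [hfe]; exact Finset.mem_insert_of_mem (Finset.mem_singleton_self b)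
        exact Finset.mem_filter.1 this
      have hge : 1 ≤ (S.filter fun a => a.1 = x).card := by
        apply Finset.card_pos.2
        rcases h3 a haarc.1 b hbarc.1 hab (haarc.2.trans hbarc.2.symm) with haS | hbS
        · exact ⟨a, Finset.mem_filter.2 ⟨haS, haarc.2⟩⟩
        · exact ⟨b, Finset.mem_filter.2 ⟨hbS, hbarc.2⟩⟩
      have hle : (S.filter fun a => a.1 = x).card ≤ 2 := by
        have hsub : (S.filter fun a => a.1 = x) ⊆ N.arcs.filter fun a => a.1 = x :=
          filter_mono hS
        have := Finset.card_le_card hsub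
        have hd'' : (N.arcs.filter fun c => c.1 = x).card = 2 := hd
        omega
      omega
  have hρS : (S.filter fun a => a.2 = ρ).card = 0 := by
    have hsub : (S.filter fun a => a.2 = ρ) ⊆ N.arcs.filter fun a => a.2 = ρ :=
      filter_mono hS
    have := Finset.card_le_card hsub
    have hd' : (N.arcs.filter fun a => a.2 = ρ).card = 0 := hρin
    omega
  -- the vertex sets agree
  have hV : (Dgraph.ofArcs S).verts = N.verts := by
    apply subset_antisymm
    · intro x hx
      rcases Finset.mem_union.1 hx with hx | hx
      · obtain ⟨a, haS, rfl⟩ := Finset.mem_image.1 hx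
        exact N.tail_mem a (hS haS)
      · obtain ⟨a, haS, rfl⟩ := Finset.mem_image.1 hx
        exact N.head_mem a (hS haS)
    · intro x hx
      by_cases hxρ : x = ρ
      · subst hxρ
        have hge : 1 ≤ (S.filter fun a => a.1 = x).card := by
          rcases hout12 x hx hρX with h | h <;> omega
        obtain ⟨a, ha⟩ := Finset.card_pos.1 hge
        obtain ⟨haS, hax⟩ := Finset.mem_filter.1 ha
        apply Finset.mem_union_left
        exact Finset.mem_image.2 ⟨a, haS, hax⟩
      · have := hin1 x hx hxρ
        have hge : 1 ≤ (S.filter fun a => a.2 = x).card := by omega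
        obtain ⟨a, ha⟩ := Finset.card_pos.1 hge
        obtain ⟨haS, hax⟩ := Finset.mem_filter.1 ha
        apply Finset.mem_union_right
        exact Finset.mem_image.2 ⟨a, haS, hax⟩
  have hgood : Good X ρ (Dgraph.ofArcs S) := by
    refine ⟨?_, hXne, ?_, ?_, hρX, hρS, hout12 ρ hρV hρX, ?_, ?_, ?_⟩
    · intro x hx
      apply hac x
      exact transGen_lift (fun a b hab => Relation.TransGen.single (hS hab)) hx
    · rw [hV]; exact hXsub
    · rw [hV]; exact hρV
    · intro x hx hxρ
      rw [hV] at hx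
      exact hin1 x hx hxρ
    · intro x hx
      exact hout0 x hx
    · intro x hx hxX hxρ
      rw [hV] at hx
      exact hout12 x hx hxX
  obtain ⟨T, hT, hsub⟩ := good_to_rbpt _ (Dgraph.ofArcs S) rfl hgood
  exact ⟨hV, hS, T, hT, hsub⟩

end Final
end Stmt0Aux




/-- Let `N` be a rooted binary phylogenetic `X`-network and `S ⊆ A(N)`.
Then the arc-induced subgraph `N[S]` is a support tree of `N` iff `S` is an admissible
arc-set of `N`. -/
theorem stmt0 {V : Type*} [DecidableEq V] (N : Dgraph V) (X : Finset V)
    (hN : Dgraph.IsRBPN N X) (S : Finset (V × V)) (hS : S ⊆ N.arcs) :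
    Dgraph.IsSupportTree N X (Dgraph.ofArcs S) ↔ Dgraph.IsAdmissible N S :=
  ⟨Stmt0Aux.forward hN hS, Stmt0Aux.backward hN hS⟩
end

section
/- Let N be a rooted binary phylogenetic X-network. The map S ↦ N[S] is a bijection (one-to-one correspondence) between the admissible arc-sets of N and the support trees of N. -/
namespace Dgraph

variable {V : Type*} [DecidableEq V]

lemma ext' {G H : Dgraph V} (hv : G.verts = H.verts) (ha : G.arcs = H.arcs) : G = H := by
  cases G; cases H; simp_all

lemma indeg_unique {G : Dgraph V} {v : V} (h : G.indeg v = 1) :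
    ∀ a ∈ G.arcs, a.2 = v → ∀ b ∈ G.arcs, b.2 = v → a = b := fun a ha hav b hb hbv =>
  Finset.card_le_one.mp h.le a (Finset.mem_filter.mpr ⟨ha, hav⟩)
    b (Finset.mem_filter.mpr ⟨hb, hbv⟩)

lemma outdeg_unique {G : Dgraph V} {v : V} (h : G.outdeg v = 1) :
    ∀ a ∈ G.arcs, a.1 = v → ∀ b ∈ G.arcs, b.1 = v → a = b := fun a ha hav b hb hbv =>
  Finset.card_le_one.mp h.le a (Finset.mem_filter.mpr ⟨ha, hav⟩)
    b (Finset.mem_filter.mpr ⟨hb, hbv⟩)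

lemma indeg_pos {G : Dgraph V} {v : V} {a : V × V} (ha : a ∈ G.arcs) (h2 : a.2 = v) :
    0 < G.indeg v := Finset.card_pos.mpr ⟨a, Finset.mem_filter.mpr ⟨ha, h2⟩⟩

lemma outdeg_pos {G : Dgraph V} {v : V} {a : V × V} (ha : a ∈ G.arcs) (h1 : a.1 = v) :
    0 < G.outdeg v := Finset.card_pos.mpr ⟨a, Finset.mem_filter.mpr ⟨ha, h1⟩⟩

lemma exists_of_indeg_pos {G : Dgraph V} {v : V} (h : 0 < G.indeg v) :
    ∃ a ∈ G.arcs, a.2 = v := by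
  obtain ⟨a, ha⟩ := Finset.card_pos.mp h
  exact ⟨a, (Finset.mem_filter.mp ha).1, (Finset.mem_filter.mp ha).2⟩

lemma exists_of_outdeg_pos {G : Dgraph V} {v : V} (h : 0 < G.outdeg v) :
    ∃ a ∈ G.arcs, a.1 = v := by
  obtain ⟨a, ha⟩ := Finset.card_pos.mp h
  exact ⟨a, (Finset.mem_filter.mp ha).1, (Finset.mem_filter.mp ha).2⟩

lemma acyclic_of_arc_implies {G H : Dgraph V}
    (h : ∀ a b : V, (a, b) ∈ H.arcs → Relation.TransGen (fun p q => (p, q) ∈ G.arcs) a b)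
    (hG : G.Acyclic) : H.Acyclic := by
  intro x hx
  refine hG x ?_
  have := Relation.TransGen.mono h x x hx
  rwa [Relation.transGen_idem] at this

lemma card_insert_erase {α : Type*} [DecidableEq α] {s : Finset α} {a b : α}
    (ha : a ∈ s) (hb : b ∉ s) : (insert b (s.erase a)).card = s.card := by
  rw [Finset.card_insert_of_notMem (fun h => hb (Finset.mem_of_mem_erase h)),
      Finset.card_erase_of_mem ha]
  have : 0 < s.card := Finset.card_pos.mpr ⟨a, ha⟩
  omega

/-- The quasi-tree invariant: acyclic, unique root, leaves exactly `X`, every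
non-root vertex has in-degree one, out-degrees at most two. -/
structure Good (G : Dgraph V) (X : Finset V) (ρ : V) : Prop where
  acyclic : G.Acyclic
  X_ne : X.Nonempty
  X_sub : X ⊆ G.verts
  rho_mem : ρ ∈ G.verts
  rho_in : G.indeg ρ = 0
  rho_out : G.outdeg ρ = 1 ∨ G.outdeg ρ = 2
  in_one : ∀ v ∈ G.verts, v ≠ ρ → G.indeg v = 1
  out_zero_iff : ∀ v ∈ G.verts, (G.outdeg v = 0 ↔ v ∈ X)
  out_le : ∀ v ∈ G.verts, G.outdeg v ≤ 2

lemma Good.rho_not_mem_X {G : Dgraph V} {X : Finset V} {ρ : V} (h : Good G X ρ) : ρ ∉ X := by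
  intro hx
  have := (h.out_zero_iff ρ h.rho_mem).mpr hx
  rcases h.rho_out with h1 | h1 <;> omega

lemma good_of_rbpt {T : Dgraph V} {X : Finset V} (h : IsRBPT T X) : ∃ ρ, Good T X ρ := by
  obtain ⟨⟨hac, hne, hXs, ρ, hρv, hρin, hρout, huniq, hleaf, hint⟩, hno2⟩ := h
  refine ⟨ρ, hac, hne, hXs, hρv, hρin, hρout, ?_, ?_, ?_⟩
  · intro v hv hvρ
    by_cases hvX : v ∈ X
    · exact ((hleaf v hv).mpr hvX).2.1
    · rcases hint v hv hvX hvρ with ⟨h1, _⟩ | ⟨h2, _⟩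
      · exact h1
      · exact absurd h2 (hno2 v hv)
  · intro v hv
    constructor
    · intro h0
      by_contra hvX
      have hvρ : v ≠ ρ := by rintro rfl; rcases hρout with h' | h' <;> omega
      rcases hint v hv hvX hvρ with ⟨_, h'⟩ | ⟨_, h'⟩ <;> omega
    · intro hvX; exact ((hleaf v hv).mpr hvX).2.2
  · intro v hv
    by_cases hvρ : v = ρ
    · subst hvρ; rcases hρout with h' | h' <;> omega
    by_cases hvX : v ∈ X
    · have := ((hleaf v hv).mpr hvX).2.2; omega
    · rcases hint v hv hvX hvρ with ⟨_, h'⟩ | ⟨_, h'⟩ <;> omega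

section Subdiv

variable {H K : Dgraph V} {u v w : V}

lemma subdiv_indeg (huv : (u, v) ∈ H.arcs) (hw : w ∉ H.verts)
    (hKa : K.arcs = insert (u, w) (insert (w, v) (H.arcs.erase (u, v))))
    {x : V} (hx : x ≠ w) : K.indeg x = H.indeg x := by
  have hwu : w ≠ u := fun h => hw (h ▸ H.tail_mem _ huv)
  have hwv : w ≠ v := fun h => hw (h ▸ H.head_mem _ huv)
  unfold indeg
  by_cases hxv : x = v
  · subst hxv
    have hfe : K.arcs.filter (fun a => a.2 = x)
        = insert (w, x) ((H.arcs.filter fun a => a.2 = x).erase (u, x)) := by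
      rw [hKa]
      ext a
      simp only [Finset.mem_filter, Finset.mem_insert, Finset.mem_erase]
      constructor
      · rintro ⟨h | h | ⟨hne, ha⟩, h2⟩
        · subst h; exact absurd h2 hwv
        · subst h; exact Or.inl rfl
        · exact Or.inr ⟨hne, ha, h2⟩
      · rintro (h | ⟨hne, ha, h2⟩)
        · subst h; exact ⟨Or.inr (Or.inl rfl), rfl⟩
        · exact ⟨Or.inr (Or.inr ⟨hne, ha⟩), h2⟩
    rw [hfe]
    exact card_insert_erase (Finset.mem_filter.mpr ⟨huv, rfl⟩)
      (fun h => hw (H.tail_mem _ (Finset.mem_of_mem_filter _ h)))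
  · have hfe : K.arcs.filter (fun a => a.2 = x) = H.arcs.filter (fun a => a.2 = x) := by
      rw [hKa]
      ext a
      simp only [Finset.mem_filter, Finset.mem_insert, Finset.mem_erase]
      constructor
      · rintro ⟨h | h | ⟨hne, ha⟩, h2⟩
        · subst h; exact absurd h2.symm hx
        · subst h; exact absurd h2.symm hxv
        · exact ⟨ha, h2⟩
      · rintro ⟨ha, h2⟩
        refine ⟨Or.inr (Or.inr ⟨?_, ha⟩), h2⟩
        intro h
        rw [h] at h2
        exact hxv h2.symm
    rw [hfe]

lemma subdiv_outdeg (huv : (u, v) ∈ H.arcs) (hw : w ∉ H.verts)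
    (hKa : K.arcs = insert (u, w) (insert (w, v) (H.arcs.erase (u, v))))
    {x : V} (hx : x ≠ w) : K.outdeg x = H.outdeg x := by
  have hwu : w ≠ u := fun h => hw (h ▸ H.tail_mem _ huv)
  have hwv : w ≠ v := fun h => hw (h ▸ H.head_mem _ huv)
  unfold outdeg
  by_cases hxu : x = u
  · subst hxu
    have hfe : K.arcs.filter (fun a => a.1 = x)
        = insert (x, w) ((H.arcs.filter fun a => a.1 = x).erase (x, v)) := by
      rw [hKa]
      ext a
      simp only [Finset.mem_filter, Finset.mem_insert, Finset.mem_erase]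
      constructor
      · rintro ⟨h | h | ⟨hne, ha⟩, h1⟩
        · subst h; exact Or.inl rfl
        · subst h; exact absurd h1 hwu
        · exact Or.inr ⟨hne, ha, h1⟩
      · rintro (h | ⟨hne, ha, h1⟩)
        · subst h; exact ⟨Or.inl rfl, rfl⟩
        · exact ⟨Or.inr (Or.inr ⟨hne, ha⟩), h1⟩
    rw [hfe]
    exact card_insert_erase (Finset.mem_filter.mpr ⟨huv, rfl⟩)
      (fun h => hw (H.head_mem _ (Finset.mem_of_mem_filter _ h)))
  · have hfe : K.arcs.filter (fun a => a.1 = x) = H.arcs.filter (fun a => a.1 = x) := by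
      rw [hKa]
      ext a
      simp only [Finset.mem_filter, Finset.mem_insert, Finset.mem_erase]
      constructor
      · rintro ⟨h | h | ⟨hne, ha⟩, h1⟩
        · subst h; exact absurd h1.symm hxu
        · subst h; exact absurd h1.symm hx
        · exact ⟨ha, h1⟩
      · rintro ⟨ha, h1⟩
        refine ⟨Or.inr (Or.inr ⟨?_, ha⟩), h1⟩
        intro h
        rw [h] at h1
        exact hxu h1.symm
    rw [hfe]

lemma subdiv_indeg_w (huv : (u, v) ∈ H.arcs) (hw : w ∉ H.verts)
    (hKa : K.arcs = insert (u, w) (insert (w, v) (H.arcs.erase (u, v)))) :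
    K.indeg w = 1 := by
  have hwv : w ≠ v := fun h => hw (h ▸ H.head_mem _ huv)
  have hfe : K.arcs.filter (fun a => a.2 = w) = {(u, w)} := by
    rw [hKa]
    ext a
    simp only [Finset.mem_filter, Finset.mem_insert, Finset.mem_erase,
      Finset.mem_singleton]
    constructor
    · rintro ⟨h | h | ⟨hne, ha⟩, h2⟩
      · exact h
      · subst h; exact absurd h2 (Ne.symm hwv)
      · exact absurd (h2 ▸ H.head_mem _ ha) hw
    · intro h; subst h; exact ⟨Or.inl rfl, rfl⟩
  unfold indeg
  rw [hfe, Finset.card_singleton]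

lemma subdiv_outdeg_w (huv : (u, v) ∈ H.arcs) (hw : w ∉ H.verts)
    (hKa : K.arcs = insert (u, w) (insert (w, v) (H.arcs.erase (u, v)))) :
    K.outdeg w = 1 := by
  have hwu : w ≠ u := fun h => hw (h ▸ H.tail_mem _ huv)
  have hfe : K.arcs.filter (fun a => a.1 = w) = {(w, v)} := by
    rw [hKa]
    ext a
    simp only [Finset.mem_filter, Finset.mem_insert, Finset.mem_erase,
      Finset.mem_singleton]
    constructor
    · rintro ⟨h | h | ⟨hne, ha⟩, h1⟩
      · subst h; exact absurd h1 (Ne.symm hwu)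
      · exact h
      · exact absurd (h1 ▸ H.tail_mem _ ha) hw
    · intro h; subst h; exact ⟨Or.inr (Or.inl rfl), rfl⟩
  unfold outdeg
  rw [hfe, Finset.card_singleton]

lemma subdiv_acyclic (huv : (u, v) ∈ H.arcs) (hw : w ∉ H.verts)
    (hKa : K.arcs = insert (u, w) (insert (w, v) (H.arcs.erase (u, v))))
    (hH : H.Acyclic) : K.Acyclic := by
  have hu : u ∈ H.verts := H.tail_mem _ huv
  have hv' : v ∈ H.verts := H.head_mem _ huv
  have hwu : w ≠ u := fun h => hw (h ▸ hu)
  have hwv : w ≠ v := fun h => hw (h ▸ hv')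
  set f : V → V := fun z => if z = w then u else z with hf
  have hfw : f w = u := by simp [hf]
  have hfu : f u = u := by simp [hf, Ne.symm hwu]
  have hfv : f v = v := by simp [hf, Ne.symm hwv]
  have hstep : ∀ a b : V, (a, b) ∈ K.arcs →
      Relation.TransGen (fun p q => (p, q) ∈ H.arcs) (f a) (f b) ∨ (a = u ∧ b = w) := by
    intro a b hab
    rw [hKa] at hab
    simp only [Finset.mem_insert, Finset.mem_erase, Prod.mk.injEq] at hab
    rcases hab with ⟨h1, h2⟩ | ⟨h1, h2⟩ | ⟨hne, hab⟩
    · exact Or.inr ⟨h1, h2⟩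
    · subst h1; subst h2
      rw [hfw, hfv]
      exact Or.inl (Relation.TransGen.single huv)
    · left
      have haw : a ≠ w := fun h => hw (h ▸ H.tail_mem _ hab)
      have hbw : b ≠ w := fun h => hw (h ▸ H.head_mem _ hab)
      have h1 : f a = a := by simp [hf, haw]
      have h2 : f b = b := by simp [hf, hbw]
      rw [h1, h2]
      exact Relation.TransGen.single hab
  have key : ∀ a b : V, Relation.TransGen (fun p q => (p, q) ∈ K.arcs) a b →
      Relation.TransGen (fun p q => (p, q) ∈ H.arcs) (f a) (f b) ∨ (a = u ∧ b = w) := by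
    intro a b hab
    induction hab with
    | single h => exact hstep _ _ h
    | tail hab h ih =>
      rename_i b' c'
      rcases ih with ihl | ⟨h1, h2⟩
      · rcases hstep _ _ h with hl | ⟨h1, h2⟩
        · exact Or.inl (ihl.trans hl)
        · subst h1; subst h2
          rw [hfw]
          rw [hfu] at ihl
          exact Or.inl ihl
      · subst h1; subst h2
        rcases hstep _ _ h with hl | ⟨h1, h2⟩
        · rw [hfw] at hl
          rw [hfu]
          exact Or.inl hl
        · exact absurd h1 hwu
  intro x hx
  rcases key x x hx with hcy | ⟨h1, h2⟩
  · exact hH (f x) hcy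
  · exact hw ((h1.symm.trans h2) ▸ hu)

end Subdiv

lemma good_subdivide {H K : Dgraph V} {X : Finset V} {ρ : V}
    (hG : Good H X ρ) (hsd : SubdivideArc H K) : Good K X ρ := by
  obtain ⟨u, v, w, huv, hw, hKv, hKa⟩ := hsd
  have hρw : ρ ≠ w := fun h => hw (h ▸ hG.rho_mem)
  refine ⟨subdiv_acyclic huv hw hKa hG.acyclic, hG.X_ne,
    ?_, ?_, ?_, ?_, ?_, ?_, ?_⟩
  · intro x hx
    rw [hKv]
    exact Finset.mem_insert_of_mem (hG.X_sub hx)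
  · rw [hKv]; exact Finset.mem_insert_of_mem hG.rho_mem
  · rw [subdiv_indeg huv hw hKa hρw]; exact hG.rho_in
  · rw [subdiv_outdeg huv hw hKa hρw]; exact hG.rho_out
  · intro x hx hxρ
    rw [hKv, Finset.mem_insert] at hx
    rcases hx with rfl | hx
    · exact subdiv_indeg_w huv hw hKa
    · have hxw : x ≠ w := fun h => hw (h ▸ hx)
      rw [subdiv_indeg huv hw hKa hxw]
      exact hG.in_one x hx hxρ
  · intro x hx
    rw [hKv, Finset.mem_insert] at hx
    rcases hx with rfl | hx
    · rw [subdiv_outdeg_w huv hw hKa]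
      constructor
      · omega
      · intro hX; exact absurd (hG.X_sub hX) hw
    · have hxw : x ≠ w := fun h => hw (h ▸ hx)
      rw [subdiv_outdeg huv hw hKa hxw]
      exact hG.out_zero_iff x hx
  · intro x hx
    rw [hKv, Finset.mem_insert] at hx
    rcases hx with rfl | hx
    · rw [subdiv_outdeg_w huv hw hKa]; omega
    · have hxw : x ≠ w := fun h => hw (h ▸ hx)
      rw [subdiv_outdeg huv hw hKa hxw]
      exact hG.out_le x hx

lemma good_of_subdivisionOf {T τ : Dgraph V} {X : Finset V} {ρ : V}
    (hG : Good T X ρ) (hsub : IsSubdivisionOf T τ) : Good τ X ρ := by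
  induction hsub with
  | refl => exact hG
  | step hsub hstep ih => exact good_subdivide ih hstep

lemma good_rbpt {G : Dgraph V} {X : Finset V} {ρ : V} (hG : Good G X ρ)
    (hno : ∀ w ∈ G.verts, ¬(G.indeg w = 1 ∧ G.outdeg w = 1)) : IsRBPT G X := by
  refine ⟨⟨hG.acyclic, hG.X_ne, hG.X_sub, ρ, hG.rho_mem, hG.rho_in, hG.rho_out,
    ?_, ?_, ?_⟩, ?_⟩
  · intro v hv h0
    by_contra hne
    have := hG.in_one v hv hne
    omega
  · intro v hv
    constructor
    · intro h
      exact (hG.out_zero_iff v hv).mp h.2.2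
    · intro hvX
      have hvρ : v ≠ ρ := fun h => hG.rho_not_mem_X (h ▸ hvX)
      exact ⟨hv, hG.in_one v hv hvρ, (hG.out_zero_iff v hv).mpr hvX⟩
  · intro v hv hvX hvρ
    left
    have hin := hG.in_one v hv hvρ
    have h0 : G.outdeg v ≠ 0 := fun h => hvX ((hG.out_zero_iff v hv).mp h)
    have h2 := hG.out_le v hv
    have h1 : G.outdeg v ≠ 1 := fun h => hno v hv ⟨hin, h⟩
    exact ⟨hin, by omega⟩
  · intro v hv
    by_cases h : v = ρ
    · subst h; rw [hG.rho_in]; omega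
    · rw [hG.in_one v hv h]; omega

lemma good_exists_tree : ∀ n : ℕ, ∀ (G : Dgraph V) (X : Finset V) (ρ : V),
    G.verts.card ≤ n → Good G X ρ →
    ∃ T : Dgraph V, IsRBPT T X ∧ IsSubdivisionOf T G := by
  intro n
  induction n with
  | zero =>
    intro G X ρ hcard hG
    have := Finset.card_pos.mpr ⟨ρ, hG.rho_mem⟩
    omega
  | succ n ih =>
    intro G X ρ hcard hG
    by_cases hex : ∃ w ∈ G.verts, G.indeg w = 1 ∧ G.outdeg w = 1
    · obtain ⟨w, hwverts, hwin, hwout⟩ := hex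
      obtain ⟨ain, hain, hain2⟩ := exists_of_indeg_pos (show 0 < G.indeg w by omega)
      obtain ⟨aout, haout, haout1⟩ := exists_of_outdeg_pos (show 0 < G.outdeg w by omega)
      set u : V := ain.1 with hu
      set v : V := aout.2 with hv
      have huw : (u, w) ∈ G.arcs := by rw [← hain2]; exact hain
      have hwv' : (w, v) ∈ G.arcs := by rw [← haout1]; exact haout
      have hnu : u ≠ w := by
        intro h
        exact hG.acyclic w (Relation.TransGen.single (h ▸ huw))
      have hnv : v ≠ w := by
        intro h
        exact hG.acyclic w (Relation.TransGen.single (h ▸ hwv'))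
      have hin_uniq : ∀ a ∈ G.arcs, a.2 = w → a = (u, w) :=
        fun a ha h2 => indeg_unique hwin a ha h2 (u, w) huw rfl
      have hout_uniq : ∀ a ∈ G.arcs, a.1 = w → a = (w, v) :=
        fun a ha h1 => outdeg_unique hwout a ha h1 (w, v) hwv' rfl
      have huv_notin : (u, v) ∉ G.arcs := by
        intro hmem
        have hpos : 0 < G.indeg v := indeg_pos hwv' rfl
        have hvρ : v ≠ ρ := by
          intro h
          rw [h, hG.rho_in] at hpos
          omega
        have hone := hG.in_one v (G.head_mem (w, v) hwv') hvρ
        have heq := indeg_unique hone (w, v) hwv' rfl (u, v) hmem rfl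
        exact hnu (congrArg Prod.fst heq).symm
      set E : Finset (V × V) := (G.arcs.erase (u, w)).erase (w, v) with hE
      have hE_sub : ∀ a ∈ E, a ∈ G.arcs :=
        fun a ha => Finset.mem_of_mem_erase (Finset.mem_of_mem_erase ha)
      set H : Dgraph V :=
        { verts := G.verts.erase w
          arcs := insert (u, v) E
          tail_mem := by
            intro a ha
            rcases Finset.mem_insert.mp ha with h | h
            · subst h
              exact Finset.mem_erase.mpr ⟨hnu, G.tail_mem (u, w) huw⟩
            · refine Finset.mem_erase.mpr ⟨?_, G.tail_mem _ (hE_sub _ h)⟩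
              intro h1
              have := hout_uniq a (hE_sub _ h) h1
              exact (Finset.mem_erase.mp h).1 this
          head_mem := by
            intro a ha
            rcases Finset.mem_insert.mp ha with h | h
            · subst h
              exact Finset.mem_erase.mpr ⟨hnv, G.head_mem (w, v) hwv'⟩
            · refine Finset.mem_erase.mpr ⟨?_, G.head_mem _ (hE_sub _ h)⟩
              intro h2
              have := hin_uniq a (hE_sub _ h) h2
              exact (Finset.mem_erase.mp (Finset.mem_of_mem_erase h)).1 this } with hH
      have hHverts : H.verts = G.verts.erase w := rfl
      have hHarcs : H.arcs = insert (u, v) E := rfl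
      have huvH : (u, v) ∈ H.arcs := Finset.mem_insert_self _ _
      have hwH : w ∉ H.verts := Finset.notMem_erase w _
      have harc : G.arcs = insert (u, w) (insert (w, v) (H.arcs.erase (u, v))) := by
        have h1 : H.arcs.erase (u, v) = E := by
          rw [hHarcs]
          apply Finset.erase_insert
          intro hmem
          exact huv_notin (hE_sub _ hmem)
        have h2 : insert (w, v) E = G.arcs.erase (u, w) := by
          rw [hE]
          apply Finset.insert_erase
          refine Finset.mem_erase.mpr ⟨?_, hwv'⟩
          intro h
          exact hnv (congrArg Prod.snd h)
        rw [h1, h2, Finset.insert_erase huw]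
      have hSA : SubdivideArc H G :=
        ⟨u, v, w, huvH, hwH, (Finset.insert_erase hwverts).symm, harc⟩
      have hwX : w ∉ X := by
        intro h
        have := (hG.out_zero_iff w hwverts).mpr h
        omega
      have hρw : ρ ≠ w := by
        intro h
        rw [← h] at hwin
        rw [hG.rho_in] at hwin
        omega
      have hGood : Good H X ρ := by
        refine ⟨?_, hG.X_ne, ?_, ?_, ?_, ?_, ?_, ?_, ?_⟩
        · refine acyclic_of_arc_implies ?_ hG.acyclic
          intro a b hab
          rcases Finset.mem_insert.mp hab with h | h
          · have h1 := congrArg Prod.fst h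
            have h2 := congrArg Prod.snd h
            dsimp at h1 h2
            subst h1; subst h2
            exact (Relation.TransGen.single huw).tail hwv'
          · exact Relation.TransGen.single (hE_sub _ h)
        · intro x hx
          refine Finset.mem_erase.mpr ⟨?_, hG.X_sub hx⟩
          intro h
          exact hwX (h ▸ hx)
        · exact Finset.mem_erase.mpr ⟨hρw, hG.rho_mem⟩
        · rw [← subdiv_indeg huvH hwH harc hρw]
          exact hG.rho_in
        · rw [← subdiv_outdeg huvH hwH harc hρw]
          exact hG.rho_out
        · intro x hx hxρ
          obtain ⟨hxw, hxG⟩ := Finset.mem_erase.mp hx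
          rw [← subdiv_indeg huvH hwH harc hxw]
          exact hG.in_one x hxG hxρ
        · intro x hx
          obtain ⟨hxw, hxG⟩ := Finset.mem_erase.mp hx
          rw [← subdiv_outdeg huvH hwH harc hxw]
          exact hG.out_zero_iff x hxG
        · intro x hx
          obtain ⟨hxw, hxG⟩ := Finset.mem_erase.mp hx
          rw [← subdiv_outdeg huvH hwH harc hxw]
          exact hG.out_le x hxG
      have hcard' : H.verts.card ≤ n := by
        rw [hHverts, Finset.card_erase_of_mem hwverts]
        have : 0 < G.verts.card := Finset.card_pos.mpr ⟨w, hwverts⟩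
        omega
      obtain ⟨T, hT, hsub⟩ := ih H X ρ hcard' hGood
      exact ⟨T, hT, hsub.step hSA⟩
    · push_neg at hex
      exact ⟨G, good_rbpt hG (fun w hw h => hex w hw h.1 h.2), IsSubdivisionOf.refl G⟩

lemma rbpn_facts {N : Dgraph V} {X : Finset V} (hN : IsRBPN N X) :
    ∃ ρ ∈ N.verts, N.indeg ρ = 0 ∧ (N.outdeg ρ = 1 ∨ N.outdeg ρ = 2) ∧ ρ ∉ X ∧
      (∀ v ∈ N.verts, v ≠ ρ → (N.indeg v = 1 ∨ N.indeg v = 2)) ∧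
      (∀ v ∈ N.verts, (N.outdeg v = 0 ↔ v ∈ X)) ∧
      (∀ v ∈ N.verts, N.outdeg v ≤ 2) ∧ (∀ v ∈ N.verts, N.indeg v ≤ 2) := by
  obtain ⟨hac, hne, hXs, ρ, hρv, hρin, hρout, huniq, hleaf, hint⟩ := hN
  have hρX : ρ ∉ X := by
    intro h
    have := ((hleaf ρ hρv).mpr h).2.1
    omega
  refine ⟨ρ, hρv, hρin, hρout, hρX, ?_, ?_, ?_, ?_⟩
  · intro v hv hvρ
    by_cases hvX : v ∈ X
    · exact Or.inl ((hleaf v hv).mpr hvX).2.1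
    · rcases hint v hv hvX hvρ with ⟨h1, _⟩ | ⟨h1, _⟩
      · exact Or.inl h1
      · exact Or.inr h1
  · intro v hv
    constructor
    · intro h0
      by_contra hvX
      have hvρ : v ≠ ρ := by rintro rfl; rcases hρout with h' | h' <;> omega
      rcases hint v hv hvX hvρ with ⟨_, h'⟩ | ⟨_, h'⟩ <;> omega
    · intro hvX
      exact ((hleaf v hv).mpr hvX).2.2
  · intro v hv
    by_cases hvρ : v = ρ
    · subst hvρ; rcases hρout with h' | h' <;> omega
    by_cases hvX : v ∈ X
    · have := ((hleaf v hv).mpr hvX).2.2; omega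
    · rcases hint v hv hvX hvρ with ⟨_, h'⟩ | ⟨_, h'⟩ <;> omega
  · intro v hv
    by_cases hvρ : v = ρ
    · subst hvρ; omega
    by_cases hvX : v ∈ X
    · have := ((hleaf v hv).mpr hvX).2.1; omega
    · rcases hint v hv hvX hvρ with ⟨h', _⟩ | ⟨h', _⟩ <;> omega

lemma admissible_good {N : Dgraph V} {X : Finset V} {S : Finset (V × V)}
    (hN : IsRBPN N X) (hS : IsAdmissible N S) :
    (ofArcs S).verts = N.verts ∧ ∃ ρ : V, Good (ofArcs S) X ρ := by
  obtain ⟨hsub, hforce, hhead, htail⟩ := hS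
  obtain ⟨ρ, hρv, hρin, hρout, hρX, hin12, hout0, houtle, hinle⟩ := rbpn_facts hN
  have hXne : X.Nonempty := hN.2.1
  have harcs : (ofArcs S).arcs = S := rfl
  -- in-degree in S of every non-root vertex is 1
  have h_in : ∀ v ∈ N.verts, v ≠ ρ → (ofArcs S).indeg v = 1 := by
    intro v hv hvρ
    rcases hin12 v hv hvρ with h1 | h2
    · obtain ⟨a, ha⟩ := Finset.card_eq_one.mp h1
      have haS : a ∈ S := by
        have hmem : a ∈ N.arcs.filter fun b => b.2 = v := ha ▸ Finset.mem_singleton_self a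
        obtain ⟨haN, hav⟩ := Finset.mem_filter.mp hmem
        exact hforce a haN (Or.inl (by rw [hav]; exact h1))
      have hav : a.2 = v := by
        have hmem : a ∈ N.arcs.filter fun b => b.2 = v := ha ▸ Finset.mem_singleton_self a
        exact (Finset.mem_filter.mp hmem).2
      apply Finset.card_eq_one.mpr
      refine ⟨a, ?_⟩
      apply Finset.eq_singleton_iff_unique_mem.mpr
      refine ⟨Finset.mem_filter.mpr ⟨haS, hav⟩, ?_⟩
      intro b hb
      obtain ⟨hbS, hbv⟩ := Finset.mem_filter.mp hb
      have : b ∈ N.arcs.filter fun c => c.2 = v := Finset.mem_filter.mpr ⟨hsub hbS, hbv⟩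
      rw [ha] at this
      exact Finset.mem_singleton.mp this
    · obtain ⟨a, b, hab, hfil⟩ := Finset.card_eq_two.mp h2
      have haN : a ∈ N.arcs ∧ a.2 = v := by
        have : a ∈ N.arcs.filter fun c => c.2 = v := by rw [hfil]; simp
        exact Finset.mem_filter.mp this
      have hbN : b ∈ N.arcs ∧ b.2 = v := by
        have : b ∈ N.arcs.filter fun c => c.2 = v := by rw [hfil]; simp
        exact Finset.mem_filter.mp this
      have hone := hhead a haN.1 b hbN.1 hab (haN.2.trans hbN.2.symm)
      apply Finset.card_eq_one.mpr
      rcases hone with ⟨haS, hbS⟩ | ⟨haS, hbS⟩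
      · refine ⟨a, Finset.eq_singleton_iff_unique_mem.mpr
          ⟨Finset.mem_filter.mpr ⟨haS, haN.2⟩, ?_⟩⟩
        intro c hc
        obtain ⟨hcS, hcv⟩ := Finset.mem_filter.mp hc
        have : c ∈ N.arcs.filter fun d => d.2 = v := Finset.mem_filter.mpr ⟨hsub hcS, hcv⟩
        rw [hfil] at this
        rcases Finset.mem_insert.mp this with h | h
        · exact h
        · exact absurd (Finset.mem_singleton.mp h ▸ hcS) hbS
      · refine ⟨b, Finset.eq_singleton_iff_unique_mem.mpr
          ⟨Finset.mem_filter.mpr ⟨hbS, hbN.2⟩, ?_⟩⟩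
        intro c hc
        obtain ⟨hcS, hcv⟩ := Finset.mem_filter.mp hc
        have : c ∈ N.arcs.filter fun d => d.2 = v := Finset.mem_filter.mpr ⟨hsub hcS, hcv⟩
        rw [hfil] at this
        rcases Finset.mem_insert.mp this with h | h
        · exact absurd (h ▸ hcS) haS
        · exact Finset.mem_singleton.mp h
  -- out-degree in S of non-leaf vertices is positive
  have h_out_pos : ∀ v ∈ N.verts, v ∉ X → 0 < (ofArcs S).outdeg v := by
    intro v hv hvX
    have h0 : N.outdeg v ≠ 0 := fun h => hvX ((hout0 v hv).mp h)
    have hle := houtle v hv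
    rcases (show N.outdeg v = 1 ∨ N.outdeg v = 2 by omega) with h1 | h2
    · obtain ⟨a, ha⟩ := Finset.card_eq_one.mp h1
      have hmem : a ∈ N.arcs.filter fun b => b.1 = v := ha ▸ Finset.mem_singleton_self a
      obtain ⟨haN, hav⟩ := Finset.mem_filter.mp hmem
      have haS : a ∈ S := hforce a haN (Or.inr (by rw [hav]; exact h1))
      exact outdeg_pos (G := ofArcs S) haS hav
    · obtain ⟨a, b, hab, hfil⟩ := Finset.card_eq_two.mp h2
      have haN : a ∈ N.arcs ∧ a.1 = v := by
        have : a ∈ N.arcs.filter fun c => c.1 = v := by rw [hfil]; simp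
        exact Finset.mem_filter.mp this
      have hbN : b ∈ N.arcs ∧ b.1 = v := by
        have : b ∈ N.arcs.filter fun c => c.1 = v := by rw [hfil]; simp
        exact Finset.mem_filter.mp this
      rcases htail a haN.1 b hbN.1 hab (haN.2.trans hbN.2.symm) with h | h
      · exact outdeg_pos (G := ofArcs S) h haN.2
      · exact outdeg_pos (G := ofArcs S) h hbN.2
  have h_out_le : ∀ v : V, (ofArcs S).outdeg v ≤ N.outdeg v :=
    fun v => Finset.card_le_card (Finset.filter_subset_filter _ hsub)
  have h_in_le : ∀ v : V, (ofArcs S).indeg v ≤ N.indeg v :=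
    fun v => Finset.card_le_card (Finset.filter_subset_filter _ hsub)
  have hverts : (ofArcs S).verts = N.verts := by
    apply Finset.Subset.antisymm
    · intro x hx
      rcases Finset.mem_union.mp hx with h | h
      · obtain ⟨a, haS, ha⟩ := Finset.mem_image.mp h
        exact ha ▸ N.tail_mem a (hsub haS)
      · obtain ⟨a, haS, ha⟩ := Finset.mem_image.mp h
        exact ha ▸ N.head_mem a (hsub haS)
    · intro x hx
      by_cases hxρ : x = ρ
      · subst hxρ
        obtain ⟨a, haS, ha1⟩ := exists_of_outdeg_pos (h_out_pos x hx hρX)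
        exact Finset.mem_union_left _ (Finset.mem_image.mpr ⟨a, haS, ha1⟩)
      · have := h_in x hx hxρ
        obtain ⟨a, haS, ha2⟩ := exists_of_indeg_pos (show 0 < (ofArcs S).indeg x by omega)
        exact Finset.mem_union_right _ (Finset.mem_image.mpr ⟨a, haS, ha2⟩)
  refine ⟨hverts, ρ, ?_, hXne, ?_, ?_, ?_, ?_, ?_, ?_, ?_⟩
  · refine acyclic_of_arc_implies ?_ hN.1
    intro a b hab
    exact Relation.TransGen.single (hsub hab)
  · rw [hverts]; exact hN.2.2.1
  · rw [hverts]; exact hρv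
  · have := h_in_le ρ
    omega
  · have h1 := h_out_pos ρ hρv hρX
    have h2 := h_out_le ρ
    have h3 := houtle ρ hρv
    omega
  · intro v hv hvρ
    rw [hverts] at hv
    exact h_in v hv hvρ
  · intro v hv
    rw [hverts] at hv
    constructor
    · intro h0
      by_contra hvX
      have := h_out_pos v hv hvX
      omega
    · intro hvX
      have h1 := h_out_le v
      have h2 : N.outdeg v = 0 := (hout0 v hv).mpr hvX
      omega
  · intro v hv
    rw [hverts] at hv
    have h1 := h_out_le v
    have h2 := houtle v hv
    omega

lemma support_tree_eq_and_admissible {N τ : Dgraph V} {X : Finset V}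
    (hN : IsRBPN N X) (hτ : IsSupportTree N X τ) :
    IsAdmissible N τ.arcs ∧ ofArcs τ.arcs = τ := by
  obtain ⟨hveq, hsub, T, hT, hTsub⟩ := hτ
  obtain ⟨ρ', hG0⟩ := good_of_rbpt hT
  have hG : Good τ X ρ' := good_of_subdivisionOf hG0 hTsub
  obtain ⟨ρ, hρv, hρin, hρout, hρX, hin12, hout0, houtle, hinle⟩ := rbpn_facts hN
  have h_in_le : ∀ v : V, τ.indeg v ≤ N.indeg v :=
    fun v => Finset.card_le_card (Finset.filter_subset_filter _ hsub)
  have hρρ' : ρ' = ρ := by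
    by_contra h
    have hρτ : ρ ∈ τ.verts := hveq ▸ hρv
    have h1 := hG.in_one ρ hρτ (fun hh => h hh.symm)
    have h2 := h_in_le ρ
    rw [hρin] at h2
    omega
  subst hρρ'
  constructor
  · refine ⟨hsub, ?_, ?_, ?_⟩
    · -- forced arcs
      intro a haN hcase
      rcases hcase with h1 | h1
      · have hv : a.2 ∈ N.verts := N.head_mem a haN
        have hvρ : a.2 ≠ ρ' := by
          intro h
          rw [h, hρin] at h1
          omega
        have hτin := hG.in_one a.2 (hveq ▸ hv) hvρ
        obtain ⟨b, hbτ, hb2⟩ := exists_of_indeg_pos (show 0 < τ.indeg a.2 by omega)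
        have hba : b = a := indeg_unique h1 b (hsub hbτ) hb2 a haN rfl
        exact hba ▸ hbτ
      · have hv : a.1 ∈ N.verts := N.tail_mem a haN
        have hvX : a.1 ∉ X := by
          intro h
          have := (hout0 a.1 hv).mpr h
          omega
        have h0 : τ.outdeg a.1 ≠ 0 := fun h => hvX ((hG.out_zero_iff a.1 (hveq ▸ hv)).mp h)
        obtain ⟨b, hbτ, hb1⟩ := exists_of_outdeg_pos (show 0 < τ.outdeg a.1 by omega)
        have hba : b = a := outdeg_unique h1 b (hsub hbτ) hb1 a haN rfl
        exact hba ▸ hbτ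
    · -- two arcs with the same head
      intro a₁ h1 a₂ h2 hne hh
      have hymem : a₁.2 ∈ N.verts := N.head_mem _ h1
      have hge : 1 < N.indeg a₁.2 := Finset.one_lt_card.mpr
        ⟨a₁, Finset.mem_filter.mpr ⟨h1, rfl⟩, a₂, Finset.mem_filter.mpr ⟨h2, hh.symm⟩, hne⟩
      have hle := hinle a₁.2 hymem
      have hset : ({a₁, a₂} : Finset (V × V)) = N.arcs.filter fun c => c.2 = a₁.2 := by
        apply Finset.eq_of_subset_of_card_le
        · intro c hc
          rcases Finset.mem_insert.mp hc with h | h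
          · subst h; exact Finset.mem_filter.mpr ⟨h1, rfl⟩
          · rw [Finset.mem_singleton.mp h]; exact Finset.mem_filter.mpr ⟨h2, hh.symm⟩
        · rw [Finset.card_pair hne]
          exact hle
      have hyρ : a₁.2 ≠ ρ' := by
        intro h
        rw [h, hρin] at hge
        omega
      have hτin := hG.in_one a₁.2 (hveq ▸ hymem) hyρ
      obtain ⟨c, hcτ, hc2⟩ := exists_of_indeg_pos (show 0 < τ.indeg a₁.2 by omega)
      have hcN : c ∈ ({a₁, a₂} : Finset (V × V)) := by
        rw [hset]
        exact Finset.mem_filter.mpr ⟨hsub hcτ, hc2⟩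
      rcases Finset.mem_insert.mp hcN with h | h
      · subst h
        refine Or.inl ⟨hcτ, ?_⟩
        intro hb
        exact hne (indeg_unique hτin c hcτ hc2 a₂ hb hh.symm)
      · rw [Finset.mem_singleton.mp h] at hcτ hc2
        refine Or.inr ⟨?_, hcτ⟩
        intro hb
        exact hne (indeg_unique hτin a₁ hb rfl a₂ hcτ hc2)
    · -- two arcs with the same tail
      intro a₁ h1 a₂ h2 hne hh
      have hxmem : a₁.1 ∈ N.verts := N.tail_mem _ h1
      have hge : 1 < N.outdeg a₁.1 := Finset.one_lt_card.mpr
        ⟨a₁, Finset.mem_filter.mpr ⟨h1, rfl⟩, a₂, Finset.mem_filter.mpr ⟨h2, hh.symm⟩, hne⟩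
      have hxX : a₁.1 ∉ X := by
        intro h
        have := (hout0 a₁.1 hxmem).mpr h
        omega
      have hle := houtle a₁.1 hxmem
      have hset : ({a₁, a₂} : Finset (V × V)) = N.arcs.filter fun c => c.1 = a₁.1 := by
        apply Finset.eq_of_subset_of_card_le
        · intro c hc
          rcases Finset.mem_insert.mp hc with h | h
          · subst h; exact Finset.mem_filter.mpr ⟨h1, rfl⟩
          · rw [Finset.mem_singleton.mp h]; exact Finset.mem_filter.mpr ⟨h2, hh.symm⟩
        · rw [Finset.card_pair hne]
          exact hle
      have h0 : τ.outdeg a₁.1 ≠ 0 :=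
        fun h => hxX ((hG.out_zero_iff a₁.1 (hveq ▸ hxmem)).mp h)
      obtain ⟨c, hcτ, hc1⟩ := exists_of_outdeg_pos (show 0 < τ.outdeg a₁.1 by omega)
      have hcN : c ∈ ({a₁, a₂} : Finset (V × V)) := by
        rw [hset]
        exact Finset.mem_filter.mpr ⟨hsub hcτ, hc1⟩
      rcases Finset.mem_insert.mp hcN with h | h
      · exact Or.inl (h ▸ hcτ)
      · exact Or.inr (Finset.mem_singleton.mp h ▸ hcτ)
  · -- ofArcs τ.arcs = τ
    refine ext' ?_ rfl
    apply Finset.Subset.antisymm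
    · intro x hx
      rcases Finset.mem_union.mp hx with h | h
      · obtain ⟨a, haS, ha⟩ := Finset.mem_image.mp h
        exact ha ▸ τ.tail_mem a haS
      · obtain ⟨a, haS, ha⟩ := Finset.mem_image.mp h
        exact ha ▸ τ.head_mem a haS
    · intro x hx
      by_cases hxρ : x = ρ'
      · subst hxρ
        have hpos : 0 < τ.outdeg x := by rcases hG.rho_out with h | h <;> omega
        obtain ⟨a, haτ, ha1⟩ := exists_of_outdeg_pos hpos
        exact Finset.mem_union_left _ (Finset.mem_image.mpr ⟨a, haτ, ha1⟩)
      · have := hG.in_one x hx hxρ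
        obtain ⟨a, haτ, ha2⟩ := exists_of_indeg_pos (show 0 < τ.indeg x by omega)
        exact Finset.mem_union_right _ (Finset.mem_image.mpr ⟨a, haτ, ha2⟩)

end Dgraph


/-- For a rooted binary phylogenetic `X`-network `N`, the map
`S ↦ N[S]` is a bijection between the admissible arc-sets of `N` and the support
trees of `N`. -/
theorem stmt1 {V : Type*} [DecidableEq V] (N : Dgraph V) (X : Finset V)
    (hN : Dgraph.IsRBPN N X) :
    Set.BijOn (fun S : Finset (V × V) => Dgraph.ofArcs S)
      {S : Finset (V × V) | Dgraph.IsAdmissible N S}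
      {τ : Dgraph V | Dgraph.IsSupportTree N X τ} := by
  refine ⟨?_, ?_, ?_⟩
  · intro S hS
    obtain ⟨hverts, ρ, hG⟩ := Dgraph.admissible_good hN hS
    exact ⟨hverts, hS.1, Dgraph.good_exists_tree (Dgraph.ofArcs S).verts.card _ X ρ le_rfl hG⟩
  · intro S1 _ S2 _ h
    exact congrArg Dgraph.arcs h
  · intro τ hτ
    obtain ⟨hadm, heq⟩ := Dgraph.support_tree_eq_and_admissible hN hτ
    exact ⟨τ.arcs, hadm, heq⟩
end

section
/- Let N be a tree-based rooted binary phylogenetic X-network. Then the arc sets of the maximal zig-zag trails of N partition A(N); that is, every arc of N belongs to exactly one maximal zig-zag trail, so N is uniquely decomposed into its maximal zig-zag trails Z_1, …, Z_d. -/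
namespace Dgraph

variable {V : Type*}

/-- `Z` is (the arc set of) a zig-zag trail in `N`: a nonempty set of arcs of `N`
admitting an ordering in which any two consecutive arcs share a head or share a tail
(the corresponding subgraph is the one induced by these arcs). -/
def IsZigzag [DecidableEq V] (N : Dgraph V) (Z : Finset (V × V)) : Prop :=
  Z ⊆ N.arcs ∧ ∃ l : List (V × V), l ≠ [] ∧ l.Nodup ∧ l.toFinset = Z ∧
    l.Chain' fun a b => a.2 = b.2 ∨ a.1 = b.1

/-- A maximal zig-zag trail of `N`: one that is not a proper subgraph of another
zig-zag trail in `N`. -/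
def IsMaxZigzag [DecidableEq V] (N : Dgraph V) (Z : Finset (V × V)) : Prop :=
  IsZigzag N Z ∧ ∀ Z' : Finset (V × V), IsZigzag N Z' → Z ⊆ Z' → Z' = Z

end Dgraph


section Aux

private lemma chain_reach {α : Type*} {r : α → α → Prop} :
    ∀ {t : List α} {a : α}, List.Chain r a t → ∀ x ∈ t, Relation.ReflTransGen r a x := by
  intro t
  induction t with
  | nil => intro a _ x hx; simp at hx
  | cons b t ih =>
    intro a h x hx
    rcases List.chain_cons.mp h with ⟨hab, hbt⟩
    rcases List.mem_cons.mp hx with rfl | hx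
    · exact Relation.ReflTransGen.single hab
    · exact Relation.ReflTransGen.head hab (ih hbt x hx)

private lemma chain'_connected {α : Type*} {r : α → α → Prop} (hs : Symmetric r)
    {l : List α} (hl : l.Chain' r) {x y : α} (hx : x ∈ l) (hy : y ∈ l) :
    Relation.ReflTransGen r x y := by
  cases l with
  | nil => simp at hx
  | cons a t =>
    have h : List.Chain r a t := hl
    have hax : ∀ z ∈ a :: t, Relation.ReflTransGen r a z := by
      intro z hz
      rcases List.mem_cons.mp hz with rfl | hz
      · exact Relation.ReflTransGen.refl
      · exact chain_reach h z hz
    exact Relation.ReflTransGen.trans (Relation.ReflTransGen.mono (p := r) (fun u v (h : Function.swap r u v) => hs h) _ _ (Relation.reflTransGen_swap.mpr (hax x hx))) (hax y hy)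

private lemma chain'_and_mem {α : Type*} {r : α → α → Prop} {p : α → Prop} :
    ∀ {l : List α}, l.Chain' r → (∀ x ∈ l, p x) →
      l.Chain' (fun x y => p x ∧ p y ∧ r x y) := by
  intro l
  induction l with
  | nil => intros; exact List.isChain_nil
  | cons a t ih =>
    cases t with
    | nil => intros; exact List.isChain_singleton _
    | cons b t' =>
      intro h hm
      simp only [List.Chain', List.isChain_cons_cons] at h ⊢
      exact ⟨⟨hm a (by simp), hm b (by simp), h.1⟩,
        ih h.2 (fun x hx => hm x (List.mem_cons_of_mem _ hx))⟩

private lemma extend_chain {α : Type*} {r : α → α → Prop} (hs : Symmetric r)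
    {l : List α} (hnd : l.Nodup) (hch : l.Chain' r)
    {b c : α} (hc : c ∈ l) (hb : b ∉ l) (hrcb : r c b)
    (h3 : ∀ p q s : α, r c p → r c q → r c s → p ≠ q → p ≠ s → q ≠ s →
      p = c ∨ q = c ∨ s = c) :
    ∃ l' : List α, l'.Nodup ∧ l'.Chain' r ∧ l'.length = l.length + 1 ∧
      ∀ x, x ∈ l' ↔ x ∈ l ∨ x = b := by
  obtain ⟨s, t, rfl⟩ := List.append_of_mem hc
  cases t with
  | nil =>
    refine ⟨(s ++ [c]) ++ [b], ?_, ?_, by simp, by intro x; simp [or_assoc]⟩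
    · rw [List.nodup_append]
      refine ⟨hnd, by simp, ?_⟩
      intro x hx y hy
      simp only [List.mem_singleton] at hy
      subst hy
      exact fun h => hb (h ▸ hx)
    · refine List.isChain_append.mpr ⟨hch, List.isChain_singleton b, ?_⟩
      intro x hx y hy
      rw [List.getLast?_concat] at hx
      simp only [Option.mem_def, Option.some.injEq] at hx
      simp only [List.head?_cons, Option.mem_def, Option.some.injEq] at hy
      subst hx; subst hy
      exact hrcb
  | cons d t' =>
    rcases List.eq_nil_or_concat s with rfl | ⟨s', p, rfl⟩
    · simp only [List.nil_append] at hnd hch hb ⊢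
      refine ⟨b :: c :: d :: t', ?_, ?_, rfl, by intro x; simp; tauto⟩
      · exact List.nodup_cons.mpr ⟨hb, hnd⟩
      · exact List.isChain_cons_cons.mpr ⟨hs hrcb, hch⟩
    · exfalso
      rw [List.concat_eq_append] at hnd hch hb hc
      obtain ⟨h1, h2, h3'⟩ := List.isChain_append.mp hch
      have hpc : r p c := by
        refine h3' p ?_ c ?_
        · rw [List.getLast?_concat]; rfl
        · rfl
      have hcd : r c d := (List.isChain_cons_cons.mp h2).1
      have hpl : p ∈ s' ++ [p] := by simp
      have hnd2 := List.nodup_append.mp hnd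
      have hpc' : p ≠ c := by
        rintro rfl
        exact hnd2.2.2 _ hpl _ (by simp) rfl
      have hpd : p ≠ d := by
        rintro rfl
        exact hnd2.2.2 _ hpl _ (by simp) rfl
      have hdc : d ≠ c := by
        have := List.nodup_cons.mp hnd2.2.1
        rintro rfl
        exact this.1 (by simp)
      have hpb : p ≠ b := by rintro rfl; exact hb (by simp)
      have hdb : d ≠ b := by rintro rfl; exact hb (by simp)
      have hbc : b ≠ c := by rintro rfl; exact hb (by simp)
      rcases h3 p d b (hs hpc) hcd hrcb hpd hpb hdb with h | h | h
      · exact hpc' h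
      · exact hdc h
      · exact hbc h

end Aux

/-- In a tree-based rooted binary phylogenetic `X`-network `N`, every
arc belongs to exactly one maximal zig-zag trail; hence the arc sets of the maximal
zig-zag trails partition `A(N)` and `N` is uniquely decomposed into its maximal
zig-zag trails. -/
theorem stmt2 {V : Type*} [DecidableEq V] (N : Dgraph V) (X : Finset V)
    (hN : Dgraph.IsRBPN N X) (hTB : Dgraph.IsTreeBased N X) :
    ∀ a ∈ N.arcs, ∃! Z : Finset (V × V), Dgraph.IsMaxZigzag N Z ∧ a ∈ Z := by
  classical
  obtain ⟨hac, hXne, hXsub, ρ, hρv, hρin, hρout, hρuniq, hleaf, hint⟩ := hN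
  have hind : ∀ v ∈ N.verts, N.indeg v ≤ 2 := by
    intro v hv
    by_cases hvX : v ∈ X
    · have := ((hleaf v hv).mpr hvX).2.1; omega
    by_cases hvρ : v = ρ
    · subst hvρ; omega
    rcases hint v hv hvX hvρ with ⟨h, _⟩ | ⟨h, _⟩ <;> omega
  have houtd : ∀ v ∈ N.verts, N.outdeg v ≤ 2 := by
    intro v hv
    by_cases hvX : v ∈ X
    · have := ((hleaf v hv).mpr hvX).2.2; omega
    by_cases hvρ : v = ρ
    · subst hvρ; rcases hρout with h | h <;> omega
    rcases hint v hv hvX hvρ with ⟨_, h⟩ | ⟨_, h⟩ <;> omega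
  intro a ha
  set r : V × V → V × V → Prop :=
    fun x y => x ∈ N.arcs ∧ y ∈ N.arcs ∧ (x.2 = y.2 ∨ x.1 = y.1) with hr
  have hsym : Symmetric r := by
    intro x y ⟨h1, h2, h3⟩
    exact ⟨h2, h1, by tauto⟩
  -- three distinct arcs cannot all be adjacent to c (unless equal to c)
  have H3 : ∀ c ∈ N.arcs, ∀ p q s : V × V, r c p → r c q → r c s →
      p ≠ q → p ≠ s → q ≠ s → p = c ∨ q = c ∨ s = c := by
    intro c hc p q s hp hq hs hpq hps hqs
    by_contra h
    push_neg at h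
    obtain ⟨hpc, hqc, hsc⟩ := h
    have notHead : ∀ x y : V × V, x ∈ N.arcs → y ∈ N.arcs → x ≠ y → x ≠ c → y ≠ c →
        c.2 = x.2 → c.2 = y.2 → False := by
      intro x y hx hy hxy hxc hyc h1 h2
      have hsub : ({x, y, c} : Finset (V × V)) ⊆ N.arcs.filter fun z => z.2 = c.2 := by
        intro z hz
        simp only [Finset.mem_insert, Finset.mem_singleton] at hz
        rcases hz with rfl | rfl | rfl <;> simp [Finset.mem_filter, hx, hy, hc, h1.symm, h2.symm]
      have hcard : ({x, y, c} : Finset (V × V)).card = 3 := by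
        rw [Finset.card_insert_of_notMem (by simp [hxy, hxc]),
          Finset.card_insert_of_notMem (by simp [hyc]), Finset.card_singleton]
      have := Finset.card_le_card hsub
      have h2' := hind c.2 (N.head_mem c hc)
      rw [Dgraph.indeg] at h2'
      omega
    have notTail : ∀ x y : V × V, x ∈ N.arcs → y ∈ N.arcs → x ≠ y → x ≠ c → y ≠ c →
        c.1 = x.1 → c.1 = y.1 → False := by
      intro x y hx hy hxy hxc hyc h1 h2
      have hsub : ({x, y, c} : Finset (V × V)) ⊆ N.arcs.filter fun z => z.1 = c.1 := by
        intro z hz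
        simp only [Finset.mem_insert, Finset.mem_singleton] at hz
        rcases hz with rfl | rfl | rfl <;> simp [Finset.mem_filter, hx, hy, hc, h1.symm, h2.symm]
      have hcard : ({x, y, c} : Finset (V × V)).card = 3 := by
        rw [Finset.card_insert_of_notMem (by simp [hxy, hxc]),
          Finset.card_insert_of_notMem (by simp [hyc]), Finset.card_singleton]
      have := Finset.card_le_card hsub
      have h2' := houtd c.1 (N.tail_mem c hc)
      rw [Dgraph.outdeg] at h2'
      omega
    obtain ⟨_, hpa, hp'⟩ := hp
    obtain ⟨_, hqa, hq'⟩ := hq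
    obtain ⟨_, hsa, hs'⟩ := hs
    rcases hp' with h1 | h1 <;> rcases hq' with h2 | h2 <;> rcases hs' with h3' | h3'
    · exact notHead p q hpa hqa hpq hpc hqc h1 h2
    · exact notHead p q hpa hqa hpq hpc hqc h1 h2
    · exact notHead p s hpa hsa hps hpc hsc h1 h3'
    · exact notTail q s hqa hsa hqs hqc hsc h2 h3'
    · exact notHead q s hqa hsa hqs hqc hsc h2 h3'
    · exact notTail p s hpa hsa hps hpc hsc h1 h3'
    · exact notTail p q hpa hqa hpq hpc hqc h1 h2
    · exact notTail p q hpa hqa hpq hpc hqc h1 h2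
  set C : Finset (V × V) := N.arcs.filter (fun b => Relation.ReflTransGen r a b) with hCdef
  have mem_arcs_of_reach : ∀ x : V × V, Relation.ReflTransGen r a x → x ∈ N.arcs := by
    intro x h
    induction h with
    | refl => exact ha
    | tail _ h _ => exact h.2.1
  set P : List (V × V) → Prop :=
    fun l => l.Nodup ∧ l.Chain' r ∧ a ∈ l ∧ ∀ x ∈ l, Relation.ReflTransGen r a x with hPdef
  have hbdd : ∀ l, P l → l.length ≤ N.arcs.card := by
    intro l hl
    have hsub : l.toFinset ⊆ N.arcs := fun x hx =>
      mem_arcs_of_reach x (hl.2.2.2 x (List.mem_toFinset.mp hx))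
    calc l.length = l.toFinset.card := (List.toFinset_card_of_nodup hl.1).symm
      _ ≤ _ := Finset.card_le_card hsub
  have hPa : P [a] := by
    refine ⟨List.nodup_singleton a, List.isChain_singleton a, List.mem_singleton_self a, ?_⟩
    intro x hx
    rw [List.mem_singleton] at hx
    subst hx
    exact Relation.ReflTransGen.refl
  obtain ⟨l, hPl, hmax⟩ : ∃ l, P l ∧ ∀ l', P l' → l'.length ≤ l.length := by
    set S : Set ℕ := {n | ∃ l, P l ∧ l.length = n} with hS
    have h1 : S.Nonempty := ⟨1, [a], hPa, rfl⟩
    have h2 : BddAbove S := ⟨N.arcs.card, fun n ⟨l, hl, hln⟩ => hln ▸ hbdd l hl⟩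
    obtain ⟨l, hl, hln⟩ := Nat.sSup_mem h1 h2
    exact ⟨l, hl, fun l' hl' => hln ▸ le_csSup h2 ⟨l', hl', rfl⟩⟩
  have hclosed : ∀ c ∈ l, ∀ b, r c b → b ∈ l := by
    intro c hc b hcb
    by_contra hb
    have hcarc : c ∈ N.arcs := hcb.1
    obtain ⟨l', h1, h2, h3, h4⟩ :=
      extend_chain hsym hPl.1 hPl.2.1 hc hb hcb (H3 c hcarc)
    have hPl' : P l' := by
      refine ⟨h1, h2, (h4 a).mpr (Or.inl hPl.2.2.1), ?_⟩
      intro x hx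
      rcases (h4 x).mp hx with hx | rfl
      · exact hPl.2.2.2 x hx
      · exact (hPl.2.2.2 c hc).tail hcb
    have := hmax l' hPl'
    omega
  have hreach_mem : ∀ x, Relation.ReflTransGen r a x → x ∈ l := by
    intro x h
    induction h with
    | refl => exact hPl.2.2.1
    | tail h1 h2 ih => exact hclosed _ ih _ h2
  have hCl : l.toFinset = C := by
    ext x
    simp only [List.mem_toFinset, hCdef, Finset.mem_filter]
    constructor
    · intro hx
      exact ⟨mem_arcs_of_reach x (hPl.2.2.2 x hx), hPl.2.2.2 x hx⟩
    · intro ⟨_, hx⟩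
      exact hreach_mem x hx
  have hCzig : N.IsZigzag C := by
    refine ⟨Finset.filter_subset _ _, l, ?_, hPl.1, hCl, ?_⟩
    · intro h
      rw [h] at hPl
      exact List.not_mem_nil hPl.2.2.1
    · exact hPl.2.1.imp (fun x y h => h.2.2)
  have haC : a ∈ C := Finset.mem_filter.mpr ⟨ha, Relation.ReflTransGen.refl⟩
  have hsubC : ∀ Z', N.IsZigzag Z' → a ∈ Z' → Z' ⊆ C := by
    rintro Z' ⟨hZa, l', hne, hnd, htf, hch⟩ haZ x hx
    have hmem : ∀ y ∈ l', y ∈ N.arcs := by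
      intro y hy
      exact hZa (htf ▸ List.mem_toFinset.mpr hy)
    have hch2 : l'.Chain' r := chain'_and_mem hch hmem
    have hal : a ∈ l' := List.mem_toFinset.mp (htf ▸ haZ)
    have hxl : x ∈ l' := List.mem_toFinset.mp (htf ▸ hx)
    exact Finset.mem_filter.mpr ⟨hZa hx, chain'_connected hsym hch2 hal hxl⟩
  have hCmax : N.IsMaxZigzag C := by
    refine ⟨hCzig, fun Z' hZ' hCZ' => ?_⟩
    exact Finset.Subset.antisymm (hsubC Z' hZ' (hCZ' haC)) hCZ'
  refine ⟨C, ⟨hCmax, haC⟩, ?_⟩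
  rintro Z ⟨hZmax, haZ⟩
  have hZC : Z ⊆ C := hsubC Z hZmax.1 haZ
  exact (hZmax.2 C hCzig hZC).symm
end

section
/- Let N be a tree-based rooted binary phylogenetic X-network. Then every maximal zig-zag trail of N is a crown, an M-fence, or an N-fence. -/
namespace Dgraph

variable {V : Type*}

/-- The `k`-th arc (`k ≥ 1`) of a zig-zag written `v₀ < v₁ > v₂ < v₃ > ⋯`
(so `a₁ = (v₁, v₀)`, `a₂ = (v₁, v₂)`, `a₃ = (v₃, v₂)`, `a₄ = (v₃, v₄)`, …). -/
def mArc (v : ℕ → V) (k : ℕ) : V × V :=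
  if k % 2 = 1 then (v k, v (k - 1)) else (v (k - 1), v k)

/-- The `k`-th arc (`k ≥ 1`) of a zig-zag written `v₀ > v₁ < v₂ > v₃ < ⋯`
(so `a₁ = (v₀, v₁)`, `a₂ = (v₂, v₁)`, `a₃ = (v₂, v₃)`, …). -/
def nArc (v : ℕ → V) (k : ℕ) : V × V :=
  if k % 2 = 1 then (v (k - 1), v k) else (v k, v (k - 1))

/-- `Z` can be written cyclically as `v₀ < v₁ > v₂ < ⋯ > v_m = v₀` with `m` even,
`m ≥ 4` (a crown). -/
def CrownForm [DecidableEq V] (Z : Finset (V × V)) : Prop :=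
  ∃ (m : ℕ) (v : ℕ → V), 4 ≤ m ∧ m % 2 = 0 ∧ v m = v 0 ∧ Z.card = m ∧
    Z = (Finset.Icc 1 m).image (mArc v)

/-- `Z` can be written as `v₀ < v₁ > v₂ < ⋯ < v_{m-1} > v_m` with `m` even
(an M-fence). -/
def MFenceForm [DecidableEq V] (Z : Finset (V × V)) : Prop :=
  ∃ (m : ℕ) (v : ℕ → V), m % 2 = 0 ∧ Z.card = m ∧
    Z = (Finset.Icc 1 m).image (mArc v)

/-- `Z` can be written as `v₀ > v₁ < v₂ > ⋯ < v_{m-1} > v_m` with `m` odd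
(an N-fence). -/
def NFenceForm [DecidableEq V] (Z : Finset (V × V)) : Prop :=
  ∃ (m : ℕ) (v : ℕ → V), m % 2 = 1 ∧ Z.card = m ∧
    Z = (Finset.Icc 1 m).image (nArc v)

end Dgraph

namespace ZigAux

open Dgraph Finset

variable {V : Type*} [DecidableEq V]

lemma degs_le_two {N : Dgraph V} {X : Finset V} (hN : N.IsRBPN X) (v : V) :
    N.indeg v ≤ 2 ∧ N.outdeg v ≤ 2 := by
  by_cases hv : v ∈ N.verts
  · obtain ⟨-, -, -, ρ, hρv, hρin, hρout, -, hleaf, hother⟩ := hN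
    by_cases hvρ : v = ρ
    · subst hvρ; omega
    · by_cases hX : v ∈ X
      · obtain ⟨-, h1, h2⟩ := (hleaf v hv).2 hX; omega
      · rcases hother v hv hX hvρ with ⟨h1, h2⟩ | ⟨h1, h2⟩ <;> omega
  · constructor
    · have h : N.arcs.filter (fun a => a.2 = v) = ∅ := by
        rw [Finset.filter_eq_empty_iff]
        intro a ha h
        exact hv (h ▸ N.head_mem a ha)
      simp [indeg, h]
    · have h : N.arcs.filter (fun a => a.1 = v) = ∅ := by
        rw [Finset.filter_eq_empty_iff]
        intro a ha h
        exact hv (h ▸ N.tail_mem a ha)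
      simp [outdeg, h]

lemma three_head {G : Dgraph V} {a b c : V × V} (ha : a ∈ G.arcs) (hb : b ∈ G.arcs)
    (hc : c ∈ G.arcs) (hab : a ≠ b) (hac : a ≠ c) (hbc : b ≠ c)
    (h1 : b.2 = a.2) (h2 : c.2 = a.2) : 3 ≤ G.indeg a.2 := by
  have hsub : ({a, b, c} : Finset (V × V)) ⊆ G.arcs.filter (fun x => x.2 = a.2) := by
    intro x hx
    simp only [Finset.mem_insert, Finset.mem_singleton] at hx
    rcases hx with rfl | rfl | rfl <;> simp [Finset.mem_filter, ha, hb, hc, h1, h2]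
  have hcard : ({a, b, c} : Finset (V × V)).card = 3 := by
    rw [Finset.card_insert_of_notMem (by simp [hab, hac]),
      Finset.card_insert_of_notMem (by simp [hbc]), Finset.card_singleton]
  calc 3 = ({a, b, c} : Finset (V × V)).card := hcard.symm
    _ ≤ _ := Finset.card_le_card hsub

lemma three_tail {G : Dgraph V} {a b c : V × V} (ha : a ∈ G.arcs) (hb : b ∈ G.arcs)
    (hc : c ∈ G.arcs) (hab : a ≠ b) (hac : a ≠ c) (hbc : b ≠ c)
    (h1 : b.1 = a.1) (h2 : c.1 = a.1) : 3 ≤ G.outdeg a.1 := by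
  have hsub : ({a, b, c} : Finset (V × V)) ⊆ G.arcs.filter (fun x => x.1 = a.1) := by
    intro x hx
    simp only [Finset.mem_insert, Finset.mem_singleton] at hx
    rcases hx with rfl | rfl | rfl <;> simp [Finset.mem_filter, ha, hb, hc, h1, h2]
  have hcard : ({a, b, c} : Finset (V × V)).card = 3 := by
    rw [Finset.card_insert_of_notMem (by simp [hab, hac]),
      Finset.card_insert_of_notMem (by simp [hbc]), Finset.card_singleton]
  calc 3 = ({a, b, c} : Finset (V × V)).card := hcard.symm
    _ ≤ _ := Finset.card_le_card hsub

lemma pair_tail {G : Dgraph V} {a b : V × V} (ha : a ∈ G.arcs) (hb : b ∈ G.arcs)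
    (hab : a ≠ b) (h : b.1 = a.1) (hle : G.outdeg a.1 ≤ 2) :
    G.arcs.filter (fun x => x.1 = a.1) = {a, b} := by
  refine (Finset.eq_of_subset_of_card_le ?_ ?_).symm
  · intro x hx
    simp only [Finset.mem_insert, Finset.mem_singleton] at hx
    rcases hx with rfl | rfl <;> simp [Finset.mem_filter, ha, hb, h]
  · rw [Finset.card_pair hab]; exact hle

lemma two_le_indeg {G : Dgraph V} {a b : V × V} (ha : a ∈ G.arcs) (hb : b ∈ G.arcs)
    (hab : a ≠ b) (h : b.2 = a.2) : 2 ≤ G.indeg a.2 := by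
  have hsub : ({a, b} : Finset (V × V)) ⊆ G.arcs.filter (fun x => x.2 = a.2) := by
    intro x hx
    simp only [Finset.mem_insert, Finset.mem_singleton] at hx
    rcases hx with rfl | rfl <;> simp [Finset.mem_filter, ha, hb, h]
  calc 2 = ({a, b} : Finset (V × V)).card := (Finset.card_pair hab).symm
    _ ≤ _ := Finset.card_le_card hsub

/-- Invariant preserved along subdivisions: in-degree at most one, out-degree zero
only at elements of `X`, and no loops. -/
def Inv (X : Finset V) (G : Dgraph V) : Prop :=
  (∀ v ∈ G.verts, G.indeg v ≤ 1) ∧ (∀ v ∈ G.verts, G.outdeg v = 0 → v ∈ X) ∧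
  (∀ a ∈ G.arcs, a.1 ≠ a.2)

lemma inv_of_rbpt {T : Dgraph V} {X : Finset V} (hT : T.IsRBPT X) : Inv X T := by
  obtain ⟨⟨hac, hXne, hXsub, ρ, hρmem, hρin, hρout, huniq, hleaf, hother⟩, hnd⟩ := hT
  refine ⟨?_, ?_, ?_⟩
  · intro v hv
    by_cases hvρ : v = ρ
    · subst hvρ; omega
    by_cases hX : v ∈ X
    · obtain ⟨-, h1, -⟩ := (hleaf v hv).2 hX; omega
    rcases hother v hv hX hvρ with ⟨h1, -⟩ | ⟨h1, -⟩
    · omega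
    · exact absurd h1 (hnd v hv)
  · intro v hv h0
    by_cases hvρ : v = ρ
    · subst hvρ; omega
    by_cases hX : v ∈ X
    · exact hX
    rcases hother v hv hX hvρ with ⟨-, h2⟩ | ⟨-, h2⟩ <;> omega
  · intro a ha hl
    refine hac a.1 (Relation.TransGen.single ?_)
    have h : ((a.1 : V), a.1) = a := Prod.ext rfl hl
    rw [h]
    exact ha


lemma subdivide_inv {G H : Dgraph V} {X : Finset V} (hGH : SubdivideArc G H)
    (hG : Inv X G) : Inv X H := by
  obtain ⟨u, v, w, huv, hw, hV, hA⟩ := hGH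
  obtain ⟨hin, hout, hloop⟩ := hG
  have hu : u ∈ G.verts := G.tail_mem _ huv
  have hv : v ∈ G.verts := G.head_mem _ huv
  have huw : u ≠ w := fun h => hw (h ▸ hu)
  have hvw : v ≠ w := fun h => hw (h ▸ hv)
  have huv' : u ≠ v := hloop _ huv
  have hnw2 : ∀ a ∈ G.arcs, a.2 ≠ w := fun a ha h => hw (h ▸ G.head_mem a ha)
  have hnw1 : ∀ a ∈ G.arcs, a.1 ≠ w := fun a ha h => hw (h ▸ G.tail_mem a ha)
  have hindeg : ∀ x, x ≠ w → H.indeg x = G.indeg x := by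
    intro x hx
    unfold indeg
    rw [hA, Finset.filter_insert, Finset.filter_insert, Finset.filter_erase]
    rw [if_neg (show ¬ ((u, w).2 = x) from fun h => hx h.symm)]
    by_cases hxv : x = v
    · rw [if_pos (show (w, v).2 = x from hxv.symm)]
      have h1 : (u, v) ∈ G.arcs.filter (fun a => a.2 = x) :=
        Finset.mem_filter.2 ⟨huv, hxv.symm⟩
      have h2 : (w, v) ∉ (G.arcs.filter (fun a => a.2 = x)).erase (u, v) := by
        intro h
        exact hnw1 _ (Finset.mem_of_mem_filter _ (Finset.mem_of_mem_erase h)) rfl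
      rw [Finset.card_insert_of_notMem h2, Finset.card_erase_of_mem h1]
      have h3 : 0 < (G.arcs.filter (fun a => a.2 = x)).card := Finset.card_pos.2 ⟨_, h1⟩
      omega
    · rw [if_neg (show ¬ ((w, v).2 = x) from fun h => hxv h.symm)]
      rw [Finset.erase_eq_of_notMem]
      intro h
      exact hxv ((Finset.mem_filter.1 h).2).symm
  have houtdeg : ∀ x, x ≠ w → H.outdeg x = G.outdeg x := by
    intro x hx
    unfold outdeg
    rw [hA, Finset.filter_insert, Finset.filter_insert, Finset.filter_erase]
    rw [if_neg (show ¬ ((w, v).1 = x) from fun h => hx h.symm)]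
    by_cases hxu : x = u
    · rw [if_pos (show (u, w).1 = x from hxu.symm)]
      have h1 : (u, v) ∈ G.arcs.filter (fun a => a.1 = x) :=
        Finset.mem_filter.2 ⟨huv, hxu.symm⟩
      have h2 : (u, w) ∉ (G.arcs.filter (fun a => a.1 = x)).erase (u, v) := by
        intro h
        exact hnw2 _ (Finset.mem_of_mem_filter _ (Finset.mem_of_mem_erase h)) rfl
      rw [Finset.card_insert_of_notMem h2, Finset.card_erase_of_mem h1]
      have h3 : 0 < (G.arcs.filter (fun a => a.1 = x)).card := Finset.card_pos.2 ⟨_, h1⟩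
      omega
    · rw [if_neg (show ¬ ((u, w).1 = x) from fun h => hxu h.symm)]
      rw [Finset.erase_eq_of_notMem]
      intro h
      exact hxu ((Finset.mem_filter.1 h).2).symm
  have hindw : H.indeg w = 1 := by
    unfold indeg
    rw [hA, Finset.filter_insert, Finset.filter_insert, Finset.filter_erase]
    rw [if_pos rfl, if_neg (show ¬ ((w, v).2 = w) from hvw)]
    have he : G.arcs.filter (fun a => a.2 = w) = ∅ := by
      rw [Finset.filter_eq_empty_iff]
      exact fun a ha h => hnw2 a ha h
    rw [he]
    simp
  have houtw : H.outdeg w = 1 := by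
    unfold outdeg
    rw [hA, Finset.filter_insert, Finset.filter_insert, Finset.filter_erase]
    rw [if_neg (show ¬ ((u, w).1 = w) from huw), if_pos rfl]
    have he : G.arcs.filter (fun a => a.1 = w) = ∅ := by
      rw [Finset.filter_eq_empty_iff]
      exact fun a ha h => hnw1 a ha h
    rw [he]
    simp
  refine ⟨?_, ?_, ?_⟩
  · intro x hx
    rw [hV, Finset.mem_insert] at hx
    rcases hx with rfl | hx
    · omega
    by_cases hxw : x = w
    · subst hxw; omega
    rw [hindeg x hxw]
    exact hin x hx
  · intro x hx h0
    rw [hV, Finset.mem_insert] at hx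
    rcases hx with rfl | hx
    · omega
    by_cases hxw : x = w
    · subst hxw; omega
    rw [houtdeg x hxw] at h0
    exact hout x hx h0
  · intro a ha
    rw [hA, Finset.mem_insert, Finset.mem_insert] at ha
    rcases ha with rfl | rfl | ha
    · exact huw
    · exact hvw.symm
    · exact hloop _ (Finset.mem_of_mem_erase ha)

lemma inv_of_subdivision {T τ : Dgraph V} {X : Finset V} (h : IsSubdivisionOf T τ)
    (hT : Inv X T) : Inv X τ := by
  induction h with
  | refl => exact hT
  | step h1 h2 ih => exact subdivide_inv h2 ih


lemma image_Icc_eq {Z : Finset (V × V)} {m : ℕ} {aa : ℕ → V × V} {f : ℕ → V × V}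
    (hZ : ∀ x, x ∈ Z ↔ ∃ i, i < m ∧ aa i = x)
    (hf : ∀ k, 1 ≤ k → k ≤ m → f k = aa (k - 1)) :
    Z = (Finset.Icc 1 m).image f := by
  ext x
  simp only [Finset.mem_image, Finset.mem_Icc, hZ]
  constructor
  · rintro ⟨i, hi, rfl⟩
    refine ⟨i + 1, ⟨by omega, by omega⟩, ?_⟩
    rw [hf (i + 1) (by omega) (by omega)]
    simp
  · rintro ⟨k, ⟨h1, h2⟩, rfl⟩
    exact ⟨k - 1, by omega, (hf k h1 h2).symm⟩

/-- The M-pattern: arcs `aa 0, …, aa (m-1)` share tails at even positions and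
heads at odd positions. -/
def MPat (m : ℕ) (aa : ℕ → V × V) : Prop :=
  ∀ i, i + 1 < m → (i % 2 = 0 → (aa i).1 = (aa (i + 1)).1) ∧
    (i % 2 = 1 → (aa i).2 = (aa (i + 1)).2)

/-- The N-pattern: arcs share heads at even positions and tails at odd positions. -/
def NPat (m : ℕ) (aa : ℕ → V × V) : Prop :=
  ∀ i, i + 1 < m → (i % 2 = 0 → (aa i).2 = (aa (i + 1)).2) ∧
    (i % 2 = 1 → (aa i).1 = (aa (i + 1)).1)

/-- Vertex function for an M-pattern. -/
def mVert (aa : ℕ → V × V) : ℕ → V := fun k =>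
  if k = 0 then (aa 0).2 else if k % 2 = 1 then (aa (k - 1)).1 else (aa (k - 1)).2

/-- Vertex function for an N-pattern. -/
def nVert (aa : ℕ → V × V) : ℕ → V := fun k =>
  if k = 0 then (aa 0).1 else if k % 2 = 1 then (aa (k - 1)).2 else (aa (k - 1)).1

lemma mvert_spec {m : ℕ} {aa : ℕ → V × V} (hpat : MPat m aa) :
    ∀ k, 1 ≤ k → k ≤ m → mArc (mVert aa) k = aa (k - 1) := by
  intro k h1 h2
  unfold mArc mVert
  by_cases hk : k % 2 = 1
  · rw [if_pos hk]
    have e1 : (if k = 0 then (aa 0).2 else if k % 2 = 1 then (aa (k - 1)).1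
        else (aa (k - 1)).2) = (aa (k - 1)).1 := by
      rw [if_neg (by omega : ¬ k = 0), if_pos hk]
    have e2 : (if k - 1 = 0 then (aa 0).2 else if (k - 1) % 2 = 1 then (aa (k - 1 - 1)).1
        else (aa (k - 1 - 1)).2) = (aa (k - 1)).2 := by
      by_cases hk1 : k = 1
      · subst hk1; simp
      · have h3 : 3 ≤ k := by omega
        rw [if_neg (by omega : ¬ k - 1 = 0), if_neg (by omega : ¬ (k - 1) % 2 = 1)]
        have h := (hpat (k - 2) (by omega)).2 (by omega)
        rw [show k - 2 + 1 = k - 1 from by omega] at h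
        rw [show k - 1 - 1 = k - 2 from by omega]
        exact h
    rw [e1, e2]
  · rw [if_neg hk]
    have h4 : 2 ≤ k := by omega
    have e1 : (if k = 0 then (aa 0).2 else if k % 2 = 1 then (aa (k - 1)).1
        else (aa (k - 1)).2) = (aa (k - 1)).2 := by
      rw [if_neg (by omega : ¬ k = 0), if_neg hk]
    have e2 : (if k - 1 = 0 then (aa 0).2 else if (k - 1) % 2 = 1 then (aa (k - 1 - 1)).1
        else (aa (k - 1 - 1)).2) = (aa (k - 1)).1 := by
      rw [if_neg (by omega : ¬ k - 1 = 0), if_pos (by omega : (k - 1) % 2 = 1)]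
      have h := (hpat (k - 2) (by omega)).1 (by omega)
      rw [show k - 2 + 1 = k - 1 from by omega] at h
      rw [show k - 1 - 1 = k - 2 from by omega]
      exact h
    rw [e1, e2]

lemma nvert_spec {m : ℕ} {aa : ℕ → V × V} (hpat : NPat m aa) :
    ∀ k, 1 ≤ k → k ≤ m → nArc (nVert aa) k = aa (k - 1) := by
  intro k h1 h2
  unfold nArc nVert
  by_cases hk : k % 2 = 1
  · rw [if_pos hk]
    have e1 : (if k = 0 then (aa 0).1 else if k % 2 = 1 then (aa (k - 1)).2
        else (aa (k - 1)).1) = (aa (k - 1)).2 := by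
      rw [if_neg (by omega : ¬ k = 0), if_pos hk]
    have e2 : (if k - 1 = 0 then (aa 0).1 else if (k - 1) % 2 = 1 then (aa (k - 1 - 1)).2
        else (aa (k - 1 - 1)).1) = (aa (k - 1)).1 := by
      by_cases hk1 : k = 1
      · subst hk1; simp
      · have h3 : 3 ≤ k := by omega
        rw [if_neg (by omega : ¬ k - 1 = 0), if_neg (by omega : ¬ (k - 1) % 2 = 1)]
        have h := (hpat (k - 2) (by omega)).2 (by omega)
        rw [show k - 2 + 1 = k - 1 from by omega] at h
        rw [show k - 1 - 1 = k - 2 from by omega]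
        exact h
    rw [e1, e2]
  · rw [if_neg hk]
    have h4 : 2 ≤ k := by omega
    have e1 : (if k = 0 then (aa 0).1 else if k % 2 = 1 then (aa (k - 1)).2
        else (aa (k - 1)).1) = (aa (k - 1)).1 := by
      rw [if_neg (by omega : ¬ k = 0), if_neg hk]
    have e2 : (if k - 1 = 0 then (aa 0).1 else if (k - 1) % 2 = 1 then (aa (k - 1 - 1)).2
        else (aa (k - 1 - 1)).1) = (aa (k - 1)).2 := by
      rw [if_neg (by omega : ¬ k - 1 = 0), if_pos (by omega : (k - 1) % 2 = 1)]
      have h := (hpat (k - 2) (by omega)).1 (by omega)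
      rw [show k - 2 + 1 = k - 1 from by omega] at h
      rw [show k - 1 - 1 = k - 2 from by omega]
      exact h
    rw [e1, e2]

lemma mform {Z : Finset (V × V)} {m : ℕ} {aa : ℕ → V × V}
    (hmod : m % 2 = 0) (hcard : Z.card = m)
    (hZ : ∀ x, x ∈ Z ↔ ∃ i, i < m ∧ aa i = x) (hpat : MPat m aa) :
    MFenceForm Z :=
  ⟨m, mVert aa, hmod, hcard, image_Icc_eq hZ (mvert_spec hpat)⟩

lemma nform {Z : Finset (V × V)} {m : ℕ} {aa : ℕ → V × V}
    (hmod : m % 2 = 1) (hcard : Z.card = m)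
    (hZ : ∀ x, x ∈ Z ↔ ∃ i, i < m ∧ aa i = x) (hpat : NPat m aa) :
    NFenceForm Z :=
  ⟨m, nVert aa, hmod, hcard, image_Icc_eq hZ (nvert_spec hpat)⟩

lemma crownform {Z : Finset (V × V)} {m : ℕ} {aa : ℕ → V × V}
    (hm4 : 4 ≤ m) (hmod : m % 2 = 0) (hcard : Z.card = m)
    (hZ : ∀ x, x ∈ Z ↔ ∃ i, i < m ∧ aa i = x) (hpat : NPat m aa)
    (hclosed : (aa (m - 1)).1 = (aa 0).1) :
    CrownForm Z := by
  classical
  set v : ℕ → V := nVert aa with hv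
  set w : ℕ → V := fun j => if j = m then v 1 else v (j + 1) with hw
  have hvm : v m = v 0 := by
    rw [hv]
    unfold nVert
    rw [if_neg (by omega : ¬ m = 0), if_neg (by omega : ¬ m % 2 = 1), if_pos rfl]
    exact hclosed
  have hw0 : w 0 = v 1 := by simp [hw, show (0:ℕ) ≠ m from by omega]
  have hwm : w m = v 1 := by simp [hw]
  have hwlt : ∀ j, j < m → w j = v (j + 1) := by
    intro j hj
    simp [hw, show j ≠ m from by omega]
  have hspec := nvert_spec hpat
  have harc : ∀ k, 1 ≤ k → k ≤ m → mArc w k = aa (k % m) := by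
    intro k h1 h2
    by_cases hkm : k = m
    · have hstep : mArc w k = (w (k - 1), w k) := by
        unfold mArc
        rw [if_neg (by omega : ¬ k % 2 = 1)]
      rw [hstep, hkm, Nat.mod_self]
      have e1 : w (m - 1) = v m := by
        rw [hwlt (m - 1) (by omega), show m - 1 + 1 = m from by omega]
      rw [e1, hwm, hvm]
      have h := hspec 1 (by omega) (by omega)
      unfold nArc at h
      rw [if_pos (by norm_num)] at h
      exact h.symm
    · have hkm' : k < m := by omega
      have e1 : w k = v (k + 1) := hwlt k hkm'
      have e2 : w (k - 1) = v k := by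
        rw [hwlt (k - 1) (by omega), show k - 1 + 1 = k from by omega]
      rw [Nat.mod_eq_of_lt hkm']
      have hs := hspec (k + 1) (by omega) (by omega)
      rw [show k + 1 - 1 = k from rfl] at hs
      by_cases hk : k % 2 = 1
      · have hstep : mArc w k = (w k, w (k - 1)) := by unfold mArc; rw [if_pos hk]
        rw [hstep, e1, e2]
        unfold nArc at hs
        rw [if_neg (by omega : ¬ (k + 1) % 2 = 1), show k + 1 - 1 = k from rfl] at hs
        exact hs
      · have hstep : mArc w k = (w (k - 1), w k) := by unfold mArc; rw [if_neg hk]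
        rw [hstep, e1, e2]
        unfold nArc at hs
        rw [if_pos (by omega : (k + 1) % 2 = 1), show k + 1 - 1 = k from rfl] at hs
        exact hs
  refine ⟨m, w, hm4, hmod, by rw [hwm, hw0], hcard, ?_⟩
  ext x
  simp only [Finset.mem_image, Finset.mem_Icc, hZ]
  constructor
  · rintro ⟨i, hi, rfl⟩
    by_cases hi0 : i = 0
    · subst hi0
      exact ⟨m, ⟨by omega, le_refl m⟩, by rw [harc m (by omega) (le_refl m), Nat.mod_self]⟩
    · exact ⟨i, ⟨by omega, by omega⟩, by rw [harc i (by omega) (by omega),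
        Nat.mod_eq_of_lt hi]⟩
  · rintro ⟨k, ⟨h1, h2⟩, rfl⟩
    exact ⟨k % m, Nat.mod_lt k (by omega), (harc k h1 h2).symm⟩

theorem main {N : Dgraph V} {X : Finset V}
    (hN : Dgraph.IsRBPN N X) (hTB : Dgraph.IsTreeBased N X)
    (Z : Finset (V × V)) (hZ : Dgraph.IsMaxZigzag N Z) :
    Dgraph.CrownForm Z ∨
    (¬ Dgraph.CrownForm Z ∧ Z.card % 2 = 0 ∧ Dgraph.MFenceForm Z) ∨
    (¬ Dgraph.CrownForm Z ∧ Z.card % 2 = 1 ∧ Dgraph.NFenceForm Z) := by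
  classical
  obtain ⟨⟨hZsub, l, hlne, hlnd, hlZ, hlch⟩, hmax⟩ := hZ
  obtain ⟨a0, ha0⟩ : ∃ x, x ∈ l := List.exists_mem_of_ne_nil l hlne
  set m := l.length with hm
  have hm0 : 0 < m := List.length_pos_iff.2 hlne
  set a : ℕ → V × V := fun i => l.getD i a0 with ha
  have hageti : ∀ i (h : i < m), a i = l.get ⟨i, h⟩ := fun i h => by rw [ha]; exact List.getD_eq_getElem l a0 h
  have hZiff : ∀ x, x ∈ Z ↔ ∃ i, i < m ∧ a i = x := by
    intro x
    rw [← hlZ, List.mem_toFinset, List.mem_iff_get]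
    constructor
    · rintro ⟨⟨i, hi⟩, rfl⟩
      exact ⟨i, hi, hageti i hi⟩
    · rintro ⟨i, hi, rfl⟩
      exact ⟨⟨i, hi⟩, (hageti i hi).symm⟩
  have hinj : ∀ i, i < m → ∀ j, j < m → a i = a j → i = j := by
    intro i hi j hj h
    rw [hageti i hi, hageti j hj] at h
    have := (List.Nodup.get_inj_iff hlnd).1 h
    exact congrArg Fin.val this
  have hZcard : Z.card = m := by rw [← hlZ, List.toFinset_card_of_nodup hlnd]
  have hch : ∀ i, i + 1 < m → (a i).2 = (a (i + 1)).2 ∨ (a i).1 = (a (i + 1)).1 := by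
    intro i hi
    have h := List.isChain_iff_getElem.1 hlch i (by omega)
    rw [hageti i (by omega), hageti (i + 1) (by omega)]
    exact h
  have hZa : ∀ i, i < m → a i ∈ N.arcs := fun i h => hZsub ((hZiff _).2 ⟨i, h, rfl⟩)
  have hno3h : ∀ i j k, i < m → j < m → k < m → i ≠ j → i ≠ k → j ≠ k →
      (a j).2 = (a i).2 → (a k).2 = (a i).2 → False := by
    intro i j k hi hj hk hij hik hjk h1 h2
    have h3 := three_head (hZa i hi) (hZa j hj) (hZa k hk)
      (fun h => hij (hinj i hi j hj h)) (fun h => hik (hinj i hi k hk h))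
      (fun h => hjk (hinj j hj k hk h)) h1 h2
    have := (degs_le_two hN ((a i).2)).1
    omega
  have hno3t : ∀ i j k, i < m → j < m → k < m → i ≠ j → i ≠ k → j ≠ k →
      (a j).1 = (a i).1 → (a k).1 = (a i).1 → False := by
    intro i j k hi hj hk hij hik hjk h1 h2
    have h3 := three_tail (hZa i hi) (hZa j hj) (hZa k hk)
      (fun h => hij (hinj i hi j hj h)) (fun h => hik (hinj i hi k hk h))
      (fun h => hjk (hinj j hj k hk h)) h1 h2
    have := (degs_le_two hN ((a i).1)).2
    omega
  have hdichot : MPat m a ∨ NPat m a := by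
    by_cases hm1 : m = 1
    · right
      intro i hi
      exact absurd hi (by omega)
    rcases hch 0 (by omega) with hh | ht
    · right
      have key : ∀ i, i + 1 < m →
          ((i % 2 = 0 → (a i).2 = (a (i + 1)).2) ∧ (i % 2 = 1 → (a i).1 = (a (i + 1)).1)) := by
        intro i
        induction i with
        | zero => exact fun _ => ⟨fun _ => hh, fun h => absurd h (by omega)⟩
        | succ n ih =>
          intro hn
          have hprev := ih (by omega)
          by_cases hne : n % 2 = 0
          · have hph := hprev.1 hne
            refine ⟨fun h => absurd h (by omega), fun _ => ?_⟩
            rcases hch (n + 1) hn with hh2 | ht2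
            · exact (hno3h n (n + 1) (n + 2) (by omega) (by omega)
                (by omega) (by omega) (by omega) (by omega) hph.symm (hh2.symm.trans hph.symm)).elim
            · exact ht2
          · have hpt := hprev.2 (by omega)
            refine ⟨fun _ => ?_, fun h => absurd h (by omega)⟩
            rcases hch (n + 1) hn with hh2 | ht2
            · exact hh2
            · exact (hno3t n (n + 1) (n + 2) (by omega) (by omega)
                (by omega) (by omega) (by omega) (by omega) hpt.symm (ht2.symm.trans hpt.symm)).elim
      exact fun i hi => ⟨(key i hi).1, (key i hi).2⟩
    · left
      have key : ∀ i, i + 1 < m →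
          ((i % 2 = 0 → (a i).1 = (a (i + 1)).1) ∧ (i % 2 = 1 → (a i).2 = (a (i + 1)).2)) := by
        intro i
        induction i with
        | zero => exact fun _ => ⟨fun _ => ht, fun h => absurd h (by omega)⟩
        | succ n ih =>
          intro hn
          have hprev := ih (by omega)
          by_cases hne : n % 2 = 0
          · have hpt := hprev.1 hne
            refine ⟨fun h => absurd h (by omega), fun _ => ?_⟩
            rcases hch (n + 1) hn with hh2 | ht2
            · exact hh2
            · exact (hno3t n (n + 1) (n + 2) (by omega) (by omega)
                (by omega) (by omega) (by omega) (by omega) hpt.symm (ht2.symm.trans hpt.symm)).elim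
          · have hph := hprev.2 (by omega)
            refine ⟨fun _ => ?_, fun h => absurd h (by omega)⟩
            rcases hch (n + 1) hn with hh2 | ht2
            · exact (hno3h n (n + 1) (n + 2) (by omega) (by omega)
                (by omega) (by omega) (by omega) (by omega) hph.symm (hh2.symm.trans hph.symm)).elim
            · exact ht2
      exact fun i hi => ⟨(key i hi).1, (key i hi).2⟩
  have hF1 : ∀ e ∈ N.arcs, e.1 = (a 0).1 → e ∈ Z := by
    intro e heN hetail
    by_contra heZ
    have hel : e ∉ l := fun h => heZ (hlZ ▸ List.mem_toFinset.2 h)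
    have hzig : N.IsZigzag (insert e Z) := by
      refine ⟨?_, e :: l, by simp, List.nodup_cons.2 ⟨hel, hlnd⟩, by rw [List.toFinset_cons, hlZ], ?_⟩
      · intro x hx
        rcases Finset.mem_insert.1 hx with rfl | hx
        · exact heN
        · exact hZsub hx
      · show List.IsChain _ _; rw [List.isChain_cons]
        refine ⟨?_, hlch⟩
        intro y hy
        have hy0 : y = a 0 := by
          rw [List.head?_eq_getElem?] at hy
          rw [List.getElem?_eq_getElem (by omega : 0 < l.length)] at hy
          have := Option.some_inj.1 hy
          rw [hageti 0 (by omega)]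
          simp [← this, List.get_eq_getElem]
        right
        rw [hetail, hy0]
    have := hmax _ hzig (Finset.subset_insert e Z)
    exact heZ (this ▸ Finset.mem_insert_self e Z)
  have hF2 : ∀ e ∈ N.arcs, e.1 = (a (m - 1)).1 → e ∈ Z := by
    intro e heN hetail
    by_contra heZ
    have hel : e ∉ l := fun h => heZ (hlZ ▸ List.mem_toFinset.2 h)
    have hzig : N.IsZigzag (insert e Z) := by
      refine ⟨?_, l ++ [e], by simp [hlne], ?_, ?_, ?_⟩
      · intro x hx
        rcases Finset.mem_insert.1 hx with rfl | hx
        · exact heN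
        · exact hZsub hx
      · rw [List.nodup_append]
        exact ⟨hlnd, List.nodup_singleton e, fun x hx y hy hxy => by subst hxy; rw [List.mem_singleton] at hy; subst hy; exact hel hx⟩
      · rw [List.toFinset_append, hlZ]
        ext x
        simp only [Finset.mem_union, Finset.mem_insert, List.toFinset_cons, List.toFinset_nil,
          insert_empty_eq, Finset.mem_singleton]
        tauto
      · show List.IsChain _ _; rw [List.isChain_append]
        refine ⟨hlch, List.isChain_singleton e, ?_⟩
        intro x hx y hy
        have hy0 : e = y := by simpa using hy
        have hx0 : x = a (m - 1) := by
          rw [List.getLast?_eq_getElem?] at hx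
          rw [List.getElem?_eq_getElem (by omega : l.length - 1 < l.length)] at hx
          have := Option.some_inj.1 hx
          rw [hageti (m - 1) (by omega)]
          simp [← this, List.get_eq_getElem]
          rfl
        right
        rw [hx0, ← hy0, hetail]
    have := hmax _ hzig (Finset.subset_insert e Z)
    exact heZ (this ▸ Finset.mem_insert_self e Z)
  by_cases hC : Dgraph.CrownForm Z
  · exact Or.inl hC
  rcases hdichot with hM | hNp
  · by_cases hmod : m % 2 = 0
    · exact Or.inr (Or.inl ⟨hC, by rw [hZcard]; exact hmod, mform hmod hZcard hZiff hM⟩)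
    · have hmod1 : m % 2 = 1 := by omega
      set b : ℕ → V × V := fun i => a (m - 1 - i) with hb
      have hbi : ∀ i, b i = a (m - 1 - i) := fun i => rfl
      have hZiffb : ∀ x, x ∈ Z ↔ ∃ i, i < m ∧ b i = x := by
        intro x
        rw [hZiff]
        constructor
        · rintro ⟨i, hi, rfl⟩
          exact ⟨m - 1 - i, by omega, by rw [hbi, show m - 1 - (m - 1 - i) = i from by omega]⟩
        · rintro ⟨i, hi, rfl⟩
          exact ⟨m - 1 - i, by omega, rfl⟩
      have hNb : NPat m b := by
        intro i hi
        constructor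
        · intro hie
          have h := (hM (m - 2 - i) (by omega)).2 (by omega)
          rw [show m - 2 - i + 1 = m - 1 - i from by omega] at h
          rw [hbi, hbi, show m - 1 - (i + 1) = m - 2 - i from by omega]
          exact h.symm
        · intro hio
          have h := (hM (m - 2 - i) (by omega)).1 (by omega)
          rw [show m - 2 - i + 1 = m - 1 - i from by omega] at h
          rw [hbi, hbi, show m - 1 - (i + 1) = m - 2 - i from by omega]
          exact h.symm
      exact Or.inr (Or.inr ⟨hC, by rw [hZcard]; exact hmod1, nform hmod1 hZcard hZiffb hNb⟩)
  · by_cases hmod : m % 2 = 1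
    · exact Or.inr (Or.inr ⟨hC, by rw [hZcard]; exact hmod, nform hmod hZcard hZiff hNp⟩)
    · have hmod0 : m % 2 = 0 := by omega
      exfalso
      by_cases hclosed : (a (m - 1)).1 = (a 0).1
      · refine hC (crownform ?_ hmod0 hZcard hZiff hNp hclosed)
        by_contra hm4
        have hm2 : m = 2 := by omega
        have hh : (a 0).2 = (a 1).2 := (hNp 0 (by omega)).1 (by omega)
        have : a 0 = a 1 := Prod.ext (by rw [← hclosed, hm2]) hh
        have := hinj 0 (by omega) 1 (by omega) this
        omega
      · obtain ⟨τ, hτV, hτA, T, hT, hsubd⟩ := hTB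
        have hInv := inv_of_subdivision hsubd (inv_of_rbpt hT)
        set S : Finset ℕ := (Finset.range m).filter (fun i => a i ∈ τ.arcs) with hS
        have hSmem : ∀ i, i ∈ S ↔ i < m ∧ a i ∈ τ.arcs := by
          intro i
          rw [hS, Finset.mem_filter, Finset.mem_range]
        have hSup : S.card ≤ m / 2 := by
          have hkey : ∀ p q, p < q → q < m → p / 2 = q / 2 →
              a p ∈ τ.arcs → a q ∈ τ.arcs → False := by
            intro p q hpq hqm hdiv hp hq
            have hq' : q = p + 1 := by omega
            have hpe : p % 2 = 0 := by omega
            subst hq'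
            have hh : (a (p + 1)).2 = (a p).2 := ((hNp p (by omega)).1 hpe).symm
            have hne : a p ≠ a (p + 1) := fun h => by
              have := hinj p (by omega) (p + 1) (by omega) h; omega
            have h2 : 2 ≤ τ.indeg ((a p).2) := two_le_indeg hp hq hne hh
            have hmemv : (a p).2 ∈ τ.verts := τ.head_mem _ hp
            have := hInv.1 _ hmemv
            omega
          have hcc : S.card ≤ (Finset.range (m / 2)).card := by
            apply Finset.card_le_card_of_injOn (fun i => i / 2)
            · intro i hi
              obtain ⟨hi1, hi2⟩ := (hSmem i).1 hi
              simp only [Finset.mem_coe, Finset.mem_range]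
              omega
            · intro i hi j hj hij
              rw [Finset.mem_coe] at hi hj
              obtain ⟨hi1, hi2⟩ := (hSmem i).1 hi
              obtain ⟨hj1, hj2⟩ := (hSmem j).1 hj
              by_contra hne
              rcases Nat.lt_or_ge i j with h | h
              · exact hkey i j h hj1 hij hi2 hj2
              · exact hkey j i (by omega) hi1 hij.symm hj2 hi2
          rwa [Finset.card_range] at hcc
        set u : ℕ → V := fun t => if t = 0 then (a 0).1 else (a (2 * t - 1)).1 with hu
        have hu0 : u 0 = (a 0).1 := by simp [hu]
        have hut : ∀ t, t ≠ 0 → u t = (a (2 * t - 1)).1 := fun t ht => by simp [hu, ht]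
        have hXleaf : ∀ v ∈ N.verts, v ∈ X → N.outdeg v = 0 := by
          intro v hv hX
          obtain ⟨-, -, -, ρ, -, -, -, -, hleaf, -⟩ := hN
          exact ((hleaf v hv).2 hX).2.2
        have hUt : ∀ t, t ≤ m / 2 → ∃ i, i ∈ S ∧ (a i).1 = u t := by
          intro t ht
          obtain ⟨p, hpm, hpu⟩ : ∃ p, p < m ∧ (a p).1 = u t := by
            by_cases h0 : t = 0
            · exact ⟨0, by omega, by rw [h0, hu0]⟩
            · exact ⟨2 * t - 1, by omega, by rw [hut t h0]⟩
          have hpN : a p ∈ N.arcs := hZa p hpm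
          have hmemN : u t ∈ N.verts := hpu ▸ N.tail_mem _ hpN
          have hposout : 0 < N.outdeg (u t) :=
            Finset.card_pos.2 ⟨a p, Finset.mem_filter.2 ⟨hpN, hpu⟩⟩
          have hnotX : u t ∉ X := fun hX => by
            have := hXleaf _ hmemN hX; omega
          have hmemτ : u t ∈ τ.verts := by rw [hτV]; exact hmemN
          have houtτ : τ.outdeg (u t) ≠ 0 := fun h => hnotX (hInv.2.1 _ hmemτ h)
          obtain ⟨e, he⟩ : ∃ e, e ∈ τ.arcs.filter (fun x => x.1 = u t) := by
            by_contra h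
            push_neg at h
            have hemp : τ.arcs.filter (fun x => x.1 = u t) = ∅ :=
              Finset.eq_empty_iff_forall_notMem.2 h
            exact houtτ (by unfold Dgraph.outdeg; rw [hemp]; simp)
          have heτ : e ∈ τ.arcs := (Finset.mem_filter.1 he).1
          have heu : e.1 = u t := (Finset.mem_filter.1 he).2
          have heN : e ∈ N.arcs := hτA heτ
          have heZ : e ∈ Z := by
            by_cases h0 : t = 0
            · exact hF1 e heN (by rw [heu, h0, hu0])
            by_cases hm2 : t = m / 2
            · refine hF2 e heN ?_
              rw [heu, hut t h0, hm2, show 2 * (m / 2) - 1 = m - 1 from by omega]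
            · have ht1 : 1 ≤ t := by omega
              have ht2 : 2 * t < m := by omega
              have htail : (a (2 * t)).1 = (a (2 * t - 1)).1 := by
                have h := (hNp (2 * t - 1) (by omega)).2 (by omega)
                rw [show 2 * t - 1 + 1 = 2 * t from by omega] at h
                exact h.symm
              have hne : a (2 * t - 1) ≠ a (2 * t) := fun h => by
                have := hinj (2 * t - 1) (by omega) (2 * t) (by omega) h; omega
              have hfil := pair_tail (hZa (2 * t - 1) (by omega)) (hZa (2 * t) (by omega))
                hne htail ((degs_le_two hN _).2)
              have hein : e ∈ ({a (2 * t - 1), a (2 * t)} : Finset (V × V)) := by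
                rw [← hfil]
                exact Finset.mem_filter.2 ⟨heN, by rw [heu, hut t h0]⟩
              rcases Finset.mem_insert.1 hein with he1 | he2
              · exact (hZiff e).2 ⟨2 * t - 1, by omega, he1.symm⟩
              · exact (hZiff e).2 ⟨2 * t, by omega, (Finset.mem_singleton.1 he2).symm⟩
          obtain ⟨i, him, hieq⟩ := (hZiff e).1 heZ
          exact ⟨i, (hSmem i).2 ⟨him, by rw [hieq]; exact heτ⟩, by rw [hieq]; exact heu⟩
        have hkey2 : ∀ t s, t < s → s ≤ m / 2 → u t ≠ u s := by
          intro t s hts hs hEq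
          by_cases hsm : s = m / 2
          · by_cases ht0 : t = 0
            · refine hclosed ?_
              rw [ht0, hu0, hut s (by omega), hsm,
                show 2 * (m / 2) - 1 = m - 1 from by omega] at hEq
              exact hEq.symm
            · have ht1 : 1 ≤ t := by omega
              have htint : t < m / 2 := by omega
              have htail : (a (2 * t)).1 = (a (2 * t - 1)).1 := by
                have h := (hNp (2 * t - 1) (by omega)).2 (by omega)
                rw [show 2 * t - 1 + 1 = 2 * t from by omega] at h
                exact h.symm
              have hlast : (a (m - 1)).1 = (a (2 * t - 1)).1 := by
                have h1 : u s = (a (m - 1)).1 := by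
                  rw [hut s (by omega), hsm, show 2 * (m / 2) - 1 = m - 1 from by omega]
                rw [← h1, ← hEq, hut t ht0]
              exact hno3t (2 * t - 1) (2 * t) (m - 1) (by omega) (by omega) (by omega)
                (by omega) (by omega) (by omega) htail hlast
          · have hs1 : 1 ≤ s := by omega
            have hsint : s < m / 2 := by omega
            have htail : (a (2 * s)).1 = (a (2 * s - 1)).1 := by
              have h := (hNp (2 * s - 1) (by omega)).2 (by omega)
              rw [show 2 * s - 1 + 1 = 2 * s from by omega] at h
              exact h.symm
            by_cases ht0 : t = 0
            · have hdt : (a 0).1 = (a (2 * s - 1)).1 := by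
                rw [← hu0, ← ht0, hEq, hut s (by omega)]
              exact hno3t (2 * s - 1) (2 * s) 0 (by omega) (by omega) (by omega)
                (by omega) (by omega) (by omega) htail hdt
            · have hdt : (a (2 * t - 1)).1 = (a (2 * s - 1)).1 := by
                rw [← hut t ht0, hEq, hut s (by omega)]
              exact hno3t (2 * s - 1) (2 * s) (2 * t - 1) (by omega) (by omega) (by omega)
                (by omega) (by omega) (by omega) htail hdt
        have hlow : m / 2 + 1 ≤ S.card := by
          set f : ℕ → ℕ := fun t => if h : t ≤ m / 2 then (hUt t h).choose else 0 with hf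
          have hfspec : ∀ t (h : t ≤ m / 2), f t ∈ S ∧ (a (f t)).1 = u t := by
            intro t ht
            have : f t = (hUt t ht).choose := by rw [hf]; simp only []; rw [dif_pos ht]
            rw [this]
            exact (hUt t ht).choose_spec
          calc m / 2 + 1 = (Finset.range (m / 2 + 1)).card := (Finset.card_range _).symm
            _ ≤ S.card := by
              apply Finset.card_le_card_of_injOn f
              · intro t htm
                rw [Finset.mem_coe, Finset.mem_range] at htm
                exact (hfspec t (by omega)).1
              · intro t ht s' hs' hfts
                rw [Finset.mem_coe, Finset.mem_range] at ht hs'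
                by_contra hne
                have h1 := (hfspec t (by omega)).2
                have h2 := (hfspec s' (by omega)).2
                rw [hfts] at h1
                have hEq : u t = u s' := by rw [← h1, ← h2]
                rcases Nat.lt_or_ge t s' with h | h
                · exact hkey2 t s' h (by omega) hEq
                · exact hkey2 s' t (by omega) (by omega) hEq.symm
        omega

end ZigAux

/-- In a tree-based rooted binary phylogenetic `X`-network, every
maximal zig-zag trail is a crown, an M-fence (a fence with an even number of arcs,
writable as `v₀ < v₁ > ⋯ < v_{m-1} > v_m`), or an N-fence (a fence with an odd
number of arcs, writable as `v₀ > v₁ < ⋯ < v_{m-1} > v_m`). -/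
theorem stmt3 {V : Type*} [DecidableEq V] (N : Dgraph V) (X : Finset V)
    (hN : Dgraph.IsRBPN N X) (hTB : Dgraph.IsTreeBased N X)
    (Z : Finset (V × V)) (hZ : Dgraph.IsMaxZigzag N Z) :
    Dgraph.CrownForm Z ∨
    (¬ Dgraph.CrownForm Z ∧ Z.card % 2 = 0 ∧ Dgraph.MFenceForm Z) ∨
    (¬ Dgraph.CrownForm Z ∧ Z.card % 2 = 1 ∧ Dgraph.NFenceForm Z) :=
  ZigAux.main hN hTB Z hZ
end

section
/- Let N be a tree-based rooted binary phylogenetic X-network with maximal zig-zag trail decomposition Z_1, …, Z_d. A subgraph G of N is a support tree of N if and only if, for every i ∈ {1,…,d}, the set A(G) ∩ A(Z_i) is an admissible arc-set of Z_i. -/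
section Helpers


lemma three_le {α : Type*} [DecidableEq α] {s : Finset α} {a b c : α}
    (ha : a ∈ s) (hb : b ∈ s) (hc : c ∈ s) (hab : a ≠ b) (hac : a ≠ c) (hbc : b ≠ c) :
    3 ≤ s.card := by
  have hsub : ({a, b, c} : Finset α) ⊆ s := by
    intro x hx
    simp only [Finset.mem_insert, Finset.mem_singleton] at hx
    rcases hx with rfl | rfl | rfl <;> assumption
  have hcard : ({a, b, c} : Finset α).card = 3 := by
    rw [Finset.card_insert_of_notMem (by simp [hab, hac]),
      Finset.card_insert_of_notMem (by simp [hbc]), Finset.card_singleton]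
  exact hcard ▸ Finset.card_le_card hsub

/-- If an element of a nodup chain has at most one neighbor within the list,
and `c ∉ l` is related to it, we can extend to a list over `insert c`. -/
lemma chain_extend {α : Type*} [DecidableEq α] {R : α → α → Prop}
    (hsym : ∀ x y, R x y → R y x) {l : List α} (hnd : l.Nodup) (hch : l.Chain' R)
    {b c : α} (hb : b ∈ l) (hc : c ∉ l) (hRbc : R b c)
    (huniq : ∀ x ∈ l, x ≠ b → R b x → ∀ y ∈ l, y ≠ b → R b y → x = y) :
    ∃ l' : List α, l' ≠ [] ∧ l'.Nodup ∧ l'.toFinset = insert c l.toFinset ∧ l'.Chain' R := by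
  classical
  obtain ⟨i, hi, hieq⟩ := List.mem_iff_getElem.1 hb
  have hends : i = 0 ∨ i = l.length - 1 := by
    by_contra h
    push_neg at h
    have h0 : 0 < i := Nat.pos_of_ne_zero h.1
    have h1 : i + 1 < l.length := by omega
    have hx : i - 1 < l.length := by omega
    set x := l[i - 1]
    set y := l[i + 1]
    have hRx : R x b := by
      have h' := (List.isChain_iff_getElem.1 hch) (i - 1) (by omega)
      have e : l[i - 1 + 1]'(by omega) = b := by
        rw [← hieq]; congr 1; omega
      rw [e] at h'; exact h'
    have hRy : R b y := by
      have h' := (List.isChain_iff_getElem.1 hch) i (by omega)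
      rw [← hieq]; exact h'
    have hxb : x ≠ b := by
      rw [← hieq]; intro hcon
      exact absurd ((hnd.getElem_inj_iff).1 hcon) (by omega)
    have hyb : y ≠ b := by
      rw [← hieq]; intro hcon
      exact absurd ((hnd.getElem_inj_iff).1 hcon) (by omega)
    have hxy : x = y :=
      huniq x (List.getElem_mem _) hxb (hsym _ _ hRx) y (List.getElem_mem _) hyb hRy
    exact absurd ((hnd.getElem_inj_iff).1 hxy) (by omega)
  -- core construction when b is the head
  have core : ∀ l₀ : List α, l₀.Nodup → l₀.Chain' R → c ∉ l₀ → ∀ t, l₀ = b :: t →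
      ∃ l' : List α, l' ≠ [] ∧ l'.Nodup ∧ l'.toFinset = insert c l₀.toFinset ∧ l'.Chain' R := by
    intro l₀ hnd₀ hch₀ hc₀ t ht
    refine ⟨c :: l₀, by simp, ?_, by simp, ?_⟩
    · exact List.nodup_cons.2 ⟨hc₀, hnd₀⟩
    · subst ht
      exact List.isChain_cons_cons.2 ⟨hsym _ _ hRbc, hch₀⟩
  have hlen : l ≠ [] := List.ne_nil_of_length_pos (by omega)
  rcases hends with h0 | hlast
  · subst h0
    have : l = b :: l.tail := by
      rw [← hieq, ← List.head_eq_getElem hlen, List.cons_head_tail]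
    exact core l hnd hch hc _ this
  · subst hlast
    have hrev : l.reverse ≠ [] := by simpa using hlen
    have hbrev : l.reverse.head hrev = b := by
      rw [List.head_eq_getElem, List.getElem_reverse]
      rw [← hieq]; congr 1
    have hchrev : l.reverse.Chain' R :=
      List.isChain_reverse.2 (List.IsChain.imp (fun a b h => hsym _ _ h) hch)
    obtain ⟨l', h1, h2, h3, h4⟩ := core l.reverse (List.nodup_reverse.2 hnd) hchrev
      (by simpa using hc) l.reverse.tail (by rw [← hbrev, List.cons_head_tail])
    exact ⟨l', h1, h2, by simpa using h3, h4⟩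


end Helpers

namespace Dgraph
variable {V : Type*} [DecidableEq V]

lemma indeg_mono {G H : Dgraph V} (h : G.arcs ⊆ H.arcs) (v : V) : G.indeg v ≤ H.indeg v :=
  Finset.card_le_card (Finset.filter_subset_filter _ h)

lemma outdeg_mono {G H : Dgraph V} (h : G.arcs ⊆ H.arcs) (v : V) : G.outdeg v ≤ H.outdeg v :=
  Finset.card_le_card (Finset.filter_subset_filter _ h)

lemma indeg_eq_zero_of_not_mem {G : Dgraph V} {v : V} (h : v ∉ G.verts) : G.indeg v = 0 := by
  rw [indeg, Finset.card_eq_zero, Finset.filter_eq_empty_iff]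
  intro a ha heq
  exact h (heq ▸ G.head_mem a ha)

lemma outdeg_eq_zero_of_not_mem {G : Dgraph V} {v : V} (h : v ∉ G.verts) : G.outdeg v = 0 := by
  rw [outdeg, Finset.card_eq_zero, Finset.filter_eq_empty_iff]
  intro a ha heq
  exact h (heq ▸ G.tail_mem a ha)

lemma exists_arc_head {G : Dgraph V} {v : V} (h : 1 ≤ G.indeg v) : ∃ a ∈ G.arcs, a.2 = v := by
  obtain ⟨a, ha⟩ := Finset.card_pos.1 h
  exact ⟨a, (Finset.mem_filter.1 ha).1, (Finset.mem_filter.1 ha).2⟩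

lemma exists_arc_tail {G : Dgraph V} {v : V} (h : 1 ≤ G.outdeg v) : ∃ a ∈ G.arcs, a.1 = v := by
  obtain ⟨a, ha⟩ := Finset.card_pos.1 h
  exact ⟨a, (Finset.mem_filter.1 ha).1, (Finset.mem_filter.1 ha).2⟩

lemma indeg_pos_of_arc {G : Dgraph V} {a : V × V} (ha : a ∈ G.arcs) : 1 ≤ G.indeg a.2 :=
  Finset.card_pos.2 ⟨a, Finset.mem_filter.2 ⟨ha, rfl⟩⟩

lemma outdeg_pos_of_arc {G : Dgraph V} {a : V × V} (ha : a ∈ G.arcs) : 1 ≤ G.outdeg a.1 :=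
  Finset.card_pos.2 ⟨a, Finset.mem_filter.2 ⟨ha, rfl⟩⟩

lemma head_unique {G : Dgraph V} {v : V} (h : G.indeg v ≤ 1) {a b : V × V}
    (ha : a ∈ G.arcs) (hav : a.2 = v) (hb : b ∈ G.arcs) (hbv : b.2 = v) : a = b :=
  Finset.card_le_one.1 h a (Finset.mem_filter.2 ⟨ha, hav⟩) b (Finset.mem_filter.2 ⟨hb, hbv⟩)

lemma tail_unique {G : Dgraph V} {v : V} (h : G.outdeg v ≤ 1) {a b : V × V}
    (ha : a ∈ G.arcs) (hav : a.1 = v) (hb : b ∈ G.arcs) (hbv : b.1 = v) : a = b :=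
  Finset.card_le_one.1 h a (Finset.mem_filter.2 ⟨ha, hav⟩) b (Finset.mem_filter.2 ⟨hb, hbv⟩)

lemma two_not_three {G : Dgraph V} {v : V} (h : G.indeg v ≤ 2) {a b c : V × V}
    (ha : a ∈ G.arcs) (hav : a.2 = v) (hb : b ∈ G.arcs) (hbv : b.2 = v)
    (hc : c ∈ G.arcs) (hcv : c.2 = v) (hab : a ≠ b) (hac : a ≠ c) : b = c := by
  by_contra hbc
  have := three_le (s := G.arcs.filter fun x => x.2 = v)
    (Finset.mem_filter.2 ⟨ha, hav⟩) (Finset.mem_filter.2 ⟨hb, hbv⟩)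
    (Finset.mem_filter.2 ⟨hc, hcv⟩) hab hac hbc
  have h' : (G.arcs.filter fun x => x.2 = v).card ≤ 2 := h
  omega

lemma two_not_three' {G : Dgraph V} {v : V} (h : G.outdeg v ≤ 2) {a b c : V × V}
    (ha : a ∈ G.arcs) (hav : a.1 = v) (hb : b ∈ G.arcs) (hbv : b.1 = v)
    (hc : c ∈ G.arcs) (hcv : c.1 = v) (hab : a ≠ b) (hac : a ≠ c) : b = c := by
  by_contra hbc
  have := three_le (s := G.arcs.filter fun x => x.1 = v)
    (Finset.mem_filter.2 ⟨ha, hav⟩) (Finset.mem_filter.2 ⟨hb, hbv⟩)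
    (Finset.mem_filter.2 ⟨hc, hcv⟩) hab hac hbc
  have h' : (G.arcs.filter fun x => x.1 = v).card ≤ 2 := h
  omega

/-- Degree bookkeeping for a single arc subdivision. -/
lemma subdiv_degs {G H : Dgraph V} {u v w : V} (huv : (u, v) ∈ G.arcs) (hw : w ∉ G.verts)
    (ha : H.arcs = insert (u, w) (insert (w, v) (G.arcs.erase (u, v)))) :
    H.indeg w = 1 ∧ H.outdeg w = 1 ∧
      ∀ x, x ≠ w → H.indeg x = G.indeg x ∧ H.outdeg x = G.outdeg x := by
  have huw : (u, w) ∉ G.arcs := fun h => hw (G.head_mem _ h)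
  have hwv : (w, v) ∉ G.arcs := fun h => hw (G.tail_mem _ h)
  have huv' : u ≠ w := fun h => hw (h ▸ G.tail_mem _ huv)
  have hvv' : v ≠ w := fun h => hw (h ▸ G.head_mem _ huv)
  refine ⟨?_, ?_, ?_⟩
  · rw [indeg, ha]
    have : (insert (u, w) (insert (w, v) (G.arcs.erase (u, v)))).filter (fun a => a.2 = w)
        = {(u, w)} := by
      ext a
      simp only [Finset.mem_filter, Finset.mem_insert, Finset.mem_erase, Finset.mem_singleton]
      constructor
      · rintro ⟨rfl | rfl | ⟨hne, hmem⟩, h2⟩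
        · rfl
        · exact absurd h2 hvv'
        · exact absurd (h2 ▸ G.head_mem _ hmem) hw
      · rintro rfl; exact ⟨Or.inl rfl, rfl⟩
    rw [this, Finset.card_singleton]
  · rw [outdeg, ha]
    have : (insert (u, w) (insert (w, v) (G.arcs.erase (u, v)))).filter (fun a => a.1 = w)
        = {(w, v)} := by
      ext a
      simp only [Finset.mem_filter, Finset.mem_insert, Finset.mem_erase, Finset.mem_singleton]
      constructor
      · rintro ⟨rfl | rfl | ⟨hne, hmem⟩, h2⟩
        · exact absurd h2 huv'
        · rfl
        · exact absurd (h2 ▸ G.tail_mem _ hmem) hw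
      · rintro rfl; exact ⟨Or.inr (Or.inl rfl), rfl⟩
    rw [this, Finset.card_singleton]
  · intro x hx
    constructor
    · rw [indeg, indeg, ha]
      by_cases hxv : x = v
      · have heq : (insert (u, w) (insert (w, v) (G.arcs.erase (u, v)))).filter
            (fun a => a.2 = x) = insert (w, v) ((G.arcs.filter fun a => a.2 = x).erase (u, v)) := by
          ext a
          simp only [Finset.mem_filter, Finset.mem_insert, Finset.mem_erase]
          constructor
          · rintro ⟨rfl | rfl | ⟨hne, hmem⟩, h2⟩
            · exact absurd h2.symm hx
            · exact Or.inl rfl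
            · exact Or.inr ⟨hne, hmem, h2⟩
          · rintro (rfl | ⟨hne, hmem, h2⟩)
            · exact ⟨Or.inr (Or.inl rfl), hxv.symm⟩
            · exact ⟨Or.inr (Or.inr ⟨hne, hmem⟩), h2⟩
        have hmemf : (u, v) ∈ G.arcs.filter (fun a => a.2 = x) :=
          Finset.mem_filter.2 ⟨huv, hxv.symm⟩
        have hnm : (w, v) ∉ (G.arcs.filter fun a => a.2 = x).erase (u, v) := by
          intro h
          exact hwv (Finset.mem_filter.1 (Finset.mem_of_mem_erase h)).1
        rw [heq, Finset.card_insert_of_notMem hnm, Finset.card_erase_of_mem hmemf]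
        have hpos : 1 ≤ (G.arcs.filter fun a => a.2 = x).card :=
          Finset.card_pos.2 ⟨(u, v), hmemf⟩
        omega
      · congr 1
        ext a
        simp only [Finset.mem_filter, Finset.mem_insert, Finset.mem_erase]
        constructor
        · rintro ⟨rfl | rfl | ⟨hne, hmem⟩, h2⟩
          · exact absurd h2.symm hx
          · exact absurd h2.symm hxv
          · exact ⟨hmem, h2⟩
        · rintro ⟨hmem, h2⟩
          refine ⟨Or.inr (Or.inr ⟨?_, hmem⟩), h2⟩
          rintro rfl
          exact hxv h2.symm
    · rw [outdeg, outdeg, ha]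
      by_cases hxu : x = u
      · have heq : (insert (u, w) (insert (w, v) (G.arcs.erase (u, v)))).filter
            (fun a => a.1 = x) = insert (u, w) ((G.arcs.filter fun a => a.1 = x).erase (u, v)) := by
          ext a
          simp only [Finset.mem_filter, Finset.mem_insert, Finset.mem_erase]
          constructor
          · rintro ⟨rfl | rfl | ⟨hne, hmem⟩, h2⟩
            · exact Or.inl rfl
            · exact absurd h2.symm hx
            · exact Or.inr ⟨hne, hmem, h2⟩
          · rintro (rfl | ⟨hne, hmem, h2⟩)
            · exact ⟨Or.inl rfl, hxu.symm⟩
            · exact ⟨Or.inr (Or.inr ⟨hne, hmem⟩), h2⟩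
        have hmemf : (u, v) ∈ G.arcs.filter (fun a => a.1 = x) :=
          Finset.mem_filter.2 ⟨huv, hxu.symm⟩
        have hnm : (u, w) ∉ (G.arcs.filter fun a => a.1 = x).erase (u, v) := by
          intro h
          exact huw (Finset.mem_filter.1 (Finset.mem_of_mem_erase h)).1
        rw [heq, Finset.card_insert_of_notMem hnm, Finset.card_erase_of_mem hmemf]
        have hpos : 1 ≤ (G.arcs.filter fun a => a.1 = x).card :=
          Finset.card_pos.2 ⟨(u, v), hmemf⟩
        omega
      · congr 1
        ext a
        simp only [Finset.mem_filter, Finset.mem_insert, Finset.mem_erase]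
        constructor
        · rintro ⟨rfl | rfl | ⟨hne, hmem⟩, h2⟩
          · exact absurd h2.symm hxu
          · exact absurd h2.symm hx
          · exact ⟨hmem, h2⟩
        · rintro ⟨hmem, h2⟩
          refine ⟨Or.inr (Or.inr ⟨?_, hmem⟩), h2⟩
          rintro rfl
          exact hxu h2.symm

end Dgraph

namespace Dgraph
variable {V : Type*} [DecidableEq V]

lemma acyclic_of_subset {G N : Dgraph V} (h : G.arcs ⊆ N.arcs) (hN : N.Acyclic) : G.Acyclic :=
  fun v hv => hN v (Relation.TransGen.mono (r := fun u w => (u, w) ∈ G.arcs)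
    (fun _ _ hab => h hab) v v hv)

/-- The degree invariant preserved along subdivisions of an RBPT. -/
lemma support_degs {T τ : Dgraph V} {X : Finset V} (hT : IsRBPT T X)
    (hsub : IsSubdivisionOf T τ) :
    ∃ r ∈ τ.verts, τ.indeg r = 0 ∧ 1 ≤ τ.outdeg r ∧
      (∀ v ∈ τ.verts, v ≠ r → τ.indeg v = 1) ∧
      (∀ v ∈ τ.verts, τ.outdeg v = 0 → v ∈ X) := by
  induction hsub with
  | refl =>
    obtain ⟨⟨_, _, _, ρ, hρv, hρin, hρout, huniq, hleaf, hother⟩, hno2⟩ := hT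
    refine ⟨ρ, hρv, hρin, by omega, ?_, ?_⟩
    · intro v hv hvρ
      by_cases hvX : v ∈ X
      · exact ((hleaf v hv).2 hvX).2.1
      · rcases hother v hv hvX hvρ with ⟨h1, _⟩ | ⟨h1, _⟩
        · exact h1
        · exact absurd h1 (hno2 v hv)
    · intro v hv hout
      by_cases hvX : v ∈ X
      · exact hvX
      · by_cases hvρ : v = ρ
        · subst hvρ; omega
        · rcases hother v hv hvX hvρ with ⟨_, h2⟩ | ⟨_, h2⟩ <;> omega
  | step hGH hHK ih =>
    obtain ⟨u, v, w, huv, hw, hverts, harcs⟩ := hHK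
    obtain ⟨hwin, hwout, htrans⟩ := subdiv_degs huv hw harcs
    obtain ⟨r, hr, hrin, hrout, hin1, hout0⟩ := ih
    have hrw : r ≠ w := fun h => hw (h ▸ hr)
    refine ⟨r, hverts ▸ Finset.mem_insert_of_mem hr, by rw [(htrans r hrw).1]; exact hrin,
      ?_, ?_, ?_⟩
    · rw [(htrans r hrw).2]; exact hrout
    · intro x hx hxr
      by_cases hxw : x = w
      · subst hxw; exact hwin
      · have hxH : x ∈ _ := hverts ▸ hx
        rw [Finset.mem_insert] at hxH
        rcases hxH with h | h
        · exact absurd h hxw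
        · rw [(htrans x hxw).1]; exact hin1 x h hxr
    · intro x hx hout
      by_cases hxw : x = w
      · subst hxw; omega
      · have hxH : x ∈ _ := hverts ▸ hx
        rw [Finset.mem_insert] at hxH
        rcases hxH with h | h
        · exact absurd h hxw
        · rw [(htrans x hxw).2] at hout; exact hout0 x h hout

end Dgraph

namespace Dgraph
variable {V : Type*} [DecidableEq V]

/-- A spanning-tree-with-degree-conditions can be unsubdivided to an RBPT. -/
lemma unsubdivide {X : Finset V} (hX : X.Nonempty) :
    ∀ n (τ : Dgraph V), τ.verts.card ≤ n → τ.Acyclic → X ⊆ τ.verts →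
    (∃ r ∈ τ.verts, τ.indeg r = 0 ∧ (τ.outdeg r = 1 ∨ τ.outdeg r = 2) ∧
      (∀ v ∈ τ.verts, v ≠ r → τ.indeg v = 1) ∧
      (∀ v ∈ τ.verts, (τ.outdeg v = 0 ↔ v ∈ X)) ∧
      (∀ v ∈ τ.verts, τ.outdeg v ≤ 2)) →
    ∃ T : Dgraph V, IsRBPT T X ∧ IsSubdivisionOf T τ := by
  intro n
  induction n with
  | zero =>
    intro τ hcard _ hXsub _
    obtain ⟨x, hx⟩ := hX
    have := Finset.card_pos.2 ⟨x, hXsub hx⟩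
    omega
  | succ n ih =>
    rintro τ hcard hacy hXsub ⟨r, hr, hrin, hrout, hin1, houtX, hout2⟩
    by_cases hw : ∃ w ∈ τ.verts, w ≠ r ∧ w ∉ X ∧ τ.indeg w = 1 ∧ τ.outdeg w = 1
    · obtain ⟨w, hwv, hwr, hwX, hwin, hwout⟩ := hw
      obtain ⟨p, hp, hp2⟩ := exists_arc_head (G := τ) (v := w) hwin.ge
      obtain ⟨q, hq, hq1⟩ := exists_arc_tail (G := τ) (v := w) hwout.ge
      obtain ⟨u, w0⟩ := p
      obtain ⟨w1, v⟩ := q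
      simp only at hp2 hq1
      have huw_arc : (u, w) ∈ τ.arcs := hp2 ▸ hp
      have hwv_arc : (w, v) ∈ τ.arcs := hq1 ▸ hq
      have hunw : u ≠ w := fun h => hacy w (Relation.TransGen.single (h ▸ huw_arc))
      have hvnw : v ≠ w := fun h => hacy w (Relation.TransGen.single (h ▸ hwv_arc))
      have hvverts : v ∈ τ.verts := τ.head_mem _ hwv_arc
      have huverts : u ∈ τ.verts := τ.tail_mem _ huw_arc
      have hvnr : v ≠ r := by
        intro h
        have := indeg_pos_of_arc hwv_arc
        simp only [h] at this
        omega
      have hvin1 : τ.indeg v = 1 := hin1 v hvverts hvnr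
      have huvnotin : (u, v) ∉ τ.arcs := by
        intro h
        have heq : (u, v) = (w, v) := head_unique (le_of_eq hvin1) h rfl hwv_arc rfl
        exact hunw (congrArg Prod.fst heq)
      have hinw : ∀ a ∈ τ.arcs, a.2 = w → a = (u, w) :=
        fun a ha h2 => head_unique (le_of_eq hwin) ha h2 huw_arc rfl
      have houtw : ∀ a ∈ τ.arcs, a.1 = w → a = (w, v) :=
        fun a ha h1 => tail_unique (le_of_eq hwout) ha h1 hwv_arc rfl
      set A := insert (u, v) ((τ.arcs.erase (u, w)).erase (w, v)) with hA
      have hAmem : ∀ a, a ∈ A ↔ a = (u, v) ∨ (a ∈ τ.arcs ∧ a ≠ (u, w) ∧ a ≠ (w, v)) := by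
        intro a
        simp only [hA, Finset.mem_insert, Finset.mem_erase]
        tauto
      let τ' : Dgraph V :=
        { verts := τ.verts.erase w
          arcs := A
          tail_mem := by
            intro a ha
            rcases (hAmem a).1 ha with rfl | ⟨hmem, hne1, hne2⟩
            · exact Finset.mem_erase.2 ⟨hunw, huverts⟩
            · refine Finset.mem_erase.2 ⟨?_, τ.tail_mem a hmem⟩
              intro h
              exact hne2 (houtw a hmem h)
          head_mem := by
            intro a ha
            rcases (hAmem a).1 ha with rfl | ⟨hmem, hne1, hne2⟩
            · exact Finset.mem_erase.2 ⟨hvnw, hvverts⟩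
            · refine Finset.mem_erase.2 ⟨?_, τ.head_mem a hmem⟩
              intro h
              exact hne1 (hinw a hmem h) }
      have harcs : τ.arcs = insert (u, w) (insert (w, v) (τ'.arcs.erase (u, v))) := by
        have hAe : τ'.arcs.erase (u, v) = (τ.arcs.erase (u, w)).erase (w, v) := by
          apply Finset.erase_insert
          simp only [Finset.mem_erase]
          intro h
          exact huvnotin h.2.2
        rw [hAe]
        ext a
        simp only [Finset.mem_insert, Finset.mem_erase]
        constructor
        · intro h
          by_cases h1 : a = (u, w)
          · exact Or.inl h1
          · by_cases h2 : a = (w, v)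
            · exact Or.inr (Or.inl h2)
            · exact Or.inr (Or.inr ⟨h2, h1, h⟩)
        · rintro (rfl | rfl | ⟨_, _, h⟩)
          · exact huw_arc
          · exact hwv_arc
          · exact h
      have huvA : (u, v) ∈ τ'.arcs := Finset.mem_insert_self _ _
      have hwnot : w ∉ τ'.verts := Finset.notMem_erase _ _
      have hsd : SubdivideArc τ' τ :=
        ⟨u, v, w, huvA, hwnot, (Finset.insert_erase hwv).symm, harcs⟩
      obtain ⟨_, _, htrans⟩ := subdiv_degs huvA hwnot harcs
      have hacy' : τ'.Acyclic := by
        have hlift : ∀ a b : V, (a, b) ∈ τ'.arcs →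
            Relation.TransGen (fun x y => (x, y) ∈ τ.arcs) a b := by
          intro a b hab
          rcases (hAmem _).1 hab with h | ⟨hmem, _, _⟩
          · injection h with h1 h2
            subst h1; subst h2
            exact Relation.TransGen.head huw_arc (Relation.TransGen.single hwv_arc)
          · exact Relation.TransGen.single hmem
        intro z hz
        have key : ∀ a b : V, Relation.TransGen (fun x y => (x, y) ∈ τ'.arcs) a b →
            Relation.TransGen (fun x y => (x, y) ∈ τ.arcs) a b := by
          intro a b h
          induction h with
          | single h => exact hlift _ _ h
          | tail _ h2 ih2 => exact ih2.trans (hlift _ _ h2)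
        exact hacy z (key z z hz)
      have hcard' : τ'.verts.card ≤ n := by
        have h1 : τ'.verts.card = τ.verts.card - 1 := Finset.card_erase_of_mem hwv
        have h2 : 1 ≤ τ.verts.card := Finset.card_pos.2 ⟨w, hwv⟩
        omega
      have hmem' : ∀ x, x ∈ τ'.verts ↔ (x ∈ τ.verts ∧ x ≠ w) := by
        intro x
        simp only [τ', Finset.mem_erase]
        tauto
      have hrnw : r ≠ w := fun h => hwr h.symm
      obtain ⟨T, hT, hTsub⟩ := ih τ' hcard' hacy'
        (fun x hx => (hmem' x).2 ⟨hXsub hx, fun h => hwX (h ▸ hx)⟩)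
        ⟨r, (hmem' r).2 ⟨hr, hrnw⟩,
          by rw [← (htrans r hrnw).1]; exact hrin,
          by rw [← (htrans r hrnw).2]; exact hrout,
          fun x hx hxr => by
            rw [← (htrans x ((hmem' x).1 hx).2).1]
            exact hin1 x ((hmem' x).1 hx).1 hxr,
          fun x hx => by
            rw [← (htrans x ((hmem' x).1 hx).2).2]
            exact houtX x ((hmem' x).1 hx).1,
          fun x hx => by
            rw [← (htrans x ((hmem' x).1 hx).2).2]
            exact hout2 x ((hmem' x).1 hx).1⟩
      exact ⟨T, hT, IsSubdivisionOf.step hTsub hsd⟩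
    · push_neg at hw
      refine ⟨τ, ⟨⟨hacy, hX, hXsub, r, hr, hrin, hrout, ?_, ?_, ?_⟩, ?_⟩, IsSubdivisionOf.refl τ⟩
      · intro v hv h0
        by_contra hvr
        rw [hin1 v hv hvr] at h0
        omega
      · intro v hv
        constructor
        · intro hleaf
          exact (houtX v hv).1 hleaf.2.2
        · intro hvX
          have hout0 : τ.outdeg v = 0 := (houtX v hv).2 hvX
          have hvr : v ≠ r := by
            intro h
            subst h
            omega
          exact ⟨hv, hin1 v hv hvr, hout0⟩
      · intro v hv hvX hvr
        left
        refine ⟨hin1 v hv hvr, ?_⟩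
        have h0 : τ.outdeg v ≠ 0 := fun h => hvX ((houtX v hv).1 h)
        have h1 : τ.outdeg v ≠ 1 := hw v hv hvr hvX (hin1 v hv hvr)
        have h2 := hout2 v hv
        omega
      · intro v hv
        by_cases hvr : v = r
        · subst hvr; omega
        · rw [hin1 v hv hvr]; omega

end Dgraph

namespace Dgraph
variable {V : Type*} [DecidableEq V]

lemma rbpn_deg_le_two {N : Dgraph V} {X : Finset V} (hN : IsRBPN N X) (v : V) :
    N.indeg v ≤ 2 ∧ N.outdeg v ≤ 2 := by
  by_cases hv : v ∈ N.verts
  · obtain ⟨_, _, _, ρ, hρv, hρin, hρout, huniq, hleaf, hother⟩ := hN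
    by_cases hvρ : v = ρ
    · subst hvρ
      rcases hρout with h | h <;> omega
    · by_cases hvX : v ∈ X
      · obtain ⟨_, h1, h2⟩ := (hleaf v hv).2 hvX
        omega
      · rcases hother v hv hvX hvρ with ⟨h1, h2⟩ | ⟨h1, h2⟩ <;> omega
  · rw [indeg_eq_zero_of_not_mem hv, outdeg_eq_zero_of_not_mem hv]
    omega

lemma zig_singleton {N : Dgraph V} {a : V × V} (ha : a ∈ N.arcs) : IsZigzag N {a} :=
  ⟨Finset.singleton_subset_iff.2 ha, [a], by simp, by simp, by simp, List.isChain_singleton a⟩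

lemma exists_max_zigzag {N : Dgraph V} {a : V × V} (ha : a ∈ N.arcs) :
    ∃ Z, IsMaxZigzag N Z ∧ a ∈ Z := by
  suffices h : ∀ n (Z : Finset (V × V)), IsZigzag N Z → N.arcs.card ≤ Z.card + n →
      ∃ Zm, IsMaxZigzag N Zm ∧ Z ⊆ Zm by
    obtain ⟨Zm, h1, h2⟩ := h N.arcs.card {a} (zig_singleton ha)
      (by rw [Finset.card_singleton]; omega)
    exact ⟨Zm, h1, h2 (Finset.mem_singleton_self a)⟩
  intro n
  induction n with
  | zero =>
    intro Z hZ hcard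
    have heq : Z = N.arcs := Finset.eq_of_subset_of_card_le hZ.1 (by omega)
    refine ⟨Z, ⟨hZ, ?_⟩, subset_rfl⟩
    intro Z' hZ' hsub'
    exact subset_antisymm (heq ▸ hZ'.1) hsub'
  | succ n ih =>
    intro Z hZ hcard
    by_cases hmax : IsMaxZigzag N Z
    · exact ⟨Z, hmax, subset_rfl⟩
    · rw [IsMaxZigzag] at hmax
      push_neg at hmax
      obtain ⟨Z', hZ', hsub, hne⟩ := hmax hZ
      have hlt : Z.card < Z'.card :=
        Finset.card_lt_card (Finset.ssubset_iff_subset_ne.2 ⟨hsub, fun h => hne h.symm⟩)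
      obtain ⟨Zm, hm, hsub2⟩ := ih Z' hZ' (by omega)
      exact ⟨Zm, hm, hsub.trans hsub2⟩

/-- Two arcs of `N` sharing a head or a tail lie in the same maximal zig-zag trail. -/
lemma sibling_mem {N : Dgraph V} (hdeg : ∀ v, N.indeg v ≤ 2 ∧ N.outdeg v ≤ 2)
    {b c : V × V} (hb : b ∈ N.arcs) (hc : c ∈ N.arcs) (hbc : b ≠ c)
    (hR : b.2 = c.2 ∨ b.1 = c.1) {Z : Finset (V × V)} (hZ : IsMaxZigzag N Z) (hbZ : b ∈ Z) :
    c ∈ Z := by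
  by_contra hcZ
  obtain ⟨⟨hZsub, l, hl0, hlnd, hlF, hlch⟩, hmax⟩ := hZ
  have hsym : ∀ x y : V × V, (x.2 = y.2 ∨ x.1 = y.1) → (y.2 = x.2 ∨ y.1 = x.1) := by
    intro x y h
    rcases h with h | h
    · exact Or.inl h.symm
    · exact Or.inr h.symm
  have hbl : b ∈ l := by rw [← List.mem_toFinset, hlF]; exact hbZ
  have hcl : c ∉ l := fun h => hcZ (hlF ▸ List.mem_toFinset.2 h)
  have hmemN : ∀ x ∈ l, x ∈ N.arcs := fun x hx => hZsub (hlF ▸ List.mem_toFinset.2 hx)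
  have hnec : ∀ x ∈ l, x ≠ c := fun x hx h => hcl (h ▸ hx)
  have huniq : ∀ x ∈ l, x ≠ b → (b.2 = x.2 ∨ b.1 = x.1) →
      ∀ y ∈ l, y ≠ b → (b.2 = y.2 ∨ b.1 = y.1) → x = y := by
    intro x hx hxb hRx y hy hyb hRy
    rcases hR with hRh | hRt
    · have hx1 : x.1 = b.1 := by
        rcases hRx with h | h
        · exact absurd (two_not_three (hdeg b.2).1 hb rfl (hmemN x hx) h.symm hc hRh.symm
            (Ne.symm hxb) hbc) (hnec x hx)
        · exact h.symm
      have hy1 : y.1 = b.1 := by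
        rcases hRy with h | h
        · exact absurd (two_not_three (hdeg b.2).1 hb rfl (hmemN y hy) h.symm hc hRh.symm
            (Ne.symm hyb) hbc) (hnec y hy)
        · exact h.symm
      exact two_not_three' (hdeg b.1).2 hb rfl (hmemN x hx) hx1 (hmemN y hy) hy1
        (Ne.symm hxb) (Ne.symm hyb)
    · have hx2 : x.2 = b.2 := by
        rcases hRx with h | h
        · exact h.symm
        · exact absurd (two_not_three' (hdeg b.1).2 hb rfl (hmemN x hx) h.symm hc hRt.symm
            (Ne.symm hxb) hbc) (hnec x hx)
      have hy2 : y.2 = b.2 := by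
        rcases hRy with h | h
        · exact h.symm
        · exact absurd (two_not_three' (hdeg b.1).2 hb rfl (hmemN y hy) h.symm hc hRt.symm
            (Ne.symm hyb) hbc) (hnec y hy)
      exact two_not_three (hdeg b.2).1 hb rfl (hmemN x hx) hx2 (hmemN y hy) hy2
        (Ne.symm hxb) (Ne.symm hyb)
  obtain ⟨l', hl'0, hl'nd, hl'F, hl'ch⟩ :=
    chain_extend hsym hlnd hlch hbl hcl hR huniq
  have hzig : IsZigzag N (insert c Z) :=
    ⟨Finset.insert_subset hc hZsub, l', hl'0, hl'nd, by rw [hl'F, hlF], hl'ch⟩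
  have heq : insert c Z = Z := hmax _ hzig (Finset.subset_insert _ _)
  exact hcZ (heq ▸ Finset.mem_insert_self c Z)

end Dgraph

namespace Dgraph
variable {V : Type*} [DecidableEq V]

theorem stmt4_aux (N : Dgraph V) (X : Finset V) (hN : Dgraph.IsRBPN N X)
    (G : Dgraph V) (hG : Dgraph.IsSubgraph G N) :
    Dgraph.IsSupportTree N X G ↔
      ∀ Z : Finset (V × V), Dgraph.IsMaxZigzag N Z →
        Dgraph.IsAdmissible (Dgraph.ofArcs Z) (G.arcs ∩ Z) := by
  classical
  have hdeg : ∀ v, N.indeg v ≤ 2 ∧ N.outdeg v ≤ 2 := fun v => rbpn_deg_le_two hN v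
  obtain ⟨hNacy, hXne, hXsub, ρ, hρv, hρin, hρout, hρuniq, hleaf, hother⟩ := hN
  -- Support tree implies the local conditions L1, L2, L3
  have key1 : IsSupportTree N X G →
      (∀ a ∈ N.arcs, (N.indeg a.2 = 1 ∨ N.outdeg a.1 = 1) → a ∈ G.arcs) ∧
      (∀ v : V, N.indeg v = 2 → G.indeg v = 1) ∧
      (∀ v : V, N.outdeg v = 2 → 1 ≤ G.outdeg v) := by
    rintro ⟨hverts, harcs, T, hT, hsub⟩
    obtain ⟨r, hr, hrin, hrout, hin1, hout0⟩ := support_degs hT hsub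
    have hrρ : r = ρ := by
      by_contra h
      have h1 : G.indeg ρ = 1 := hin1 ρ (by rw [hverts]; exact hρv) (fun he => h he.symm)
      have h2 : G.indeg ρ ≤ N.indeg ρ := indeg_mono harcs ρ
      omega
    subst hrρ
    have hGoutpos : ∀ v ∈ N.verts, v ∉ X → 1 ≤ G.outdeg v := by
      intro v hv hvX
      rcases Nat.eq_zero_or_pos (G.outdeg v) with h0 | h0
      · exact absurd (hout0 v (by rw [hverts]; exact hv) h0) hvX
      · exact h0
    refine ⟨?_, ?_, ?_⟩
    · intro a ha hcase
      rcases hcase with hin | hout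
      · have hv2 : a.2 ∈ N.verts := N.head_mem a ha
        have hne : a.2 ≠ r := fun h => by rw [h, hρin] at hin; omega
        have hG1 : G.indeg a.2 = 1 := hin1 a.2 (by rw [hverts]; exact hv2) hne
        obtain ⟨b, hbG, hb2⟩ := exists_arc_head hG1.ge
        have hba : b = a := head_unique hin.le (harcs hbG) hb2 ha rfl
        exact hba ▸ hbG
      · have hv1 : a.1 ∈ N.verts := N.tail_mem a ha
        have hnX : a.1 ∉ X := by
          intro h
          obtain ⟨_, _, h2⟩ := (hleaf a.1 hv1).2 h
          omega
        obtain ⟨b, hbG, hb1⟩ := exists_arc_tail (hGoutpos a.1 hv1 hnX)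
        have hba : b = a := tail_unique hout.le (harcs hbG) hb1 ha rfl
        exact hba ▸ hbG
    · intro v h2
      obtain ⟨a, ha, ha2⟩ := exists_arc_head (G := N) (v := v) (by omega)
      have hv : v ∈ N.verts := ha2 ▸ N.head_mem a ha
      have hne : v ≠ r := fun h => by rw [h, hρin] at h2; omega
      exact hin1 v (by rw [hverts]; exact hv) hne
    · intro v h2
      obtain ⟨a, ha, ha1⟩ := exists_arc_tail (G := N) (v := v) (by omega)
      have hv : v ∈ N.verts := ha1 ▸ N.tail_mem a ha
      have hnX : v ∉ X := by
        intro h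
        obtain ⟨_, _, hX2⟩ := (hleaf v hv).2 h
        omega
      exact hGoutpos v hv hnX
  -- The local conditions imply that G is a support tree
  have key2 :
      (∀ a ∈ N.arcs, (N.indeg a.2 = 1 ∨ N.outdeg a.1 = 1) → a ∈ G.arcs) ∧
      (∀ v : V, N.indeg v = 2 → G.indeg v = 1) ∧
      (∀ v : V, N.outdeg v = 2 → 1 ≤ G.outdeg v) → IsSupportTree N X G := by
    rintro ⟨L1, L2, L3⟩
    have hGindeg1 : ∀ v ∈ N.verts, v ≠ ρ → G.indeg v = 1 := by
      intro v hv hvρ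
      have hnz : N.indeg v ≠ 0 := fun h0 => hvρ (hρuniq v hv h0)
      have hle := (hdeg v).1
      rcases (by omega : N.indeg v = 1 ∨ N.indeg v = 2) with h1 | h2
      · obtain ⟨a, ha, ha2⟩ := exists_arc_head (G := N) (v := v) h1.ge
        have haG : a ∈ G.arcs := L1 a ha (Or.inl (by rw [ha2]; exact h1))
        have hpos : 1 ≤ G.indeg v := by
          rw [← ha2]
          exact indeg_pos_of_arc haG
        have hle1 : G.indeg v ≤ N.indeg v := indeg_mono hG.2 v
        omega
      · exact L2 v h2
    have hGoutpos : ∀ v ∈ N.verts, v ∉ X → 1 ≤ G.outdeg v := by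
      intro v hv hvX
      have hout0 : N.outdeg v ≠ 0 := by
        intro h0
        by_cases hvρ : v = ρ
        · subst hvρ
          rcases hρout with h | h <;> omega
        · rcases hother v hv hvX hvρ with ⟨_, h⟩ | ⟨_, h⟩ <;> omega
      have hle := (hdeg v).2
      rcases (by omega : N.outdeg v = 1 ∨ N.outdeg v = 2) with h1 | h2
      · obtain ⟨a, ha, ha1⟩ := exists_arc_tail (G := N) (v := v) h1.ge
        have haG : a ∈ G.arcs := L1 a ha (Or.inr (by rw [ha1]; exact h1))
        rw [← ha1]
        exact outdeg_pos_of_arc haG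
      · exact L3 v h2
    have hρnX : ρ ∉ X := by
      intro h
      obtain ⟨_, _, h2⟩ := (hleaf ρ hρv).2 h
      omega
    have hGverts : G.verts = N.verts := by
      apply subset_antisymm hG.1
      intro v hv
      by_cases hvρ : v = ρ
      · subst hvρ
        obtain ⟨a, ha, ha1⟩ := exists_arc_tail (hGoutpos v hv hρnX)
        exact ha1 ▸ G.tail_mem a ha
      · obtain ⟨a, ha, ha2⟩ := exists_arc_head (hGindeg1 v hv hvρ).ge
        exact ha2 ▸ G.head_mem a ha
    have hGinρ : G.indeg ρ = 0 := by
      have := indeg_mono hG.2 ρ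
      omega
    have hGoutρ : G.outdeg ρ = 1 ∨ G.outdeg ρ = 2 := by
      have h1 : 1 ≤ G.outdeg ρ := hGoutpos ρ hρv hρnX
      have h2 : G.outdeg ρ ≤ N.outdeg ρ := outdeg_mono hG.2 ρ
      rcases hρout with h | h <;> omega
    have hGoutX : ∀ v ∈ G.verts, (G.outdeg v = 0 ↔ v ∈ X) := by
      intro v hv
      have hvN : v ∈ N.verts := by rw [← hGverts]; exact hv
      constructor
      · intro h0
        by_contra hvX
        have := hGoutpos v hvN hvX
        omega
      · intro hvX
        obtain ⟨_, _, h2⟩ := (hleaf v hvN).2 hvX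
        have := outdeg_mono hG.2 v
        omega
    obtain ⟨T, hT, hsubT⟩ := unsubdivide hXne G.verts.card G le_rfl
      (acyclic_of_subset hG.2 hNacy)
      (by rw [hGverts]; exact hXsub)
      ⟨ρ, by rw [hGverts]; exact hρv, hGinρ, hGoutρ,
        fun v hv hvρ => hGindeg1 v (by rw [← hGverts]; exact hv) hvρ,
        hGoutX,
        fun v _ => le_trans (outdeg_mono hG.2 v) (hdeg v).2⟩
    exact ⟨hGverts, hG.2, T, hT, hsubT⟩
  -- The local conditions imply admissibility on every maximal zig-zag trail
  have key3 :
      (∀ a ∈ N.arcs, (N.indeg a.2 = 1 ∨ N.outdeg a.1 = 1) → a ∈ G.arcs) ∧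
      (∀ v : V, N.indeg v = 2 → G.indeg v = 1) ∧
      (∀ v : V, N.outdeg v = 2 → 1 ≤ G.outdeg v) →
      ∀ Z : Finset (V × V), IsMaxZigzag N Z → IsAdmissible (ofArcs Z) (G.arcs ∩ Z) := by
    rintro ⟨L1, L2, L3⟩ Z hZmax
    have hZsub : Z ⊆ N.arcs := hZmax.1.1
    refine ⟨Finset.inter_subset_right, ?_, ?_, ?_⟩
    · intro a haZ hcase
      have haN : a ∈ N.arcs := hZsub haZ
      have haG : a ∈ G.arcs := by
        rcases hcase with h1 | h1
        · have h1' : (Z.filter fun x => x.2 = a.2).card = 1 := h1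
          have hN1 : N.indeg a.2 = 1 := by
            have hge : 1 ≤ N.indeg a.2 := indeg_pos_of_arc haN
            have hle := (hdeg a.2).1
            by_contra hne
            have h2' : (N.arcs.filter fun x => x.2 = a.2).card = 2 := by
              show N.indeg a.2 = 2
              omega
            obtain ⟨b, hbf, hba⟩ := Finset.exists_mem_ne
              (s := N.arcs.filter fun x => x.2 = a.2) (by omega) a
            obtain ⟨hbN, hb2⟩ := Finset.mem_filter.1 hbf
            have hbZ : b ∈ Z := sibling_mem hdeg haN hbN hba.symm (Or.inl hb2.symm) hZmax haZ
            have hgt : 1 < (Z.filter fun x => x.2 = a.2).card :=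
              Finset.one_lt_card.2 ⟨a, Finset.mem_filter.2 ⟨haZ, rfl⟩,
                b, Finset.mem_filter.2 ⟨hbZ, hb2⟩, hba.symm⟩
            omega
          exact L1 a haN (Or.inl hN1)
        · have h1' : (Z.filter fun x => x.1 = a.1).card = 1 := h1
          have hN1 : N.outdeg a.1 = 1 := by
            have hge : 1 ≤ N.outdeg a.1 := outdeg_pos_of_arc haN
            have hle := (hdeg a.1).2
            by_contra hne
            have h2' : (N.arcs.filter fun x => x.1 = a.1).card = 2 := by
              show N.outdeg a.1 = 2
              omega
            obtain ⟨b, hbf, hba⟩ := Finset.exists_mem_ne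
              (s := N.arcs.filter fun x => x.1 = a.1) (by omega) a
            obtain ⟨hbN, hb1⟩ := Finset.mem_filter.1 hbf
            have hbZ : b ∈ Z := sibling_mem hdeg haN hbN hba.symm (Or.inr hb1.symm) hZmax haZ
            have hgt : 1 < (Z.filter fun x => x.1 = a.1).card :=
              Finset.one_lt_card.2 ⟨a, Finset.mem_filter.2 ⟨haZ, rfl⟩,
                b, Finset.mem_filter.2 ⟨hbZ, hb1⟩, hba.symm⟩
            omega
          exact L1 a haN (Or.inr hN1)
      exact Finset.mem_inter.2 ⟨haG, haZ⟩
    · intro a1 h1 a2 h2 hne hhead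
      have h1N : a1 ∈ N.arcs := hZsub h1
      have h2N : a2 ∈ N.arcs := hZsub h2
      have hN2 : N.indeg a1.2 = 2 := by
        have hle' : (N.arcs.filter fun x => x.2 = a1.2).card ≤ 2 := (hdeg a1.2).1
        have hgt : 1 < (N.arcs.filter fun x => x.2 = a1.2).card :=
          Finset.one_lt_card.2 ⟨a1, Finset.mem_filter.2 ⟨h1N, rfl⟩,
            a2, Finset.mem_filter.2 ⟨h2N, hhead.symm⟩, hne⟩
        show (N.arcs.filter fun x => x.2 = a1.2).card = 2
        omega
      have hG1 : G.indeg a1.2 = 1 := L2 _ hN2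
      obtain ⟨b, hbG, hb2⟩ := exists_arc_head hG1.ge
      have hb12 : b = a1 ∨ b = a2 := by
        by_contra hcontra
        push_neg at hcontra
        exact hne (two_not_three (hdeg a1.2).1 (hG.2 hbG) hb2 h1N rfl h2N hhead.symm
          hcontra.1 hcontra.2)
      rcases hb12 with rfl | rfl
      · left
        refine ⟨Finset.mem_inter.2 ⟨hbG, h1⟩, fun hmem => ?_⟩
        have ha2G : a2 ∈ G.arcs := (Finset.mem_inter.1 hmem).1
        exact hne (head_unique hG1.le hbG hb2 ha2G hhead.symm)
      · right
        refine ⟨fun hmem => ?_, Finset.mem_inter.2 ⟨hbG, h2⟩⟩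
        have ha1G : a1 ∈ G.arcs := (Finset.mem_inter.1 hmem).1
        exact hne (head_unique hG1.le ha1G rfl hbG hb2)
    · intro a1 h1 a2 h2 hne htail
      have h1N : a1 ∈ N.arcs := hZsub h1
      have h2N : a2 ∈ N.arcs := hZsub h2
      have hN2 : N.outdeg a1.1 = 2 := by
        have hle' : (N.arcs.filter fun x => x.1 = a1.1).card ≤ 2 := (hdeg a1.1).2
        have hgt : 1 < (N.arcs.filter fun x => x.1 = a1.1).card :=
          Finset.one_lt_card.2 ⟨a1, Finset.mem_filter.2 ⟨h1N, rfl⟩,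
            a2, Finset.mem_filter.2 ⟨h2N, htail.symm⟩, hne⟩
        show (N.arcs.filter fun x => x.1 = a1.1).card = 2
        omega
      obtain ⟨c, hcG, hc1⟩ := exists_arc_tail (L3 _ hN2)
      have hc12 : c = a1 ∨ c = a2 := by
        by_contra hcontra
        push_neg at hcontra
        exact hne (two_not_three' (hdeg a1.1).2 (hG.2 hcG) hc1 h1N rfl h2N htail.symm
          hcontra.1 hcontra.2)
      rcases hc12 with rfl | rfl
      · exact Or.inl (Finset.mem_inter.2 ⟨hcG, h1⟩)
      · exact Or.inr (Finset.mem_inter.2 ⟨hcG, h2⟩)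
  -- Admissibility on every maximal zig-zag trail implies the local conditions
  have key4 : (∀ Z : Finset (V × V), IsMaxZigzag N Z →
        IsAdmissible (ofArcs Z) (G.arcs ∩ Z)) →
      (∀ a ∈ N.arcs, (N.indeg a.2 = 1 ∨ N.outdeg a.1 = 1) → a ∈ G.arcs) ∧
      (∀ v : V, N.indeg v = 2 → G.indeg v = 1) ∧
      (∀ v : V, N.outdeg v = 2 → 1 ≤ G.outdeg v) := by
    intro hrhs
    refine ⟨?_, ?_, ?_⟩
    · intro a ha hcase
      obtain ⟨Z, hZmax, haZ⟩ := exists_max_zigzag ha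
      have adm := hrhs Z hZmax
      have hZsub : Z ⊆ N.arcs := hZmax.1.1
      rcases hcase with hin | hout
      · have hzin : (ofArcs Z).indeg a.2 = 1 := by
          show (Z.filter fun x => x.2 = a.2).card = 1
          have hle : (Z.filter fun x => x.2 = a.2).card ≤
              (N.arcs.filter fun x => x.2 = a.2).card :=
            Finset.card_le_card (Finset.filter_subset_filter _ hZsub)
          have hin' : (N.arcs.filter fun x => x.2 = a.2).card = 1 := hin
          have hge : 1 ≤ (Z.filter fun x => x.2 = a.2).card :=
            Finset.card_pos.2 ⟨a, Finset.mem_filter.2 ⟨haZ, rfl⟩⟩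
          omega
        exact (Finset.mem_inter.1 (adm.2.1 a haZ (Or.inl hzin))).1
      · have hzout : (ofArcs Z).outdeg a.1 = 1 := by
          show (Z.filter fun x => x.1 = a.1).card = 1
          have hle : (Z.filter fun x => x.1 = a.1).card ≤
              (N.arcs.filter fun x => x.1 = a.1).card :=
            Finset.card_le_card (Finset.filter_subset_filter _ hZsub)
          have hout' : (N.arcs.filter fun x => x.1 = a.1).card = 1 := hout
          have hge : 1 ≤ (Z.filter fun x => x.1 = a.1).card :=
            Finset.card_pos.2 ⟨a, Finset.mem_filter.2 ⟨haZ, rfl⟩⟩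
          omega
        exact (Finset.mem_inter.1 (adm.2.1 a haZ (Or.inr hzout))).1
    · intro v h2
      have h2' : (N.arcs.filter fun x => x.2 = v).card = 2 := h2
      obtain ⟨b, c, hbc, hfeq⟩ := Finset.card_eq_two.1 h2'
      have hbf : b ∈ N.arcs.filter (fun x => x.2 = v) := by
        rw [hfeq]; exact Finset.mem_insert_self _ _
      have hcf : c ∈ N.arcs.filter (fun x => x.2 = v) := by
        rw [hfeq]; exact Finset.mem_insert_of_mem (Finset.mem_singleton_self _)
      obtain ⟨hbN, hb2⟩ := Finset.mem_filter.1 hbf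
      obtain ⟨hcN, hc2⟩ := Finset.mem_filter.1 hcf
      obtain ⟨Z, hZmax, hbZ⟩ := exists_max_zigzag hbN
      have hcZ : c ∈ Z := sibling_mem hdeg hbN hcN hbc (Or.inl (hb2.trans hc2.symm)) hZmax hbZ
      have adm := hrhs Z hZmax
      have hdisj := adm.2.2.1 b hbZ c hcZ hbc (hb2.trans hc2.symm)
      have hsubf : G.arcs.filter (fun x => x.2 = v) ⊆ {b, c} := by
        intro x hx
        obtain ⟨hxG, hx2⟩ := Finset.mem_filter.1 hx
        rw [← hfeq]
        exact Finset.mem_filter.2 ⟨hG.2 hxG, hx2⟩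
      show (G.arcs.filter fun x => x.2 = v).card = 1
      rcases hdisj with ⟨hbin, hcout⟩ | ⟨hbout, hcin⟩
      · have hbG : b ∈ G.arcs := (Finset.mem_inter.1 hbin).1
        have hcG : c ∉ G.arcs := fun h => hcout (Finset.mem_inter.2 ⟨h, hcZ⟩)
        have hsingle : G.arcs.filter (fun x => x.2 = v) = {b} := by
          apply subset_antisymm
          · intro x hx
            have hx' := hsubf hx
            rw [Finset.mem_insert, Finset.mem_singleton] at hx'
            rcases hx' with rfl | rfl
            · exact Finset.mem_singleton_self _
            · exact absurd (Finset.mem_filter.1 hx).1 hcG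
          · intro x hx
            rw [Finset.mem_singleton] at hx
            subst hx
            exact Finset.mem_filter.2 ⟨hbG, hb2⟩
        rw [hsingle, Finset.card_singleton]
      · have hcG : c ∈ G.arcs := (Finset.mem_inter.1 hcin).1
        have hbG : b ∉ G.arcs := fun h => hbout (Finset.mem_inter.2 ⟨h, hbZ⟩)
        have hsingle : G.arcs.filter (fun x => x.2 = v) = {c} := by
          apply subset_antisymm
          · intro x hx
            have hx' := hsubf hx
            rw [Finset.mem_insert, Finset.mem_singleton] at hx'
            rcases hx' with rfl | rfl
            · exact absurd (Finset.mem_filter.1 hx).1 hbG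
            · exact Finset.mem_singleton_self _
          · intro x hx
            rw [Finset.mem_singleton] at hx
            subst hx
            exact Finset.mem_filter.2 ⟨hcG, hc2⟩
        rw [hsingle, Finset.card_singleton]
    · intro v h2
      have h2' : (N.arcs.filter fun x => x.1 = v).card = 2 := h2
      obtain ⟨b, c, hbc, hfeq⟩ := Finset.card_eq_two.1 h2'
      have hbf : b ∈ N.arcs.filter (fun x => x.1 = v) := by
        rw [hfeq]; exact Finset.mem_insert_self _ _
      have hcf : c ∈ N.arcs.filter (fun x => x.1 = v) := by
        rw [hfeq]; exact Finset.mem_insert_of_mem (Finset.mem_singleton_self _)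
      obtain ⟨hbN, hb1⟩ := Finset.mem_filter.1 hbf
      obtain ⟨hcN, hc1⟩ := Finset.mem_filter.1 hcf
      obtain ⟨Z, hZmax, hbZ⟩ := exists_max_zigzag hbN
      have hcZ : c ∈ Z := sibling_mem hdeg hbN hcN hbc (Or.inr (hb1.trans hc1.symm)) hZmax hbZ
      have adm := hrhs Z hZmax
      rcases adm.2.2.2 b hbZ c hcZ hbc (hb1.trans hc1.symm) with hbin | hcin
      · exact Finset.card_pos.2 ⟨b, Finset.mem_filter.2 ⟨(Finset.mem_inter.1 hbin).1, hb1⟩⟩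
      · exact Finset.card_pos.2 ⟨c, Finset.mem_filter.2 ⟨(Finset.mem_inter.1 hcin).1, hc1⟩⟩
  exact ⟨fun h => key3 (key1 h), fun h => key2 (key4 h)⟩

end Dgraph

/-- Let `N` be a tree-based rooted binary phylogenetic `X`-network.
A subgraph `G` of `N` is a support tree of `N` iff for every maximal zig-zag trail
`Z` of `N`, the set `A(G) ∩ A(Z)` is an admissible arc-set of (the arc-induced
subgraph) `Z`. -/
theorem stmt4 {V : Type*} [DecidableEq V] (N : Dgraph V) (X : Finset V)
    (hN : Dgraph.IsRBPN N X) (hTB : Dgraph.IsTreeBased N X)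
    (G : Dgraph V) (hG : Dgraph.IsSubgraph G N) :
    Dgraph.IsSupportTree N X G ↔
      ∀ Z : Finset (V × V), Dgraph.IsMaxZigzag N Z →
        Dgraph.IsAdmissible (Dgraph.ofArcs Z) (G.arcs ∩ Z) := by
  exact Dgraph.stmt4_aux N X hN G hG
end
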